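/- arXiv:1602.05084 — 8 statements merged into one kernel-verified Lean document; each statement's English description precedes it below -/
import Mathlib

section
/- Suppose λ > 0 is an eigenvalue of the integral operator A_R with continuous eigenfunction e. Then e is twice continuously differentiable on [0,1] and satisfies the differential equation λ e″(t) = −e(t) − g″(t)·∫₀¹ g(s) e(s) ds for all t ∈ [0,1], together with the boundary conditions e(0) = 0 and λ e′(1) = −g′(1)·∫₀¹ g(s) e(s) ds. -/
open Real Set intervalIntegral

/-- If `λ > 0` is an eigenvalue of the integral operator with kernel
`R(s,t) = min(s,t) - g(s)g(t)` with continuous eigenfunction `e`, then `e` is twice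
continuously differentiable on `[0,1]` and satisfies
`λ e'' (t) = -e(t) - g''(t) ∫₀¹ g(s) e(s) ds` with boundary conditions `e(0) = 0` and
`λ e'(1) = -g'(1) ∫₀¹ g(s) e(s) ds`. -/
theorem stmt1 (g g' g'' : ℝ → ℝ)
    (hg1 : ∀ t ∈ Set.Icc (0:ℝ) 1, HasDerivWithinAt g (g' t) (Set.Icc 0 1) t)
    (hg2 : ∀ t ∈ Set.Icc (0:ℝ) 1, HasDerivWithinAt g' (g'' t) (Set.Icc 0 1) t)
    (hg2c : ContinuousOn g'' (Set.Icc 0 1))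
    (hg0 : g 0 = 0)
    (hgnorm : ∫ u in (0:ℝ)..1, (g' u) ^ 2 = 1)
    (lam : ℝ) (hlam : 0 < lam) (e : ℝ → ℝ)
    (he_cont : ContinuousOn e (Set.Icc 0 1))
    (he_ne : ∃ t ∈ Set.Icc (0:ℝ) 1, e t ≠ 0)
    (heig : ∀ t ∈ Set.Icc (0:ℝ) 1,
      (∫ s in (0:ℝ)..1, (min t s - g t * g s) * e s) = lam * e t) :
    ∃ e' e'' : ℝ → ℝ,
      (∀ t ∈ Set.Icc (0:ℝ) 1, HasDerivWithinAt e (e' t) (Set.Icc 0 1) t) ∧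
      (∀ t ∈ Set.Icc (0:ℝ) 1, HasDerivWithinAt e' (e'' t) (Set.Icc 0 1) t) ∧
      ContinuousOn e'' (Set.Icc 0 1) ∧
      (∀ t ∈ Set.Icc (0:ℝ) 1,
        lam * e'' t = - e t - g'' t * ∫ s in (0:ℝ)..1, g s * e s) ∧
      e 0 = 0 ∧
      lam * e' 1 = - g' 1 * ∫ s in (0:ℝ)..1, g s * e s := by
  have hlam' : lam ≠ 0 := ne_of_gt hlam
  -- continuous clamp extension of e
  set eb : ℝ → ℝ := fun x => e (min 1 (max 0 x)) with heb_def
  have hclamp : ∀ x : ℝ, min 1 (max 0 x) ∈ Set.Icc (0:ℝ) 1 := by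
    intro x
    constructor
    · exact le_min zero_le_one (le_max_left 0 x)
    · exact min_le_left _ _
  have heb_cont : Continuous eb := by
    apply he_cont.comp_continuous
    · exact continuous_const.min (continuous_const.max continuous_id)
    · exact hclamp
  have heb_eq : ∀ x ∈ Set.Icc (0:ℝ) 1, eb x = e x := by
    intro x hx
    simp only [heb_def]
    rw [max_eq_right hx.1, min_eq_right hx.2]
  set c : ℝ := ∫ s in (0:ℝ)..1, g s * e s with hc_def
  set I : ℝ := ∫ s in (0:ℝ)..1, eb s with hI_def
  set F : ℝ → ℝ := fun t => ∫ s in (0:ℝ)..t, s * eb s with hF_def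
  set F2 : ℝ → ℝ := fun t => ∫ s in (0:ℝ)..t, eb s with hF2_def
  set E : ℝ → ℝ := fun t => (F t + t * (I - F2 t) - g t * c) / lam with hE_def
  have hg_cont : ContinuousOn g (Set.Icc 0 1) := fun x hx => (hg1 x hx).continuousWithinAt
  -- e = E on Icc 0 1
  have hEe : ∀ t ∈ Set.Icc (0:ℝ) 1, e t = E t := by
    intro t ht
    have hsub1 : Set.uIcc (0:ℝ) t ⊆ Set.Icc 0 1 := by
      rw [Set.uIcc_of_le ht.1]
      exact Set.Icc_subset_Icc le_rfl ht.2
    have hsub2 : Set.uIcc t (1:ℝ) ⊆ Set.Icc 0 1 := by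
      rw [Set.uIcc_of_le ht.2]
      exact Set.Icc_subset_Icc ht.1 le_rfl
    have hsub3 : Set.uIcc (0:ℝ) 1 ⊆ Set.Icc 0 1 := by
      rw [Set.uIcc_of_le zero_le_one]
    -- integrabilities
    have hint_mine : ∀ a b : ℝ, Set.uIcc a b ⊆ Set.Icc 0 1 →
        IntervalIntegrable (fun s => min t s * e s) MeasureTheory.volume a b := by
      intro a b hs
      apply ContinuousOn.intervalIntegrable
      exact ((continuous_const.min continuous_id).continuousOn).mul (he_cont.mono hs)
    have hint_ge : IntervalIntegrable (fun s => g t * (g s * e s)) MeasureTheory.volume 0 1 := by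
      apply ContinuousOn.intervalIntegrable
      exact continuousOn_const.mul ((hg_cont.mono hsub3).mul (he_cont.mono hsub3))
    -- split the eigen integral
    have h1 : (∫ s in (0:ℝ)..1, (min t s - g t * g s) * e s)
        = (∫ s in (0:ℝ)..1, min t s * e s) - g t * c := by
      have : ∀ s : ℝ, (min t s - g t * g s) * e s = min t s * e s - g t * (g s * e s) := by
        intro s; ring
      simp only [this]
      rw [intervalIntegral.integral_sub (hint_mine 0 1 hsub3) hint_ge,
        intervalIntegral.integral_const_mul]
    have h2 : (∫ s in (0:ℝ)..1, min t s * e s)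
        = (∫ s in (0:ℝ)..t, min t s * e s) + ∫ s in t..1, min t s * e s := by
      rw [intervalIntegral.integral_add_adjacent_intervals (hint_mine 0 t hsub1)
        (hint_mine t 1 hsub2)]
    have h3 : (∫ s in (0:ℝ)..t, min t s * e s) = F t := by
      apply intervalIntegral.integral_congr
      intro s hs
      rw [Set.uIcc_of_le ht.1] at hs
      show min t s * e s = s * eb s
      rw [min_eq_right hs.2, heb_eq s (hsub1 (by rw [Set.uIcc_of_le ht.1]; exact hs))]
    have h4 : (∫ s in t..1, min t s * e s) = t * (I - F2 t) := by
      have : (∫ s in t..1, min t s * e s) = ∫ s in t..1, t * eb s := by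
        apply intervalIntegral.integral_congr
        intro s hs
        rw [Set.uIcc_of_le ht.2] at hs
        show min t s * e s = t * eb s
        rw [min_eq_left hs.1, heb_eq s (hsub2 (by rw [Set.uIcc_of_le ht.2]; exact hs))]
      rw [this, intervalIntegral.integral_const_mul]
      congr 1
      have := intervalIntegral.integral_add_adjacent_intervals
        ((heb_cont.intervalIntegrable 0 t : IntervalIntegrable eb MeasureTheory.volume 0 t))
        ((heb_cont.intervalIntegrable t 1 : IntervalIntegrable eb MeasureTheory.volume t 1))
      simp only [hI_def, hF2_def]
      linarith [this]
    have := heig t ht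
    rw [h1, h2, h3, h4] at this
    simp only [hE_def]
    field_simp
    linarith [this]
  -- derivatives of the building blocks
  have hF_deriv : ∀ t : ℝ, HasDerivAt F (t * eb t) t := by
    intro t
    exact ((continuous_id.mul heb_cont).integral_hasStrictDerivAt 0 t).hasDerivAt
  have hF2_deriv : ∀ t : ℝ, HasDerivAt F2 (eb t) t := by
    intro t
    exact (heb_cont.integral_hasStrictDerivAt 0 t).hasDerivAt
  refine ⟨fun t => ((I - F2 t) - g' t * c) / lam,
    fun t => ((-(eb t)) - g'' t * c) / lam, ?_, ?_, ?_, ?_, ?_, ?_⟩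
  · -- e differentiable
    intro t ht
    have hE : HasDerivWithinAt E (((I - F2 t) - g' t * c) / lam) (Set.Icc 0 1) t := by
      have h1 := ((((hF_deriv t).hasDerivWithinAt).add
          (((hasDerivWithinAt_id t (Set.Icc (0:ℝ) 1)).mul
            ((hasDerivWithinAt_const t _ I).sub (hF2_deriv t).hasDerivWithinAt)))).sub
          (((hg1 t ht)).mul_const c)).div_const lam
      exact h1.congr_deriv (by simp only [Pi.sub_apply, id_eq]; ring)
    exact hE.congr (fun x hx => (hEe x hx)) (hEe t ht)
  · -- e' differentiable
    intro t ht
    have h1 : HasDerivWithinAt (fun t => (I - F2 t) - g' t * c)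
        ((-(eb t)) - g'' t * c) (Set.Icc 0 1) t := by
      have := ((hasDerivWithinAt_const t (Set.Icc (0:ℝ) 1) I).sub
        (hF2_deriv t).hasDerivWithinAt).sub ((hg2 t ht).mul_const c)
      exact this.congr_deriv (by ring)
    exact h1.div_const lam
  · -- continuity of e''
    apply ContinuousOn.div_const
    exact (heb_cont.continuousOn.neg).sub (hg2c.mul continuousOn_const)
  · -- ODE
    intro t ht
    show lam * ((-(eb t) - g'' t * c) / lam) = - e t - g'' t * c
    rw [heb_eq t ht]
    field_simp
  · -- e 0 = 0
    have := heig 0 ⟨le_rfl, zero_le_one⟩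
    have hz : (∫ s in (0:ℝ)..1, (min 0 s - g 0 * g s) * e s) = 0 := by
      rw [hg0]
      have : Set.EqOn (fun s => (min 0 s - 0 * g s) * e s) (fun _ => (0:ℝ))
          (Set.uIcc (0:ℝ) 1) := by
        intro s hs
        rw [Set.uIcc_of_le zero_le_one] at hs
        simp [min_eq_left hs.1]
      rw [intervalIntegral.integral_congr this]
      simp
    rw [hz] at this
    have := this.symm
    exact (mul_eq_zero.mp this).resolve_left hlam'
  · -- boundary at 1
    have h0 : F2 1 = I := rfl
    show lam * ((I - F2 1 - g' 1 * c) / lam) = - g' 1 * c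
    rw [h0]
    field_simp
    ring
end

section
/- Suppose λ ∈ ℝ and e : [0,1] → ℝ is a twice continuously differentiable function, not identically zero, satisfying λ e″(t) = −e(t) − g″(t)·∫₀¹ g(s) e(s) ds for all t ∈ [0,1], together with the boundary conditions e(0) = 0 and λ e′(1) = −g′(1)·∫₀¹ g(s) e(s) ds. Then ∫₀¹ R(t,s) e(s) ds = λ e(t) for all t ∈ [0,1], i.e., λ is an eigenvalue of the integral operator A_R with eigenfunction e. -/
open Real Set intervalIntegral
open MeasureTheory Topology Filter

lemma my_ftc_Ici {f : ℝ → ℝ} (hf : ContinuousOn f (Set.Icc 0 1)) {x : ℝ}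
    (hx : x ∈ Set.Ico (0:ℝ) 1) :
    HasDerivWithinAt (fun u => ∫ s in (0:ℝ)..u, f s) (f x) (Set.Ici x) x := by
  have hmem : Set.Icc (0:ℝ) 1 ∈ 𝓝[>] x := Icc_mem_nhdsGT_of_mem hx
  have hint : IntervalIntegrable f volume 0 x := by
    apply ContinuousOn.intervalIntegrable
    apply hf.mono
    rw [Set.uIcc_of_le hx.1]
    exact Set.Icc_subset_Icc le_rfl hx.2.le
  exact intervalIntegral.integral_hasDerivWithinAt_right hint
    ⟨Set.Icc 0 1, hmem, (hf.aestronglyMeasurable measurableSet_Icc)⟩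
    ((hf x (Set.Ico_subset_Icc_self hx)).mono_of_mem_nhdsWithin hmem)

/-- Converse direction: if `λ` and a twice continuously differentiable `e`, not identically
zero, satisfy `λ e''(t) = -e(t) - g''(t) ∫₀¹ g(s) e(s) ds` with `e(0) = 0` and
`λ e'(1) = -g'(1) ∫₀¹ g(s) e(s) ds`, then `λ` is an eigenvalue of the integral operator
with kernel `R(s,t) = min(s,t) - g(s)g(t)`, with eigenfunction `e`. -/
theorem stmt2 (g g' g'' : ℝ → ℝ)
    (hg1 : ∀ t ∈ Set.Icc (0:ℝ) 1, HasDerivWithinAt g (g' t) (Set.Icc 0 1) t)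
    (hg2 : ∀ t ∈ Set.Icc (0:ℝ) 1, HasDerivWithinAt g' (g'' t) (Set.Icc 0 1) t)
    (hg2c : ContinuousOn g'' (Set.Icc 0 1))
    (hg0 : g 0 = 0)
    (hgnorm : ∫ u in (0:ℝ)..1, (g' u) ^ 2 = 1)
    (lam : ℝ) (e e' e'' : ℝ → ℝ)
    (he1 : ∀ t ∈ Set.Icc (0:ℝ) 1, HasDerivWithinAt e (e' t) (Set.Icc 0 1) t)
    (he2 : ∀ t ∈ Set.Icc (0:ℝ) 1, HasDerivWithinAt e' (e'' t) (Set.Icc 0 1) t)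
    (he2c : ContinuousOn e'' (Set.Icc 0 1))
    (he_ne : ∃ t ∈ Set.Icc (0:ℝ) 1, e t ≠ 0)
    (hODE : ∀ t ∈ Set.Icc (0:ℝ) 1,
      lam * e'' t = - e t - g'' t * ∫ s in (0:ℝ)..1, g s * e s)
    (hBC0 : e 0 = 0)
    (hBC1 : lam * e' 1 = - g' 1 * ∫ s in (0:ℝ)..1, g s * e s) :
    ∀ t ∈ Set.Icc (0:ℝ) 1,
      (∫ s in (0:ℝ)..1, (min t s - g t * g s) * e s) = lam * e t := by
  set c : ℝ := ∫ s in (0:ℝ)..1, g s * e s with hc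
  have h01 : Set.uIcc (0:ℝ) 1 = Set.Icc 0 1 := Set.uIcc_of_le (by norm_num)
  -- continuity
  have hec : ContinuousOn e (Set.Icc 0 1) := fun t ht => (he1 t ht).continuousWithinAt
  have he'c : ContinuousOn e' (Set.Icc 0 1) := fun t ht => (he2 t ht).continuousWithinAt
  have hgc : ContinuousOn g (Set.Icc 0 1) := fun t ht => (hg1 t ht).continuousWithinAt
  have hg'c : ContinuousOn g' (Set.Icc 0 1) := fun t ht => (hg2 t ht).continuousWithinAt
  have hsec : ContinuousOn (fun s => s * e s) (Set.Icc 0 1) :=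
    continuousOn_id.mul hec
  -- integrability
  have heInt : IntervalIntegrable e volume 0 1 :=
    (h01 ▸ hec).intervalIntegrable
  have hseInt : IntervalIntegrable (fun s => s * e s) volume 0 1 :=
    (h01 ▸ hsec).intervalIntegrable
  -- primitives
  set E : ℝ → ℝ := fun u => ∫ s in (0:ℝ)..u, e s with hE
  set A : ℝ → ℝ := fun u => ∫ s in (0:ℝ)..u, s * e s with hA
  have hEc : ContinuousOn E (Set.Icc 0 1) := by
    have := continuousOn_primitive_interval (μ := volume) (f := e) (a := (0:ℝ)) (b := 1)
      (by rw [h01]; exact hec.integrableOn_compact isCompact_Icc)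
    rwa [h01] at this
  have hAc : ContinuousOn A (Set.Icc 0 1) := by
    have := continuousOn_primitive_interval (μ := volume) (f := fun s => s * e s)
      (a := (0:ℝ)) (b := 1) (by rw [h01]; exact hsec.integrableOn_compact isCompact_Icc)
    rwa [h01] at this
  -- the function p = φ'
  set p : ℝ → ℝ := fun t => (E 1 - E t) - g' t * c - lam * e' t with hp
  set φ : ℝ → ℝ := fun t => A t + t * (E 1 - E t) - g t * c - lam * e t with hφ
  have hpc : ContinuousOn p (Set.Icc 0 1) :=
    ((continuousOn_const.sub hEc).sub (hg'c.mul continuousOn_const)).sub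
      (continuousOn_const.mul he'c)
  have hφc : ContinuousOn φ (Set.Icc 0 1) :=
    ((hAc.add (continuousOn_id.mul (continuousOn_const.sub hEc))).sub
      (hgc.mul continuousOn_const)).sub (continuousOn_const.mul hec)
  -- p is constant, p 1 = 0, hence p ≡ 0
  have hpderiv : ∀ x ∈ Set.Ico (0:ℝ) 1, HasDerivWithinAt p 0 (Set.Ici x) x := by
    intro x hx
    have hmem : Set.Icc (0:ℝ) 1 ∈ 𝓝[≥] x := Icc_mem_nhdsGE_of_mem hx
    have hx' : x ∈ Set.Icc (0:ℝ) 1 := Set.Ico_subset_Icc_self hx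
    have hEd : HasDerivWithinAt E (e x) (Set.Ici x) x := my_ftc_Ici hec hx
    have hg'd : HasDerivWithinAt g' (g'' x) (Set.Ici x) x :=
      (hg2 x hx').mono_of_mem_nhdsWithin hmem
    have he'd : HasDerivWithinAt e' (e'' x) (Set.Ici x) x :=
      (he2 x hx').mono_of_mem_nhdsWithin hmem
    have : HasDerivWithinAt p ((0 - e x) - g'' x * c - lam * e'' x) (Set.Ici x) x := by
      exact (((hasDerivWithinAt_const x _ (E 1)).sub hEd).sub
        (hg'd.mul_const c)).sub (he'd.const_mul lam)
    have h0 : (0 - e x) - g'' x * c - lam * e'' x = 0 := by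
      have := hODE x hx'
      linarith
    rwa [h0] at this
  have hp_const : ∀ x ∈ Set.Icc (0:ℝ) 1, p x = p 0 :=
    constant_of_has_deriv_right_zero hpc hpderiv
  have hp1 : p 1 = 0 := by
    simp only [hp, sub_self, zero_sub]
    have := hBC1
    linarith
  have hp_zero : ∀ x ∈ Set.Icc (0:ℝ) 1, p x = 0 := by
    intro x hx
    rw [hp_const x hx, ← hp_const 1 (by norm_num), hp1]
  -- φ is constant with φ 0 = 0
  have hφderiv : ∀ x ∈ Set.Ico (0:ℝ) 1, HasDerivWithinAt φ 0 (Set.Ici x) x := by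
    intro x hx
    have hmem : Set.Icc (0:ℝ) 1 ∈ 𝓝[≥] x := Icc_mem_nhdsGE_of_mem hx
    have hx' : x ∈ Set.Icc (0:ℝ) 1 := Set.Ico_subset_Icc_self hx
    have hEd : HasDerivWithinAt E (e x) (Set.Ici x) x := my_ftc_Ici hec hx
    have hAd : HasDerivWithinAt A (x * e x) (Set.Ici x) x := my_ftc_Ici hsec hx
    have hgd : HasDerivWithinAt g (g' x) (Set.Ici x) x :=
      (hg1 x hx').mono_of_mem_nhdsWithin hmem
    have hed : HasDerivWithinAt e (e' x) (Set.Ici x) x :=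
      (he1 x hx').mono_of_mem_nhdsWithin hmem
    have : HasDerivWithinAt φ
        ((x * e x + (1 * (E 1 - E x) + x * (0 - e x))) - g' x * c - lam * e' x)
        (Set.Ici x) x :=
      ((hAd.add ((hasDerivWithinAt_id x _).mul
        ((hasDerivWithinAt_const x _ (E 1)).sub hEd))).sub (hgd.mul_const c)).sub
        (hed.const_mul lam)
    have h0 : (x * e x + (1 * (E 1 - E x) + x * (0 - e x))) - g' x * c - lam * e' x = p x := by
      simp only [hp]; ring
    rw [h0, hp_zero x hx'] at this
    exact this
  have hφ_const : ∀ x ∈ Set.Icc (0:ℝ) 1, φ x = φ 0 :=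
    constant_of_has_deriv_right_zero hφc hφderiv
  have hφ0 : φ 0 = 0 := by
    simp [hφ, hA, hE, hg0, hBC0]
  -- final computation
  intro t ht
  have htInt1 : IntervalIntegrable (fun s => min t s * e s) volume 0 t := by
    apply ContinuousOn.intervalIntegrable
    exact (((continuous_const.min continuous_id).continuousOn).mul (hec.mono (by
      rw [Set.uIcc_of_le ht.1]; exact Set.Icc_subset_Icc le_rfl ht.2)))
  have htInt2 : IntervalIntegrable (fun s => min t s * e s) volume t 1 := by
    apply ContinuousOn.intervalIntegrable
    exact (((continuous_const.min continuous_id).continuousOn).mul (hec.mono (by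
      rw [Set.uIcc_of_le ht.2]; exact Set.Icc_subset_Icc ht.1 le_rfl)))
  have heInt1 : IntervalIntegrable e volume 0 t :=
    heInt.mono_set (by rw [h01, Set.uIcc_of_le ht.1]; exact Set.Icc_subset_Icc le_rfl ht.2)
  have heInt2 : IntervalIntegrable e volume t 1 :=
    heInt.mono_set (by rw [h01, Set.uIcc_of_le ht.2]; exact Set.Icc_subset_Icc ht.1 le_rfl)
  have hgeInt : IntervalIntegrable (fun s => g t * (g s * e s)) volume 0 1 := by
    apply ContinuousOn.intervalIntegrable
    rw [h01]
    exact continuousOn_const.mul (hgc.mul hec)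
  have hminInt : IntervalIntegrable (fun s => min t s * e s) volume 0 1 := by
    apply ContinuousOn.intervalIntegrable
    rw [h01]
    exact ((continuous_const.min continuous_id).continuousOn).mul hec
  have key : (∫ s in (0:ℝ)..1, (min t s - g t * g s) * e s)
      = (∫ s in (0:ℝ)..1, min t s * e s) - g t * c := by
    rw [show (fun s => (min t s - g t * g s) * e s)
        = fun s => min t s * e s - g t * (g s * e s) by funext s; ring]
    rw [intervalIntegral.integral_sub hminInt hgeInt,
      intervalIntegral.integral_const_mul]
  have hsplit : (∫ s in (0:ℝ)..1, min t s * e s)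
      = (∫ s in (0:ℝ)..t, min t s * e s) + ∫ s in t..1, min t s * e s :=
    (intervalIntegral.integral_add_adjacent_intervals htInt1 htInt2).symm
  have h1 : (∫ s in (0:ℝ)..t, min t s * e s) = A t := by
    apply intervalIntegral.integral_congr
    intro s hs
    rw [Set.uIcc_of_le ht.1] at hs
    simp only [min_eq_right hs.2]
  have h2 : (∫ s in t..1, min t s * e s) = t * (E 1 - E t) := by
    have : (∫ s in t..1, min t s * e s) = ∫ s in t..1, t * e s := by
      apply intervalIntegral.integral_congr
      intro s hs
      rw [Set.uIcc_of_le ht.2] at hs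
      simp only [min_eq_left hs.1]
    rw [this, intervalIntegral.integral_const_mul]
    congr 1
    rw [hE]
    exact (intervalIntegral.integral_interval_sub_left heInt heInt1).symm
  have hφt : φ t = 0 := by rw [hφ_const t ht, hφ0]
  rw [key, hsplit, h1, h2]
  have : A t + t * (E 1 - E t) - g t * c - lam * e t = 0 := hφt
  linarith
end

section
/- If λ > 0 is an eigenvalue of the integral operator A_R (with some continuous eigenfunction), then λ satisfies the equation (λ^{3/2} + √λ·∫₀¹ g(t)² dt + 2 c_g(λ))·cos(1/√λ) + b_g(λ)²·sin(1/√λ) = 0. -/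
open Real Set intervalIntegral

/-- `a_g(λ) = ∫₀¹ g(t) cos(t/√λ) dt`. -/
noncomputable def aG (g : ℝ → ℝ) (lam : ℝ) : ℝ :=
  ∫ t in (0:ℝ)..1, g t * Real.cos (t / Real.sqrt lam)

/-- `b_g(λ) = ∫₀¹ g(t) sin(t/√λ) dt`. -/
noncomputable def bG (g : ℝ → ℝ) (lam : ℝ) : ℝ :=
  ∫ t in (0:ℝ)..1, g t * Real.sin (t / Real.sqrt lam)

/-- `c_g(λ) = ∫₀¹ (∫₀ᵗ g(u) g(t) sin(u/√λ) cos(t/√λ) du) dt`. -/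
noncomputable def cG (g : ℝ → ℝ) (lam : ℝ) : ℝ :=
  ∫ t in (0:ℝ)..1, ∫ u in (0:ℝ)..t,
    g u * g t * Real.sin (u / Real.sqrt lam) * Real.cos (t / Real.sqrt lam)

section helpersForStmt3
open Real Set intervalIntegral MeasureTheory

lemma myIntInt {f : ℝ → ℝ} (hf : ContinuousOn f (Icc 0 1)) {x y : ℝ}
    (hx : x ∈ Icc (0:ℝ) 1) (hy : y ∈ Icc (0:ℝ) 1) :
    IntervalIntegrable f volume x y :=
  (hf.mono (uIcc_subset_Icc hx hy)).intervalIntegrable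

lemma myPrim {f : ℝ → ℝ} (hf : ContinuousOn f (Icc 0 1)) {t : ℝ} (ht : t ∈ Icc (0:ℝ) 1) :
    HasDerivWithinAt (fun x => ∫ s in (0:ℝ)..x, f s) (f t) (Icc 0 1) t := by
  haveI : Fact (t ∈ Icc (0:ℝ) 1) := ⟨ht⟩
  exact intervalIntegral.integral_hasDerivWithinAt_right
    (myIntInt hf (left_mem_Icc.2 zero_le_one) ht)
    ⟨Icc 0 1, self_mem_nhdsWithin, hf.aestronglyMeasurable measurableSet_Icc⟩
    (hf t ht)

lemma myConst {f f' : ℝ → ℝ} (hder : ∀ t ∈ Icc (0:ℝ) 1, HasDerivWithinAt f (f' t) (Icc 0 1) t)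
    (hz : ∀ t ∈ Icc (0:ℝ) 1, f' t = 0) : ∀ t ∈ Icc (0:ℝ) 1, f t = f 0 := by
  apply constant_of_has_deriv_right_zero
  · exact fun t ht => (hder t ht).continuousWithinAt
  · intro x hx
    have h := (hder x ⟨hx.1, hx.2.le⟩).mono_of_mem_nhdsWithin (Icc_mem_nhdsGE_of_mem hx)
    rwa [hz x ⟨hx.1, hx.2.le⟩] at h

lemma eigId (g e : ℝ → ℝ) (lam : ℝ)
    (hgc : ContinuousOn g (Icc 0 1)) (hec : ContinuousOn e (Icc 0 1))
    (heq : ∀ t ∈ Set.Icc (0:ℝ) 1,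
      (∫ s in (0:ℝ)..1, (min t s - g t * g s) * e s) = lam * e t) :
    ∀ t ∈ Icc (0:ℝ) 1, lam * e t =
      (∫ s in (0:ℝ)..t, s * e s) + t * ((∫ s in (0:ℝ)..1, e s) - ∫ s in (0:ℝ)..t, e s)
        - g t * (∫ s in (0:ℝ)..1, g s * e s) := by
  intro t ht
  have h01 : (0:ℝ) ∈ Icc (0:ℝ) 1 := left_mem_Icc.2 zero_le_one
  have h11 : (1:ℝ) ∈ Icc (0:ℝ) 1 := right_mem_Icc.2 zero_le_one
  have hminc : ContinuousOn (fun s => min t s * e s) (Icc 0 1) :=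
    ((continuous_const.min continuous_id).continuousOn).mul hec
  have hgec : ContinuousOn (fun s => g t * (g s * e s)) (Icc 0 1) :=
    continuousOn_const.mul (hgc.mul hec)
  have hsub : (∫ s in (0:ℝ)..1, (min t s - g t * g s) * e s)
      = (∫ s in (0:ℝ)..1, min t s * e s) - ∫ s in (0:ℝ)..1, g t * (g s * e s) := by
    rw [← intervalIntegral.integral_sub (myIntInt hminc h01 h11) (myIntInt hgec h01 h11)]
    apply intervalIntegral.integral_congr
    intro s _; simp only; ring
  have hsplit : (∫ s in (0:ℝ)..1, min t s * e s)
      = (∫ s in (0:ℝ)..t, min t s * e s) + ∫ s in t..1, min t s * e s :=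
    (intervalIntegral.integral_add_adjacent_intervals
      (myIntInt hminc h01 ht) (myIntInt hminc ht h11)).symm
  have h1 : (∫ s in (0:ℝ)..t, min t s * e s) = ∫ s in (0:ℝ)..t, s * e s := by
    apply intervalIntegral.integral_congr
    intro s hs
    rw [uIcc_of_le ht.1] at hs
    simp only [min_eq_right hs.2]
  have h2 : (∫ s in t..1, min t s * e s)
      = t * ((∫ s in (0:ℝ)..1, e s) - ∫ s in (0:ℝ)..t, e s) := by
    have h2' : (∫ s in t..1, min t s * e s) = ∫ s in t..1, t * e s := by
      apply intervalIntegral.integral_congr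
      intro s hs
      rw [uIcc_of_le ht.2] at hs
      simp only [min_eq_left hs.1]
    rw [h2', intervalIntegral.integral_const_mul]
    congr 1
    have := intervalIntegral.integral_add_adjacent_intervals
      (myIntInt hec h01 ht) (myIntInt hec ht h11)
    linarith
  have h3 : (∫ s in (0:ℝ)..1, g t * (g s * e s)) = g t * ∫ s in (0:ℝ)..1, g s * e s :=
    intervalIntegral.integral_const_mul _ _
  have h := heq t ht
  rw [hsub, hsplit, h1, h2, h3] at h
  linarith

theorem stmt3_aux (g g' g'' : ℝ → ℝ)
    (hg1 : ∀ t ∈ Set.Icc (0:ℝ) 1, HasDerivWithinAt g (g' t) (Set.Icc 0 1) t)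
    (hg2 : ∀ t ∈ Set.Icc (0:ℝ) 1, HasDerivWithinAt g' (g'' t) (Set.Icc 0 1) t)
    (hg0 : g 0 = 0)
    (lam : ℝ) (hlam : 0 < lam)
    (heig : ∃ e : ℝ → ℝ, ContinuousOn e (Set.Icc 0 1) ∧
      (∃ t ∈ Set.Icc (0:ℝ) 1, e t ≠ 0) ∧
      ∀ t ∈ Set.Icc (0:ℝ) 1,
        (∫ s in (0:ℝ)..1, (min t s - g t * g s) * e s) = lam * e t) :
    (lam * Real.sqrt lam + Real.sqrt lam * (∫ t in (0:ℝ)..1, (g t) ^ 2)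
        + 2 * (∫ t in (0:ℝ)..1, ∫ u in (0:ℝ)..t,
            g u * g t * Real.sin (u / Real.sqrt lam) * Real.cos (t / Real.sqrt lam)))
        * Real.cos (1 / Real.sqrt lam)
      + (∫ t in (0:ℝ)..1, g t * Real.sin (t / Real.sqrt lam)) ^ 2
        * Real.sin (1 / Real.sqrt lam) = 0 := by
  obtain ⟨e, hec, ⟨t0, ht0, ht0ne⟩, heqe⟩ := heig
  have h01 : (0:ℝ) ∈ Icc (0:ℝ) 1 := left_mem_Icc.2 zero_le_one
  have h11 : (1:ℝ) ∈ Icc (0:ℝ) 1 := right_mem_Icc.2 zero_le_one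
  have hgc : ContinuousOn g (Icc 0 1) := fun t ht => (hg1 t ht).continuousWithinAt
  have hg'c : ContinuousOn g' (Icc 0 1) := fun t ht => (hg2 t ht).continuousWithinAt
  have hrtpos : 0 < Real.sqrt lam := Real.sqrt_pos.2 hlam
  have hrtne : Real.sqrt lam ≠ 0 := ne_of_gt hrtpos
  set rt : ℝ := Real.sqrt lam with hrtdef
  set w : ℝ := rt⁻¹ with hwdef
  have hwpos : 0 < w := inv_pos.2 hrtpos
  have hwne : w ≠ 0 := ne_of_gt hwpos
  have hrtw : rt * w = 1 := mul_inv_cancel₀ hrtne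
  have hinv : lam⁻¹ = w * w := by
    rw [hwdef, ← mul_inv]
    rw [hrtdef, Real.mul_self_sqrt hlam.le]
  -- trig functions
  set sn : ℝ → ℝ := fun t => Real.sin (t / rt) with hsndef
  set cs : ℝ → ℝ := fun t => Real.cos (t / rt) with hcsdef
  have hsnD : ∀ t : ℝ, HasDerivAt sn (w * cs t) t := by
    intro t
    have h1 : HasDerivAt (fun x : ℝ => x / rt) w t := by
      simpa using (hasDerivAt_id t).div_const rt
    have := (Real.hasDerivAt_sin (t / rt)).comp t h1
    exact this.congr_deriv (by ring)
  have hcsD : ∀ t : ℝ, HasDerivAt cs (-(w * sn t)) t := by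
    intro t
    have h1 : HasDerivAt (fun x : ℝ => x / rt) w t := by
      simpa using (hasDerivAt_id t).div_const rt
    have := (Real.hasDerivAt_cos (t / rt)).comp t h1
    exact this.congr_deriv (by ring)
  have hsnc : Continuous sn := Real.continuous_sin.comp (continuous_id.div_const rt)
  have hcsc : Continuous cs := Real.continuous_cos.comp (continuous_id.div_const rt)
  -- primitives
  set Sg : ℝ → ℝ := fun t => ∫ u in (0:ℝ)..t, g u * sn u with hSgdef
  set Cg : ℝ → ℝ := fun t => ∫ u in (0:ℝ)..t, g u * cs u with hCgdef
  have hSgD : ∀ t ∈ Icc (0:ℝ) 1, HasDerivWithinAt Sg (g t * sn t) (Icc 0 1) t :=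
    fun t ht => myPrim (hgc.mul hsnc.continuousOn) ht
  have hCgD : ∀ t ∈ Icc (0:ℝ) 1, HasDerivWithinAt Cg (g t * cs t) (Icc 0 1) t :=
    fun t ht => myPrim (hgc.mul hcsc.continuousOn) ht
  set I : ℝ → ℝ := fun t => ∫ s in (0:ℝ)..t, e s with hIdef
  have hID : ∀ t ∈ Icc (0:ℝ) 1, HasDerivWithinAt I (e t) (Icc 0 1) t :=
    fun t ht => myPrim hec ht
  set G : ℝ := ∫ s in (0:ℝ)..1, g s * e s with hGdef
  set K : ℝ := w * w * G with hKdef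
  have hKlam : K * lam = G := by
    rw [hKdef]
    field_simp [hinv.symm]
    rw [sq, ← hinv]; field_simp
  -- the basic identity
  have hid := eigId g e lam hgc hec heqe
  -- e 0 = 0
  have he0 : e 0 = 0 := by
    have h := hid 0 h01
    simp [hg0, intervalIntegral.integral_same] at h
    rcases h with h | h
    · exact absurd h hlam.ne'
    · exact h
  -- derivative of e
  set ed : ℝ → ℝ := fun t => lam⁻¹ * (I 1 - I t - G * g' t) with heddef
  have heD : ∀ t ∈ Icc (0:ℝ) 1, HasDerivWithinAt e (ed t) (Icc 0 1) t := by
    intro t ht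
    have hJ : HasDerivWithinAt (fun x => ∫ s in (0:ℝ)..x, s * e s) (t * e t) (Icc 0 1) t :=
      myPrim ((continuous_id.continuousOn).mul hec) ht
    have hF : HasDerivWithinAt
        (fun x => lam⁻¹ * ((∫ s in (0:ℝ)..x, s * e s) + x * (I 1 - I x) - g x * G))
        (ed t) (Icc 0 1) t := by
      have hprod : HasDerivWithinAt (fun x => x * (I 1 - I x))
          (1 * (I 1 - I t) + t * (0 - e t)) (Icc 0 1) t :=
        (hasDerivWithinAt_id t _).mul
          ((hasDerivWithinAt_const t _ (I 1)).sub (hID t ht))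
      have := ((hJ.add hprod).sub ((hg1 t ht).mul_const G)).const_mul lam⁻¹
      refine this.congr_deriv ?_
      symm
      rw [heddef]; ring
    apply hF.congr
    · intro y hy
      have h := hid y hy
      have : e y = lam⁻¹ * (lam * e y) := by field_simp
      rw [this, h]
    · have h := hid t ht
      have : e t = lam⁻¹ * (lam * e t) := by field_simp
      rw [this, h]
  -- second derivative of e : ed has derivative lam⁻¹ * (-e t - G * g'' t)
  have hedD : ∀ t ∈ Icc (0:ℝ) 1,
      HasDerivWithinAt ed (lam⁻¹ * (0 - e t - G * g'' t)) (Icc 0 1) t := by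
    intro t ht
    exact (((hasDerivWithinAt_const t _ (I 1)).sub (hID t ht)).sub
      ((hg2 t ht).const_mul G)).const_mul lam⁻¹

  -- the candidate solution
  set B : ℝ := (ed 0 + K * g' 0) * rt with hBdef
  set ph : ℝ → ℝ := fun t => e t + K * g t - B * sn t - w * K * (sn t * Cg t - cs t * Sg t)
    with hphdef
  set phd : ℝ → ℝ := fun t => ed t + K * g' t - B * (w * cs t)
      - w * K * (w * cs t * Cg t + w * sn t * Sg t) with hphddef
  have hphD : ∀ t ∈ Icc (0:ℝ) 1, HasDerivWithinAt ph (phd t) (Icc 0 1) t := by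
    intro t ht
    have hinner : HasDerivWithinAt (fun t => sn t * Cg t - cs t * Sg t)
        ((w * cs t) * Cg t + sn t * (g t * cs t)
          - ((-(w * sn t)) * Sg t + cs t * (g t * sn t))) (Icc 0 1) t :=
      (((hsnD t).hasDerivWithinAt.mul (hCgD t ht)).sub
        ((hcsD t).hasDerivWithinAt.mul (hSgD t ht)))
    have := (((heD t ht).add ((hg1 t ht).const_mul K)).sub
        ((hsnD t).hasDerivWithinAt.const_mul B)).sub (hinner.const_mul (w * K))
    refine this.congr_deriv ?_
    symm
    rw [hphddef]; ring
  have hphdD : ∀ t ∈ Icc (0:ℝ) 1, HasDerivWithinAt phd (-(w * w) * ph t) (Icc 0 1) t := by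
    intro t ht
    have hinner : HasDerivWithinAt (fun t => w * cs t * Cg t + w * sn t * Sg t)
        ((w * (-(w * sn t))) * Cg t + (w * cs t) * (g t * cs t)
          + ((w * (w * cs t)) * Sg t + (w * sn t) * (g t * sn t))) (Icc 0 1) t := by
      exact ((((hcsD t).hasDerivWithinAt.const_mul w).mul (hCgD t ht)).add
        (((hsnD t).hasDerivWithinAt.const_mul w).mul (hSgD t ht)))
    have hh := (((hedD t ht).add ((hg2 t ht).const_mul K)).sub
        (((hcsD t).hasDerivWithinAt.const_mul w).const_mul B)).sub
        (hinner.const_mul (w * K))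
    refine hh.congr_deriv ?_
    symm
    have pyth : sn t ^ 2 + cs t ^ 2 = 1 := by
      rw [hsndef, hcsdef]
      exact Real.sin_sq_add_cos_sq (t / rt)
    rw [hphdef]
    have hK' : w * w * G = K := hKdef.symm
    linear_combination (e t + G * g'' t) * hinv + g'' t * hK' + w * w * K * (g t) * pyth
  -- initial conditions
  have hSg0 : Sg 0 = 0 := intervalIntegral.integral_same
  have hCg0 : Cg 0 = 0 := intervalIntegral.integral_same
  have hsn0 : sn 0 = 0 := by rw [hsndef]; simp
  have hcs0 : cs 0 = 1 := by rw [hcsdef]; simp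
  have hph0 : ph 0 = 0 := by
    rw [hphdef]; simp only [he0, hg0, hsn0, hcs0, hSg0, hCg0]; ring
  have hphd0 : phd 0 = 0 := by
    rw [hphddef]
    simp only [hsn0, hcs0, hSg0, hCg0]
    rw [hBdef]
    linear_combination (-(ed 0 + K * g' 0)) * hrtw
  -- energy argument: ph = 0 on Icc
  have hphzero : ∀ t ∈ Icc (0:ℝ) 1, ph t = 0 := by
    have hHD : ∀ t ∈ Icc (0:ℝ) 1, HasDerivWithinAt (fun t => phd t ^ 2 + (w * ph t) ^ 2)
        (2 * phd t ^ 1 * (-(w * w) * ph t) + 2 * (w * ph t) ^ 1 * (w * phd t))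
        (Icc 0 1) t := by
      intro t ht
      exact ((hphdD t ht).pow 2).add (((hphD t ht).const_mul w).pow 2)
    have hz : ∀ t ∈ Icc (0:ℝ) 1,
        (2 * phd t ^ 1 * (-(w * w) * ph t) + 2 * (w * ph t) ^ 1 * (w * phd t)) = 0 := by
      intro t ht; ring
    have hconst := myConst hHD hz
    intro t ht
    have h := hconst t ht
    rw [hph0, hphd0] at h
    simp at h
    have h1 : (w * ph t) ^ 2 = 0 := 
      ((add_eq_zero_iff_of_nonneg (sq_nonneg _) (sq_nonneg _)).1 h).2
    have h2 : w * ph t = 0 := by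
      exact pow_eq_zero_iff (n := 2) (by norm_num) |>.1 h1
    rcases mul_eq_zero.1 h2 with h3 | h3
    · exact absurd h3 hwne
    · exact h3
  have hrep : ∀ t ∈ Icc (0:ℝ) 1,
      e t = -(K * g t) + B * sn t + w * K * (sn t * Cg t - cs t * Sg t) := by
    intro t ht
    have h := hphzero t ht
    rw [hphdef] at h
    simp only at h
    linarith

  -- continuity of primitives
  have hSgc : ContinuousOn Sg (Icc 0 1) := fun t ht => (hSgD t ht).continuousWithinAt
  have hCgc : ContinuousOn Cg (Icc 0 1) := fun t ht => (hCgD t ht).continuousWithinAt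
  -- boundary equation at t = 1
  have hu1 : UniqueDiffWithinAt ℝ (Icc (0:ℝ) 1) 1 := (uniqueDiffOn_Icc zero_lt_one) 1 h11
  have hinner1 : HasDerivWithinAt (fun t => sn t * Cg t - cs t * Sg t)
      ((w * cs 1) * Cg 1 + sn 1 * (g 1 * cs 1)
        - ((-(w * sn 1)) * Sg 1 + cs 1 * (g 1 * sn 1))) (Icc 0 1) 1 :=
    (((hsnD 1).hasDerivWithinAt.mul (hCgD 1 h11)).sub
      ((hcsD 1).hasDerivWithinAt.mul (hSgD 1 h11)))
  have hpsiD : HasDerivWithinAt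
      (fun t => -(K * g t) + B * sn t + w * K * (sn t * Cg t - cs t * Sg t))
      (-(K * g' 1) + B * (w * cs 1)
        + w * K * ((w * cs 1) * Cg 1 + sn 1 * (g 1 * cs 1)
          - ((-(w * sn 1)) * Sg 1 + cs 1 * (g 1 * sn 1)))) (Icc 0 1) 1 :=
    ((((hg1 1 h11).const_mul K).neg).add
      ((hsnD 1).hasDerivWithinAt.const_mul B)).add (hinner1.const_mul (w * K))
  have heb : HasDerivWithinAt e
      (-(K * g' 1) + B * (w * cs 1)
        + w * K * ((w * cs 1) * Cg 1 + sn 1 * (g 1 * cs 1)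
          - ((-(w * sn 1)) * Sg 1 + cs 1 * (g 1 * sn 1)))) (Icc 0 1) 1 :=
    hpsiD.congr hrep (hrep 1 h11)
  have hder_eq : ed 1 = -(K * g' 1) + B * (w * cs 1)
      + w * K * ((w * cs 1) * Cg 1 + sn 1 * (g 1 * cs 1)
        - ((-(w * sn 1)) * Sg 1 + cs 1 * (g 1 * sn 1))) := by
    rw [← (heD 1 h11).derivWithin hu1, heb.derivWithin hu1]
  have hI11 : I 1 - I 1 = 0 := sub_self _
  have heqI' : B * cs 1 + w * K * (Cg 1 * cs 1 + Sg 1 * sn 1) = 0 := by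
    apply mul_left_cancel₀ hwne
    have hed1 : ed 1 = lam⁻¹ * (I 1 - I 1 - G * g' 1) := rfl
    rw [hed1] at hder_eq
    linear_combination (-1 : ℝ) * hder_eq - G * g' 1 * hinv
  -- consistency equation : G = ∫ g e
  set Q : ℝ := ∫ s in (0:ℝ)..1, g s * g s with hQdef
  set c1 : ℝ := ∫ s in (0:ℝ)..1, g s * sn s * Cg s with hc1def
  set c2 : ℝ := ∫ s in (0:ℝ)..1, g s * cs s * Sg s with hc2def
  have hi1 : IntervalIntegrable (fun s => -K * (g s * g s)) volume 0 1 :=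
    myIntInt (continuousOn_const.mul (hgc.mul hgc)) h01 h11
  have hi2 : IntervalIntegrable (fun s => B * (g s * sn s)) volume 0 1 :=
    myIntInt (continuousOn_const.mul (hgc.mul hsnc.continuousOn)) h01 h11
  have hi3 : IntervalIntegrable (fun s => w * K * (g s * sn s * Cg s)) volume 0 1 :=
    myIntInt (continuousOn_const.mul ((hgc.mul hsnc.continuousOn).mul hCgc)) h01 h11
  have hi4 : IntervalIntegrable (fun s => w * K * (g s * cs s * Sg s)) volume 0 1 :=
    myIntInt (continuousOn_const.mul ((hgc.mul hcsc.continuousOn).mul hSgc)) h01 h11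
  have hSg1 : (∫ s in (0:ℝ)..1, g s * sn s) = Sg 1 := rfl
  have hGrep : G = -(K * Q) + B * Sg 1 + w * K * (c1 - c2) := by
    have hstep : G = ∫ s in (0:ℝ)..1,
        (-K * (g s * g s) + (B * (g s * sn s)
          + (w * K * (g s * sn s * Cg s) - w * K * (g s * cs s * Sg s)))) := by
      rw [hGdef]
      apply intervalIntegral.integral_congr
      intro s hs
      rw [uIcc_of_le zero_le_one] at hs
      have h := hrep s hs
      simp only
      rw [h]; ring
    rw [hstep, intervalIntegral.integral_add hi1 (hi2.add (hi3.sub hi4)),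
      intervalIntegral.integral_add hi2 (hi3.sub hi4),
      intervalIntegral.integral_sub hi3 hi4,
      intervalIntegral.integral_const_mul, intervalIntegral.integral_const_mul,
      intervalIntegral.integral_const_mul, intervalIntegral.integral_const_mul,
      hSg1]
    rw [← hQdef, ← hc1def, ← hc2def]
    ring
  -- c1 + c2 = Sg 1 * Cg 1
  have hcc : c1 + c2 = Sg 1 * Cg 1 := by
    have key : (∫ x in (0:ℝ)..1, (g x * sn x * Cg x + g x * cs x * Sg x))
        = Sg 1 * Cg 1 - Sg 0 * Cg 0 := by
      apply intervalIntegral.integral_eq_sub_of_hasDeriv_right_of_le zero_le_one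
        (f := fun t => Sg t * Cg t)
      · exact (hSgc.mul hCgc)
      · intro x hx
        have hxm : x ∈ Icc (0:ℝ) 1 := ⟨hx.1.le, hx.2.le⟩
        have h := ((hSgD x hxm).mul (hCgD x hxm)).mono_of_mem_nhdsWithin
          (Icc_mem_nhdsGT_of_mem ⟨hx.1.le, hx.2⟩)
        refine h.congr_deriv ?_
        ring
      · exact myIntInt (((hgc.mul hsnc.continuousOn).mul hCgc).add
          ((hgc.mul hcsc.continuousOn).mul hSgc)) h01 h11
    rw [hc1def, hc2def, ← intervalIntegral.integral_add (f := fun s => g s * sn s * Cg s)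
      (g := fun s => g s * cs s * Sg s)
      (myIntInt ((hgc.mul hsnc.continuousOn).mul hCgc) h01 h11)
      (myIntInt ((hgc.mul hcsc.continuousOn).mul hSgc) h01 h11)]
    rw [key, hSg0, hCg0]
    ring
  -- rewrite the goal
  have hQ' : (∫ t in (0:ℝ)..1, (g t) ^ 2) = Q := by
    rw [hQdef]
    apply intervalIntegral.integral_congr
    intro s _
    ring
  have hcG : (∫ t in (0:ℝ)..1, ∫ u in (0:ℝ)..t,
      g u * g t * Real.sin (u / rt) * Real.cos (t / rt)) = c2 := by
    rw [hc2def]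
    apply intervalIntegral.integral_congr
    intro t _
    simp only
    have hfun : (fun u => g u * g t * Real.sin (u / rt) * Real.cos (t / rt))
        = fun u => (g t * Real.cos (t / rt)) * (g u * Real.sin (u / rt)) :=
      funext fun u => by ring
    rw [hfun, intervalIntegral.integral_const_mul]
  have hb1 : (∫ t in (0:ℝ)..1, g t * Real.sin (t / rt)) = Sg 1 := by
    simp only [hSgdef, hsndef]
  have hcs1 : Real.cos (1 / rt) = cs 1 := by simp only [hcsdef]
  have hsn1 : Real.sin (1 / rt) = sn 1 := by simp only [hsndef]
  rw [hQ', hcG, hb1, hcs1, hsn1]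
  -- case split
  rcases eq_or_ne K 0 with hK0 | hK0
  · have hG0 : G = 0 := by rw [← hKlam, hK0]; ring
    have hB : B ≠ 0 := by
      intro hB0
      apply ht0ne
      have h := hrep t0 ht0
      rw [hK0, hB0] at h
      simpa using h
    have hcs10 : cs 1 = 0 := by
      have h := heqI'
      rw [hK0] at h
      simp only [mul_zero, zero_mul, add_zero] at h
      exact (mul_eq_zero.1 h).resolve_left hB
    have hSg10 : Sg 1 = 0 := by
      have h := hGrep
      rw [hK0, hG0] at h
      simp only [mul_zero, zero_mul, neg_zero, zero_add, add_zero] at h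
      exact ((mul_eq_zero.1 h.symm).resolve_left hB)
    rw [hcs10, hSg10]
    ring
  · have hkey : K * (lam * cs 1 + Q * cs 1 + 2 * w * c2 * cs 1
        + w * Sg 1 * Sg 1 * sn 1) = 0 := by
      linear_combination cs 1 * hKlam + cs 1 * hGrep + Sg 1 * heqI' + w * K * cs 1 * hcc
    have hzero := (mul_eq_zero.1 hkey).resolve_left hK0
    linear_combination rt * hzero - (2 * c2 * cs 1 + Sg 1 ^ 2 * sn 1) * hrtw

end helpersForStmt3

/-- Any positive eigenvalue of the integral operator with kernel
`R(s,t) = min(s,t) - g(s)g(t)` satisfies the eigenvalue equation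
`(λ^{3/2} + √λ ∫₀¹ g² + 2 c_g(λ)) cos(1/√λ) + b_g(λ)² sin(1/√λ) = 0`. -/
theorem stmt3 (g g' g'' : ℝ → ℝ)
    (hg1 : ∀ t ∈ Set.Icc (0:ℝ) 1, HasDerivWithinAt g (g' t) (Set.Icc 0 1) t)
    (hg2 : ∀ t ∈ Set.Icc (0:ℝ) 1, HasDerivWithinAt g' (g'' t) (Set.Icc 0 1) t)
    (hg2c : ContinuousOn g'' (Set.Icc 0 1))
    (hg0 : g 0 = 0)
    (hgnorm : ∫ u in (0:ℝ)..1, (g' u) ^ 2 = 1)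
    (lam : ℝ) (hlam : 0 < lam)
    (heig : ∃ e : ℝ → ℝ, ContinuousOn e (Set.Icc 0 1) ∧
      (∃ t ∈ Set.Icc (0:ℝ) 1, e t ≠ 0) ∧
      ∀ t ∈ Set.Icc (0:ℝ) 1,
        (∫ s in (0:ℝ)..1, (min t s - g t * g s) * e s) = lam * e t) :
    (lam * Real.sqrt lam + Real.sqrt lam * (∫ t in (0:ℝ)..1, (g t) ^ 2) + 2 * cG g lam)
        * Real.cos (1 / Real.sqrt lam)
      + (bG g lam) ^ 2 * Real.sin (1 / Real.sqrt lam) = 0 := by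
  have h := stmt3_aux g g' g'' hg1 hg2 hg0 lam hlam heig
  simpa only [cG, bG] using h
end

section
/- If λ > 0 satisfies the equation (λ^{3/2} + √λ·∫₀¹ g(t)² dt + 2 c_g(λ))·cos(1/√λ) + b_g(λ)²·sin(1/√λ) = 0, then λ is an eigenvalue of the integral operator A_R, i.e., there exists a continuous function e : [0,1] → ℝ, not identically zero, with ∫₀¹ R(t,s) e(s) ds = λ e(t) for all t ∈ [0,1]. -/
open Real Set intervalIntegral

open Real Set intervalIntegral MeasureTheory

namespace Stmt4Aux

noncomputable def Cf (g : ℝ → ℝ) (w t : ℝ) : ℝ := ∫ u in (0:ℝ)..t, g u * Real.cos (u / w)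
noncomputable def Sf (g : ℝ → ℝ) (w t : ℝ) : ℝ := ∫ u in (0:ℝ)..t, g u * Real.sin (u / w)
noncomputable def Kf (g : ℝ → ℝ) (w t : ℝ) : ℝ :=
  Real.sin (t / w) * Cf g w t - Real.cos (t / w) * Sf g w t
noncomputable def Kd (g : ℝ → ℝ) (w t : ℝ) : ℝ :=
  (Real.cos (t / w) * Cf g w t + Real.sin (t / w) * Sf g w t) / w
noncomputable def Ef (G : ℝ → ℝ) (w A B t : ℝ) : ℝ :=
  A * Real.sin (t / w) + B * (-G t / w ^ 2 + Kf G w t / w ^ 3)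
noncomputable def Ed (G G' : ℝ → ℝ) (w A B t : ℝ) : ℝ :=
  A * (Real.cos (t / w) / w) + B * (-G' t / w ^ 2 + Kd G w t / w ^ 3)
noncomputable def Ed2 (G G'' : ℝ → ℝ) (w A B t : ℝ) : ℝ :=
  A * (-(Real.sin (t / w)) / w / w) + B * (-G'' t / w ^ 2 + (G t / w - Kf G w t / w ^ 2) / w ^ 3)
noncomputable def Pf (E : ℝ → ℝ) (t : ℝ) : ℝ :=
  (∫ s in (0:ℝ)..t, s * E s) + t * ((∫ s in (0:ℝ)..1, E s) - ∫ s in (0:ℝ)..t, E s)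
noncomputable def Pd (E : ℝ → ℝ) (t : ℝ) : ℝ :=
  (∫ s in (0:ℝ)..1, E s) - ∫ s in (0:ℝ)..t, E s

variable {g G G' G'' : ℝ → ℝ} {w A B : ℝ}

lemma hasDerivAt_sin_div (hw : w ≠ 0) (t : ℝ) :
    HasDerivAt (fun t : ℝ => Real.sin (t / w)) (Real.cos (t / w) / w) t := by
  refine ((Real.hasDerivAt_sin (t / w)).comp t ((hasDerivAt_id t).div_const w)).congr_deriv ?_
  ring

lemma hasDerivAt_cos_div (hw : w ≠ 0) (t : ℝ) :
    HasDerivAt (fun t : ℝ => Real.cos (t / w)) (-(Real.sin (t / w)) / w) t := by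
  have := (Real.hasDerivAt_cos (t / w)).comp t ((hasDerivAt_id t).div_const w)
  exact this.congr_deriv (by ring)

lemma hasDerivAt_Cf (hg : Continuous g) (t : ℝ) :
    HasDerivAt (Cf g w) (g t * Real.cos (t / w)) t := by
  have hc : Continuous fun u => g u * Real.cos (u / w) := by continuity
  exact intervalIntegral.integral_hasDerivAt_right (hc.intervalIntegrable _ _)
    (hc.stronglyMeasurableAtFilter _ _) hc.continuousAt

lemma hasDerivAt_Sf (hg : Continuous g) (t : ℝ) :
    HasDerivAt (Sf g w) (g t * Real.sin (t / w)) t := by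
  have hc : Continuous fun u => g u * Real.sin (u / w) := by continuity
  exact intervalIntegral.integral_hasDerivAt_right (hc.intervalIntegrable _ _)
    (hc.stronglyMeasurableAtFilter _ _) hc.continuousAt

lemma hasDerivAt_Kf (hg : Continuous g) (hw : w ≠ 0) (t : ℝ) :
    HasDerivAt (Kf g w) (Kd g w t) t := by
  have h := ((hasDerivAt_sin_div hw t).mul (hasDerivAt_Cf (w := w) hg t)).sub
    ((hasDerivAt_cos_div hw t).mul (hasDerivAt_Sf (w := w) hg t))
  refine h.congr_deriv ?_
  unfold Kd
  field_simp
  ring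

lemma hasDerivAt_Kd (hg : Continuous g) (hw : w ≠ 0) (t : ℝ) :
    HasDerivAt (Kd g w) (g t / w - Kf g w t / w ^ 2) t := by
  have h := (((hasDerivAt_cos_div hw t).mul (hasDerivAt_Cf (w := w) hg t)).add
    ((hasDerivAt_sin_div hw t).mul (hasDerivAt_Sf (w := w) hg t))).div_const w
  refine h.congr_deriv ?_
  unfold Kf
  have h1 : Real.sin (t / w) ^ 2 + Real.cos (t / w) ^ 2 = 1 := Real.sin_sq_add_cos_sq _
  field_simp
  linear_combination (g t * w) * h1

lemma cont_Cf (hg : Continuous g) : Continuous (Cf g w) :=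
  continuous_iff_continuousAt.2 fun t => (hasDerivAt_Cf hg t).continuousAt

lemma cont_Sf (hg : Continuous g) : Continuous (Sf g w) :=
  continuous_iff_continuousAt.2 fun t => (hasDerivAt_Sf hg t).continuousAt

lemma cont_Kf (hg : Continuous g) : Continuous (Kf g w) := by
  unfold Kf
  exact ((Real.continuous_sin.comp (by continuity)).mul (cont_Cf hg)).sub
    ((Real.continuous_cos.comp (by continuity)).mul (cont_Sf hg))

lemma cont_Kd (hg : Continuous g) : Continuous (Kd g w) := by
  unfold Kd
  exact (((Real.continuous_cos.comp (by continuity)).mul (cont_Cf hg)).add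
    ((Real.continuous_sin.comp (by continuity)).mul (cont_Sf hg))).div_const w

lemma cont_Ef (hg : Continuous G) : Continuous (Ef G w A B) := by
  unfold Ef
  apply Continuous.add
  · exact continuous_const.mul (Real.continuous_sin.comp (by continuity))
  · exact continuous_const.mul (((hg.neg).div_const _).add ((cont_Kf hg).div_const _))

lemma integral_id_cos (hw : w ≠ 0) (t : ℝ) :
    ∫ u in (0:ℝ)..t, u * Real.cos (u / w)
      = w * t * Real.sin (t / w) + w ^ 2 * Real.cos (t / w) - w ^ 2 := by
  have h : ∀ u ∈ Set.uIcc (0:ℝ) t,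
      HasDerivAt (fun u : ℝ => w * u * Real.sin (u / w) + w ^ 2 * Real.cos (u / w))
        (u * Real.cos (u / w)) u := by
    intro u _
    have h1 := (((hasDerivAt_id u).const_mul w).mul (hasDerivAt_sin_div hw u)).add
      ((hasDerivAt_cos_div hw u).const_mul (w ^ 2))
    refine h1.congr_deriv ?_
    simp only [id_eq]
    field_simp
    ring
  have hi : IntervalIntegrable (fun u : ℝ => u * Real.cos (u / w)) volume 0 t :=
    (by continuity : Continuous fun u : ℝ => u * Real.cos (u / w)).intervalIntegrable _ _
  rw [intervalIntegral.integral_eq_sub_of_hasDerivAt h hi]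
  simp

lemma integral_id_sin (hw : w ≠ 0) (t : ℝ) :
    ∫ u in (0:ℝ)..t, u * Real.sin (u / w)
      = -(w * t * Real.cos (t / w)) + w ^ 2 * Real.sin (t / w) := by
  have h : ∀ u ∈ Set.uIcc (0:ℝ) t,
      HasDerivAt (fun u : ℝ => -(w * u * Real.cos (u / w)) + w ^ 2 * Real.sin (u / w))
        (u * Real.sin (u / w)) u := by
    intro u _
    have h1 := ((((hasDerivAt_id u).const_mul w).mul (hasDerivAt_cos_div hw u)).neg).add
      ((hasDerivAt_sin_div hw u).const_mul (w ^ 2))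
    refine h1.congr_deriv ?_
    simp only [id_eq]
    field_simp
    ring
  have hi : IntervalIntegrable (fun u : ℝ => u * Real.sin (u / w)) volume 0 t :=
    (by continuity : Continuous fun u : ℝ => u * Real.sin (u / w)).intervalIntegrable _ _
  rw [intervalIntegral.integral_eq_sub_of_hasDerivAt h hi]
  simp

lemma const_of_deriv_zero {f F : ℝ → ℝ}
    (hf : ∀ x ∈ Set.Icc (0:ℝ) 1, HasDerivWithinAt f (F x) (Set.Icc 0 1) x)
    (hF : ∀ x ∈ Set.Icc (0:ℝ) 1, F x = 0) :
    ∀ x ∈ Set.Icc (0:ℝ) 1, f x = f 0 := by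
  apply constant_of_has_deriv_right_zero
  · exact fun x hx => (hf x hx).continuousWithinAt
  · intro x hx
    have h1 : HasDerivWithinAt f (F x) (Set.Icc (0:ℝ) 1) x := hf x ⟨hx.1, hx.2.le⟩
    have h2 := h1.mono_of_mem_nhdsWithin (Icc_mem_nhdsGE_of_mem ⟨hx.1, hx.2⟩)
    rwa [hF x ⟨hx.1, hx.2.le⟩] at h2

lemma hasDerivWithinAt_Ef (hG : Continuous G) (hw : w ≠ 0) {t : ℝ}
    (hG1 : HasDerivWithinAt G (G' t) (Set.Icc 0 1) t) :
    HasDerivWithinAt (Ef G w A B) (Ed G G' w A B t) (Set.Icc 0 1) t := by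
  have h1 : HasDerivWithinAt (fun t : ℝ => A * Real.sin (t / w))
      (A * (Real.cos (t / w) / w)) (Set.Icc 0 1) t :=
    ((hasDerivAt_sin_div hw t).const_mul A).hasDerivWithinAt
  have h2 := ((hG1.neg.div_const (w ^ 2)).add
    ((hasDerivAt_Kf hG hw t).hasDerivWithinAt.div_const (w ^ 3))).const_mul B
  exact h1.add h2

lemma hasDerivWithinAt_Ed (hG : Continuous G) (hw : w ≠ 0) {t : ℝ}
    (hG2 : HasDerivWithinAt G' (G'' t) (Set.Icc 0 1) t) :
    HasDerivWithinAt (Ed G G' w A B) (Ed2 G G'' w A B t) (Set.Icc 0 1) t := by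
  have h1 : HasDerivWithinAt (fun t : ℝ => A * (Real.cos (t / w) / w))
      (A * (-(Real.sin (t / w)) / w / w)) (Set.Icc 0 1) t :=
    (((hasDerivAt_cos_div hw t).div_const w).const_mul A).hasDerivWithinAt
  have h2 := ((hG2.neg.div_const (w ^ 2)).add
    ((hasDerivAt_Kd hG hw t).hasDerivWithinAt.div_const (w ^ 3))).const_mul B
  exact h1.add h2

lemma ode_identity (hw : w ≠ 0) (t : ℝ) :
    w ^ 2 * Ed2 G G'' w A B t + Ef G w A B t = -(B * G'' t) := by
  unfold Ed2 Ef
  field_simp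
  ring

lemma hasDerivAt_Pf {E : ℝ → ℝ} (hE : Continuous E) (t : ℝ) :
    HasDerivAt (Pf E) (Pd E t) t := by
  have hc : Continuous fun s : ℝ => s * E s := continuous_id.mul hE
  have h1 : HasDerivAt (fun t : ℝ => ∫ s in (0:ℝ)..t, s * E s) (t * E t) t :=
    intervalIntegral.integral_hasDerivAt_right (hc.intervalIntegrable _ _)
      (hc.stronglyMeasurableAtFilter _ _) hc.continuousAt
  have h2 : HasDerivAt (fun t : ℝ => ∫ s in (0:ℝ)..t, E s) (E t) t :=
    intervalIntegral.integral_hasDerivAt_right (hE.intervalIntegrable _ _)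
      (hE.stronglyMeasurableAtFilter _ _) hE.continuousAt
  have h3 := h1.add ((hasDerivAt_id t).mul ((hasDerivAt_const t (∫ s in (0:ℝ)..1, E s)).sub h2))
  refine h3.congr_deriv ?_
  unfold Pd
  simp only [id_eq, Pi.sub_apply]
  ring

lemma hasDerivAt_Pd {E : ℝ → ℝ} (hE : Continuous E) (t : ℝ) :
    HasDerivAt (Pd E) (-(E t)) t := by
  have h2 : HasDerivAt (fun t : ℝ => ∫ s in (0:ℝ)..t, E s) (E t) t :=
    intervalIntegral.integral_hasDerivAt_right (hE.intervalIntegrable _ _)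
      (hE.stronglyMeasurableAtFilter _ _) hE.continuousAt
  have h3 := (hasDerivAt_const t (∫ s in (0:ℝ)..1, E s)).sub h2
  exact h3.congr_deriv (by simp)

end Stmt4Aux


namespace Stmt4Aux

set_option maxHeartbeats 2000000 in
theorem master (g g' g'' : ℝ → ℝ)
    (hg1 : ∀ t ∈ Set.Icc (0:ℝ) 1, HasDerivWithinAt g (g' t) (Set.Icc 0 1) t)
    (hg2 : ∀ t ∈ Set.Icc (0:ℝ) 1, HasDerivWithinAt g' (g'' t) (Set.Icc 0 1) t)
    (hg0 : g 0 = 0)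
    (hgnorm : ∫ u in (0:ℝ)..1, (g' u) ^ 2 = 1)
    (lam : ℝ) (hlam : 0 < lam) (A B : ℝ) (hAB : A ≠ 0 ∨ B ≠ 0)
    (hc1 : A * ((Real.sqrt lam) ^ 3 * Real.cos (1 / Real.sqrt lam))
        + B * (aG g lam * Real.cos (1 / Real.sqrt lam)
             + bG g lam * Real.sin (1 / Real.sqrt lam)) = 0)
    (hc2 : A * bG g lam * (Real.sqrt lam) ^ 3
        + B * (aG g lam * bG g lam - 2 * cG g lam
             - Real.sqrt lam * (∫ t in (0:ℝ)..1, (g t) ^ 2) - (Real.sqrt lam) ^ 3) = 0) :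
    ∃ e : ℝ → ℝ, ContinuousOn e (Set.Icc 0 1) ∧
      (∃ t ∈ Set.Icc (0:ℝ) 1, e t ≠ 0) ∧
      ∀ t ∈ Set.Icc (0:ℝ) 1,
        (∫ s in (0:ℝ)..1, (min t s - g t * g s) * e s) = lam * e t := by
  set w : ℝ := Real.sqrt lam with hwdef

  have hw0 : 0 < w := Real.sqrt_pos.2 hlam
  have hw : w ≠ 0 := hw0.ne'
  have hw2 : w ^ 2 = lam := Real.sq_sqrt hlam.le
  set aa := aG g lam with haa
  set bb := bG g lam with hbb
  set cc := cG g lam with hcc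
  set ii := (∫ t in (0:ℝ)..1, (g t) ^ 2 : ℝ) with hii
  -- clamped versions
  set G : ℝ → ℝ := fun t => g (min (max t 0) 1) with hGdef
  set Gd : ℝ → ℝ := fun t => g' (min (max t 0) 1) with hGddef
  set Gdd : ℝ → ℝ := fun t => g'' (min (max t 0) 1) with hGdddef
  have hqmem : ∀ t : ℝ, min (max t 0) 1 ∈ Set.Icc (0:ℝ) 1 :=
    fun t => ⟨le_min (le_max_right t 0) zero_le_one, min_le_right _ 1⟩
  have hq : ∀ t ∈ Set.Icc (0:ℝ) 1, min (max t 0) 1 = t := by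
    intro t ht
    rw [max_eq_left ht.1, min_eq_left ht.2]
  have hqc : Continuous fun t : ℝ => min (max t 0) 1 :=
    (continuous_id.max continuous_const).min continuous_const
  have hgc : ContinuousOn g (Set.Icc 0 1) := fun t ht => (hg1 t ht).continuousWithinAt
  have hgc' : ContinuousOn g' (Set.Icc 0 1) := fun t ht => (hg2 t ht).continuousWithinAt
  have hGc : Continuous G := hgc.comp_continuous hqc hqmem
  have hGdc : Continuous Gd := hgc'.comp_continuous hqc hqmem
  have hGeq : ∀ t ∈ Set.Icc (0:ℝ) 1, G t = g t := fun t ht => by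
    simp only [hGdef]; rw [hq t ht]
  have hGdeq : ∀ t ∈ Set.Icc (0:ℝ) 1, Gd t = g' t := fun t ht => by
    simp only [hGddef]; rw [hq t ht]
  have hGddeq : ∀ t ∈ Set.Icc (0:ℝ) 1, Gdd t = g'' t := fun t ht => by
    simp only [hGdddef]; rw [hq t ht]
  have hG1 : ∀ t ∈ Set.Icc (0:ℝ) 1, HasDerivWithinAt G (Gd t) (Set.Icc 0 1) t := by
    intro t ht
    rw [hGdeq t ht]
    exact (hg1 t ht).congr (fun x hx => hGeq x hx) (hGeq t ht)
  have hG2 : ∀ t ∈ Set.Icc (0:ℝ) 1, HasDerivWithinAt Gd (Gdd t) (Set.Icc 0 1) t := by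
    intro t ht
    rw [hGddeq t ht]
    exact (hg2 t ht).congr (fun x hx => hGdeq x hx) (hGdeq t ht)
  -- boundary values of the primitives
  have hC1 : Cf G w 1 = aa := by
    rw [haa]
    unfold Cf aG
    apply intervalIntegral.integral_congr
    intro u hu
    rw [Set.uIcc_of_le zero_le_one] at hu
    simp only
    rw [hGeq u hu, hwdef]
  have hS1 : Sf G w 1 = bb := by
    rw [hbb]
    unfold Sf bG
    apply intervalIntegral.integral_congr
    intro u hu
    rw [Set.uIcc_of_le zero_le_one] at hu
    simp only
    rw [hGeq u hu, hwdef]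
  have hEc : Continuous (Ef G w A B) := cont_Ef hGc
  -- e has within-derivatives
  have hEd : ∀ t ∈ Set.Icc (0:ℝ) 1,
      HasDerivWithinAt (Ef G w A B) (Ed G Gd w A B t) (Set.Icc 0 1) t :=
    fun t ht => hasDerivWithinAt_Ef hGc hw (hG1 t ht)
  have hE1d : ∀ t ∈ Set.Icc (0:ℝ) 1,
      HasDerivWithinAt (Ed G Gd w A B) (Ed2 G Gdd w A B t) (Set.Icc 0 1) t :=
    fun t ht => hasDerivWithinAt_Ed hGc hw (hG2 t ht)
  -- E 0 = 0
  have hE0 : Ef G w A B 0 = 0 := by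
    have hG0 : G 0 = 0 := by rw [hGeq 0 ⟨le_rfl, zero_le_one⟩, hg0]
    simp [Ef, Kf, Cf, Sf, hG0, intervalIntegral.integral_same]
  have hG0 : G 0 = 0 := by rw [hGeq 0 ⟨le_rfl, zero_le_one⟩, hg0]
  have hcosw : Continuous fun s : ℝ => Real.cos (s / w) :=
    Real.continuous_cos.comp (continuous_id.div_const w)
  have hsinw : Continuous fun s : ℝ => Real.sin (s / w) :=
    Real.continuous_sin.comp (continuous_id.div_const w)
  -- product rule FTC for Cf * Sf
  have hprod : (∫ s in (0:ℝ)..1,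
      (G s * Real.cos (s / w) * Sf G w s + G s * Real.sin (s / w) * Cf G w s))
      = aa * bb := by
    have hd : ∀ s ∈ Set.uIcc (0:ℝ) 1, HasDerivAt (fun x => Cf G w x * Sf G w x)
        (G s * Real.cos (s / w) * Sf G w s + G s * Real.sin (s / w) * Cf G w s) s := by
      intro s _
      have h := (hasDerivAt_Cf (w := w) hGc s).mul (hasDerivAt_Sf (w := w) hGc s)
      refine h.congr_deriv ?_
      ring
    have hi : IntervalIntegrable (fun s =>
        G s * Real.cos (s / w) * Sf G w s + G s * Real.sin (s / w) * Cf G w s) volume 0 1 :=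
      (((hGc.mul hcosw).mul (cont_Sf hGc)).add
        ((hGc.mul hsinw).mul (cont_Cf hGc))).intervalIntegrable _ _
    rw [intervalIntegral.integral_eq_sub_of_hasDerivAt hd hi, hC1, hS1]
    have : Cf G w 0 = 0 := intervalIntegral.integral_same
    rw [this]
    have : Sf G w 0 = 0 := intervalIntegral.integral_same
    rw [this]
    ring
  -- identification of cG
  have hcG : (∫ s in (0:ℝ)..1, G s * Real.cos (s / w) * Sf G w s) = cc := by
    rw [hcc]
    unfold cG
    symm
    apply intervalIntegral.integral_congr
    intro t ht
    rw [Set.uIcc_of_le zero_le_one] at ht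
    simp only
    have h1 : Set.EqOn
        (fun u => g u * g t * Real.sin (u / Real.sqrt lam) * Real.cos (t / Real.sqrt lam))
        (fun u => (g t * Real.cos (t / Real.sqrt lam)) * (G u * Real.sin (u / w)))
        (Set.uIcc 0 t) := by
      intro u hu
      rw [Set.uIcc_of_le ht.1] at hu
      simp only
      rw [hGeq u ⟨hu.1, hu.2.trans ht.2⟩]
      simp only [← hwdef]
      ring
    rw [intervalIntegral.integral_congr h1, intervalIntegral.integral_const_mul]
    rw [hGeq t ht]
    simp only [← hwdef]
    rfl
  -- ∫ G·K
  have hGK : (∫ s in (0:ℝ)..1, G s * Kf G w s) = aa * bb - 2 * cc := by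
    have h1 : ∀ s : ℝ, G s * Kf G w s =
        (G s * Real.cos (s / w) * Sf G w s + G s * Real.sin (s / w) * Cf G w s)
          - 2 * (G s * Real.cos (s / w) * Sf G w s) := by
      intro s; unfold Kf; ring
    simp only [h1]
    have hiA : IntervalIntegrable (fun s =>
        G s * Real.cos (s / w) * Sf G w s + G s * Real.sin (s / w) * Cf G w s) volume 0 1 :=
      (((hGc.mul hcosw).mul (cont_Sf hGc)).add
        ((hGc.mul hsinw).mul (cont_Cf hGc))).intervalIntegrable _ _
    have hiB : IntervalIntegrable (fun s =>
        2 * (G s * Real.cos (s / w) * Sf G w s)) volume 0 1 :=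
      (continuous_const.mul ((hGc.mul hcosw).mul (cont_Sf hGc))).intervalIntegrable _ _
    rw [intervalIntegral.integral_sub hiA hiB, hprod, intervalIntegral.integral_const_mul, hcG]
  -- ∫ G·E = B
  have hGE : (∫ s in (0:ℝ)..1, G s * Ef G w A B s) = B := by
    have hexp : ∀ s : ℝ, G s * Ef G w A B s =
        A * (G s * Real.sin (s / w)) + B * (-(1 / w ^ 2) * (G s * G s)
          + (1 / w ^ 3) * (G s * Kf G w s)) := by
      intro s; unfold Ef; ring
    simp only [hexp]
    have i1 : IntervalIntegrable (fun s => A * (G s * Real.sin (s / w))) volume 0 1 :=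
      (continuous_const.mul (hGc.mul hsinw)).intervalIntegrable _ _
    have i2 : IntervalIntegrable (fun s => -(1 / w ^ 2) * (G s * G s)
        + (1 / w ^ 3) * (G s * Kf G w s)) volume 0 1 :=
      ((continuous_const.mul (hGc.mul hGc)).add
        (continuous_const.mul (hGc.mul (cont_Kf hGc)))).intervalIntegrable _ _
    have i3 : IntervalIntegrable (fun s => -(1 / w ^ 2) * (G s * G s)) volume 0 1 :=
      (continuous_const.mul (hGc.mul hGc)).intervalIntegrable _ _
    have i4 : IntervalIntegrable (fun s => (1 / w ^ 3) * (G s * Kf G w s)) volume 0 1 :=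
      (continuous_const.mul (hGc.mul (cont_Kf hGc))).intervalIntegrable _ _
    rw [intervalIntegral.integral_add i1 (i2.const_mul B), intervalIntegral.integral_const_mul,
      intervalIntegral.integral_const_mul, intervalIntegral.integral_add i3 i4,
      intervalIntegral.integral_const_mul, intervalIntegral.integral_const_mul]
    have hGsin : (∫ s in (0:ℝ)..1, G s * Real.sin (s / w)) = bb := hS1
    have hGG : (∫ s in (0:ℝ)..1, G s * G s) = ii := by
      rw [hii]
      apply intervalIntegral.integral_congr
      intro s hs
      rw [Set.uIcc_of_le zero_le_one] at hs
      simp only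
      rw [hGeq s hs]
      ring
    rw [hGsin, hGG, hGK]
    field_simp
    linear_combination hc2
  -- second derivative of D vanishes
  have hD1d : ∀ t ∈ Set.Icc (0:ℝ) 1, HasDerivWithinAt
      (fun t => Pd (Ef G w A B) t - lam * Ed G Gd w A B t - B * Gd t) 0 (Set.Icc 0 1) t := by
    intro t ht
    have h := ((hasDerivAt_Pd hEc t).hasDerivWithinAt.sub
      ((hE1d t ht).const_mul lam)).sub ((hG2 t ht).const_mul B)
    refine h.congr_deriv ?_
    have hode := ode_identity (G := G) (G'' := Gdd) (w := w) (A := A) (B := B) hw t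
    rw [← hw2]
    linear_combination (-1 : ℝ) * hode
  have hD1_1 : Pd (Ef G w A B) 1 - lam * Ed G Gd w A B 1 - B * Gd 1 = 0 := by
    have hPd1 : Pd (Ef G w A B) 1 = 0 := by unfold Pd; rw [sub_self]
    have hKd1 : Kd G w 1 = (Real.cos (1 / w) * aa + Real.sin (1 / w) * bb) / w := by
      unfold Kd; rw [hC1, hS1]
    rw [hPd1]
    unfold Ed
    rw [hKd1, ← hw2]
    field_simp
    linear_combination (-1 : ℝ) * hc1
  have hD1zero : ∀ x ∈ Set.Icc (0:ℝ) 1,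
      Pd (Ef G w A B) x - lam * Ed G Gd w A B x - B * Gd x = 0 := by
    have hconst := const_of_deriv_zero hD1d (fun _ _ => rfl)
    intro x hx
    have h1 := hconst 1 ⟨zero_le_one, le_rfl⟩
    have h0 := hconst x hx
    linarith [hD1_1]
  have hDd : ∀ t ∈ Set.Icc (0:ℝ) 1, HasDerivWithinAt
      (fun t => Pf (Ef G w A B) t - lam * Ef G w A B t - B * G t) 0 (Set.Icc 0 1) t := by
    intro t ht
    have h := ((hasDerivAt_Pf hEc t).hasDerivWithinAt.sub
      ((hEd t ht).const_mul lam)).sub ((hG1 t ht).const_mul B)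
    rwa [hD1zero t ht] at h
  have hDzero : ∀ t ∈ Set.Icc (0:ℝ) 1,
      Pf (Ef G w A B) t - lam * Ef G w A B t - B * G t = 0 := by
    have hconst := const_of_deriv_zero hDd (fun _ _ => rfl)
    intro t ht
    have h0 := hconst t ht
    rw [h0]
    have hPf0 : Pf (Ef G w A B) 0 = 0 := by
      unfold Pf
      rw [intervalIntegral.integral_same]
      ring
    rw [hPf0, hE0, hG0]
    ring
  -- nontriviality
  have hnt : ∃ t ∈ Set.Icc (0:ℝ) 1, Ef G w A B t ≠ 0 := by
    by_contra hcon
    push_neg at hcon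
    set t₀ := min 1 w with ht0def
    have ht₀ : t₀ ∈ Set.Icc (0:ℝ) 1 := ⟨le_min zero_le_one hw0.le, min_le_left _ _⟩
    have hsin : 0 < Real.sin (t₀ / w) := by
      apply Real.sin_pos_of_pos_of_lt_pi
      · exact div_pos (lt_min one_pos hw0) hw0
      · have h1 : t₀ / w ≤ 1 := by
          rw [div_le_one hw0]; exact min_le_right _ _
        linarith [Real.pi_gt_three]
    rcases eq_or_ne B 0 with hB | hB
    · have hA : A ≠ 0 := by
        rcases hAB with h | h
        · exact h
        · exact absurd hB h
      have h0 := hcon t₀ ht₀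
      rw [show Ef G w A B t₀ = A * Real.sin (t₀ / w) by unfold Ef; rw [hB]; ring] at h0
      rcases mul_eq_zero.1 h0 with h | h
      · exact hA h
      · exact hsin.ne' h
    · have hUD : UniqueDiffOn ℝ (Set.Icc (0:ℝ) 1) := uniqueDiffOn_Icc one_pos
      have hE1z : ∀ t ∈ Set.Icc (0:ℝ) 1, Ed G Gd w A B t = 0 := by
        intro t ht
        have hz : HasDerivWithinAt (Ef G w A B) 0 (Set.Icc 0 1) t :=
          (hasDerivWithinAt_const t _ 0).congr (fun x hx => hcon x hx) (hcon t ht)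
        exact ((hUD t ht).eq_deriv _ (hEd t ht) hz)
      have hE2z : ∀ t ∈ Set.Icc (0:ℝ) 1, Ed2 G Gdd w A B t = 0 := by
        intro t ht
        have hz : HasDerivWithinAt (Ed G Gd w A B) 0 (Set.Icc 0 1) t :=
          (hasDerivWithinAt_const t _ 0).congr (fun x hx => hE1z x hx) (hE1z t ht)
        exact ((hUD t ht).eq_deriv _ (hE1d t ht) hz)
      have hGz : ∀ t ∈ Set.Icc (0:ℝ) 1, g'' t = 0 := by
        intro t ht
        have hode := ode_identity (G := G) (G'' := Gdd) (w := w) (A := A) (B := B) hw t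
        rw [hE2z t ht, hcon t ht, hGddeq t ht] at hode
        have hBg : B * g'' t = 0 := by linarith
        rcases mul_eq_zero.1 hBg with h | h
        · exact absurd h hB
        · exact h
      have hg'c : ∀ x ∈ Set.Icc (0:ℝ) 1, g' x = g' 0 := const_of_deriv_zero hg2 hGz
      have hglin : ∀ x ∈ Set.Icc (0:ℝ) 1, g x = g' 0 * x := by
        have h := const_of_deriv_zero (f := fun x => g x - g' 0 * x)
          (F := fun x => g' x - g' 0)
          (fun x hx => by
            have hlin : HasDerivWithinAt (fun y : ℝ => g' 0 * y) (g' 0) (Set.Icc 0 1) x := by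
              simpa using ((hasDerivAt_id x).const_mul (g' 0)).hasDerivWithinAt
            exact (hg1 x hx).sub hlin)
          (fun x hx => by show g' x - g' 0 = 0; rw [hg'c x hx]; ring)
        intro x hx
        have h2 := h x hx
        simp only [hg0] at h2
        have h3 : g x - g' 0 * x = 0 := by rw [h2]; ring
        linarith
      have hcc2 : (g' 0) ^ 2 = 1 := by
        have h : (∫ u in (0:ℝ)..1, (g' u) ^ 2) = ∫ u in (0:ℝ)..1, (g' 0) ^ 2 := by
          apply intervalIntegral.integral_congr
          intro u hu
          rw [Set.uIcc_of_le zero_le_one] at hu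
          simp only
          rw [hg'c u hu]
        rw [h] at hgnorm
        simpa using hgnorm
      have hcne : g' 0 ≠ 0 := by
        intro h; rw [h] at hcc2; norm_num at hcc2
      have hCft : ∀ t ∈ Set.Icc (0:ℝ) 1, Cf G w t
          = g' 0 * (w * t * Real.sin (t / w) + w ^ 2 * Real.cos (t / w) - w ^ 2) := by
        intro t ht
        have hcongr : Set.EqOn (fun u => G u * Real.cos (u / w))
            (fun u => g' 0 * (u * Real.cos (u / w))) (Set.uIcc 0 t) := by
          intro u hu
          rw [Set.uIcc_of_le ht.1] at hu
          have hu' : u ∈ Set.Icc (0:ℝ) 1 := ⟨hu.1, hu.2.trans ht.2⟩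
          simp only
          rw [hGeq u hu', hglin u hu']
          ring
        rw [show Cf G w t = ∫ u in (0:ℝ)..t, G u * Real.cos (u / w) from rfl,
          intervalIntegral.integral_congr hcongr, intervalIntegral.integral_const_mul,
          integral_id_cos hw]
      have hSft : ∀ t ∈ Set.Icc (0:ℝ) 1, Sf G w t
          = g' 0 * (-(w * t * Real.cos (t / w)) + w ^ 2 * Real.sin (t / w)) := by
        intro t ht
        have hcongr : Set.EqOn (fun u => G u * Real.sin (u / w))
            (fun u => g' 0 * (u * Real.sin (u / w))) (Set.uIcc 0 t) := by
          intro u hu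
          rw [Set.uIcc_of_le ht.1] at hu
          have hu' : u ∈ Set.Icc (0:ℝ) 1 := ⟨hu.1, hu.2.trans ht.2⟩
          simp only
          rw [hGeq u hu', hglin u hu']
          ring
        rw [show Sf G w t = ∫ u in (0:ℝ)..t, G u * Real.sin (u / w) from rfl,
          intervalIntegral.integral_congr hcongr, intervalIntegral.integral_const_mul,
          integral_id_sin hw]
      have hKft : Kf G w t₀ = g' 0 * (w * t₀ - w ^ 2 * Real.sin (t₀ / w)) := by
        unfold Kf
        rw [hCft t₀ ht₀, hSft t₀ ht₀]
        have h1 := Real.sin_sq_add_cos_sq (t₀ / w)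
        linear_combination (g' 0 * w * t₀) * h1
      have hAeq : A * w = B * g' 0 := by
        have h0 := hcon t₀ ht₀
        unfold Ef at h0
        rw [hGeq t₀ ht₀, hglin t₀ ht₀, hKft] at h0
        field_simp at h0
        have key : (A * w - B * g' 0) * (Real.sin (t₀ / w) * w ^ 4) = 0 := by
          linear_combination w ^ 3 * h0
        rcases mul_eq_zero.1 key with h | h
        · linarith
        · exact absurd h (mul_ne_zero hsin.ne' (pow_ne_zero _ hw))
      have haGv : aa = g' 0 * (w * Real.sin (1 / w) + w ^ 2 * Real.cos (1 / w) - w ^ 2) := by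
        rw [← hC1, hCft 1 ⟨zero_le_one, le_rfl⟩]
        ring
      have hbGv : bb = g' 0 * (-(w * Real.cos (1 / w)) + w ^ 2 * Real.sin (1 / w)) := by
        rw [← hS1, hSft 1 ⟨zero_le_one, le_rfl⟩]
        ring
      rw [haGv, hbGv] at hc1
      have h1 := Real.sin_sq_add_cos_sq (1 / w)
      have hfin : B * g' 0 * w ^ 2 = 0 := by
        linear_combination hc1 - (w ^ 2 * Real.cos (1 / w)) * hAeq - (B * g' 0 * w ^ 2) * h1
      rcases mul_eq_zero.1 hfin with h | h
      · rcases mul_eq_zero.1 h with h' | h'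
        · exact hB h'
        · exact hcne h'
      · exact pow_ne_zero 2 hw h
  refine ⟨Ef G w A B, hEc.continuousOn, hnt, ?_⟩
  intro t ht
  have hcongr : Set.EqOn (fun s => (min t s - g t * g s) * Ef G w A B s)
      (fun s => min t s * Ef G w A B s - G t * (G s * Ef G w A B s)) (Set.uIcc 0 1) := by
    intro s hs
    rw [Set.uIcc_of_le zero_le_one] at hs
    simp only
    rw [hGeq s hs, hGeq t ht]
    ring
  rw [intervalIntegral.integral_congr hcongr]
  have hi1 : IntervalIntegrable (fun s => min t s * Ef G w A B s) volume 0 1 :=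
    ((continuous_const.min continuous_id).mul hEc).intervalIntegrable _ _
  have hi2 : IntervalIntegrable (fun s => G s * Ef G w A B s) volume 0 1 :=
    (hGc.mul hEc).intervalIntegrable _ _
  rw [intervalIntegral.integral_sub hi1 (hi2.const_mul _)]
  rw [intervalIntegral.integral_const_mul, hGE]
  -- ∫ min t s * E s = Pf E t
  have hmin : (∫ s in (0:ℝ)..1, min t s * Ef G w A B s) = Pf (Ef G w A B) t := by
    have ha : IntervalIntegrable (fun s => min t s * Ef G w A B s) volume 0 t :=
      ((continuous_const.min continuous_id).mul hEc).intervalIntegrable _ _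
    have hb : IntervalIntegrable (fun s => min t s * Ef G w A B s) volume t 1 :=
      ((continuous_const.min continuous_id).mul hEc).intervalIntegrable _ _
    rw [← intervalIntegral.integral_add_adjacent_intervals ha hb]
    have p1 : (∫ s in (0:ℝ)..t, min t s * Ef G w A B s)
        = ∫ s in (0:ℝ)..t, s * Ef G w A B s := by
      apply intervalIntegral.integral_congr
      intro s hs
      rw [Set.uIcc_of_le ht.1] at hs
      simp only
      rw [min_eq_right hs.2]
    have p2 : (∫ s in t..(1:ℝ), min t s * Ef G w A B s)
        = t * ∫ s in t..(1:ℝ), Ef G w A B s := by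
      rw [← intervalIntegral.integral_const_mul]
      apply intervalIntegral.integral_congr
      intro s hs
      rw [Set.uIcc_of_le ht.2] at hs
      simp only
      rw [min_eq_left hs.1]
    have p3 : (∫ s in t..(1:ℝ), Ef G w A B s)
        = (∫ s in (0:ℝ)..1, Ef G w A B s) - ∫ s in (0:ℝ)..t, Ef G w A B s :=
      (intervalIntegral.integral_interval_sub_left (hEc.intervalIntegrable _ _)
        (hEc.intervalIntegrable _ _)).symm
    rw [p1, p2, p3]
    rfl
  rw [hmin]
  have := hDzero t ht
  linarith

end Stmt4Aux

/-- If `λ > 0` satisfies the eigenvalue equation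
`(λ^{3/2} + √λ ∫₀¹ g² + 2 c_g(λ)) cos(1/√λ) + b_g(λ)² sin(1/√λ) = 0`, then `λ` is an
eigenvalue of the integral operator with kernel `R(s,t) = min(s,t) - g(s)g(t)`. -/
theorem stmt4 (g g' g'' : ℝ → ℝ)
    (hg1 : ∀ t ∈ Set.Icc (0:ℝ) 1, HasDerivWithinAt g (g' t) (Set.Icc 0 1) t)
    (hg2 : ∀ t ∈ Set.Icc (0:ℝ) 1, HasDerivWithinAt g' (g'' t) (Set.Icc 0 1) t)
    (hg2c : ContinuousOn g'' (Set.Icc 0 1))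
    (hg0 : g 0 = 0)
    (hgnorm : ∫ u in (0:ℝ)..1, (g' u) ^ 2 = 1)
    (lam : ℝ) (hlam : 0 < lam)
    (heq : (lam * Real.sqrt lam + Real.sqrt lam * (∫ t in (0:ℝ)..1, (g t) ^ 2)
          + 2 * cG g lam) * Real.cos (1 / Real.sqrt lam)
        + (bG g lam) ^ 2 * Real.sin (1 / Real.sqrt lam) = 0) :
    ∃ e : ℝ → ℝ, ContinuousOn e (Set.Icc 0 1) ∧
      (∃ t ∈ Set.Icc (0:ℝ) 1, e t ≠ 0) ∧
      ∀ t ∈ Set.Icc (0:ℝ) 1,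
        (∫ s in (0:ℝ)..1, (min t s - g t * g s) * e s) = lam * e t := by
  have hw0 : 0 < Real.sqrt lam := Real.sqrt_pos.2 hlam
  have hw : Real.sqrt lam ≠ 0 := hw0.ne'
  have hw2 : Real.sqrt lam ^ 2 = lam := Real.sq_sqrt hlam.le
  by_cases h1 : bG g lam = 0 ∧ aG g lam * bG g lam - 2 * cG g lam
      - Real.sqrt lam * (∫ t in (0:ℝ)..1, (g t) ^ 2) - (Real.sqrt lam) ^ 3 = 0
  · by_cases h2 : Real.cos (1 / Real.sqrt lam) = 0
    · exact Stmt4Aux.master g g' g'' hg1 hg2 hg0 hgnorm lam hlam 1 0 (Or.inl one_ne_zero)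
        (by rw [h2]; ring) (by rw [h1.1]; ring)
    · refine Stmt4Aux.master g g' g'' hg1 hg2 hg0 hgnorm lam hlam
        (aG g lam * Real.cos (1 / Real.sqrt lam) + bG g lam * Real.sin (1 / Real.sqrt lam))
        (-((Real.sqrt lam) ^ 3 * Real.cos (1 / Real.sqrt lam)))
        (Or.inr (neg_ne_zero.2 (mul_ne_zero (pow_ne_zero 3 hw) h2))) (by ring) ?_
      linear_combination ((aG g lam * Real.cos (1 / Real.sqrt lam)
          + bG g lam * Real.sin (1 / Real.sqrt lam)) * (Real.sqrt lam) ^ 3) * h1.1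
        + (-((Real.sqrt lam) ^ 3 * Real.cos (1 / Real.sqrt lam))) * h1.2
  · have hAB : aG g lam * bG g lam - 2 * cG g lam
        - Real.sqrt lam * (∫ t in (0:ℝ)..1, (g t) ^ 2) - (Real.sqrt lam) ^ 3 ≠ 0
        ∨ -(bG g lam * (Real.sqrt lam) ^ 3) ≠ 0 := by
      rcases eq_or_ne (bG g lam) 0 with hbb | hbb
      · exact Or.inl fun hA => h1 ⟨hbb, hA⟩
      · exact Or.inr (neg_ne_zero.2 (mul_ne_zero hbb (pow_ne_zero 3 hw)))
    refine Stmt4Aux.master g g' g'' hg1 hg2 hg0 hgnorm lam hlam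
      (aG g lam * bG g lam - 2 * cG g lam
        - Real.sqrt lam * (∫ t in (0:ℝ)..1, (g t) ^ 2) - (Real.sqrt lam) ^ 3)
      (-(bG g lam * (Real.sqrt lam) ^ 3)) hAB ?_ (by ring)
    linear_combination (-((Real.sqrt lam) ^ 3)) * heq
      + (-((Real.sqrt lam) ^ 4 * Real.cos (1 / Real.sqrt lam))) * hw2
end

section
/- Let g₀(t) := (√2/π)·sin(πt) for t ∈ [0,1], and let R₀(s,t) := min(s,t) − g₀(s)g₀(t). If λ > 0 is an eigenvalue of the integral operator A_{R₀} with continuous eigenfunction e, then there exists a constant C ∈ ℝ such that e(t) = C·[ sin(t/√λ) + √λ·π·cos(1/√λ)·sin(πt) ] for all t ∈ [0,1]; equivalently, e(t) = C·[ sin(t/√λ) − (2 sin(1/√λ)/(λπ(π² − 1/λ)))·sin(πt) ] for all t ∈ [0,1]. -/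
open Real Set intervalIntegral

/-- `g₀(t) = (√2/π) sin(π t)`. -/
noncomputable def gZero (t : ℝ) : ℝ := Real.sqrt 2 / Real.pi * Real.sin (Real.pi * t)

/-- `R₀(s,t) = min(s,t) - g₀(s) g₀(t)`. -/
noncomputable def RZero (s t : ℝ) : ℝ := min s t - gZero s * gZero t

private lemma sin_kt_deriv (k x : ℝ) :
    HasDerivAt (fun u => Real.sin (k*u)) (k * Real.cos (k*x)) x := by
  have h1 : HasDerivAt (fun u : ℝ => k*u) k x := by
    simpa using (hasDerivAt_id x).const_mul k
  exact ((Real.hasDerivAt_sin (k*x)).comp x h1).congr_deriv (by ring)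

private lemma cos_kt_deriv (k x : ℝ) :
    HasDerivAt (fun u => Real.cos (k*u)) (-(k * Real.sin (k*x))) x := by
  have h1 : HasDerivAt (fun u : ℝ => k*u) k x := by
    simpa using (hasDerivAt_id x).const_mul k
  exact ((Real.hasDerivAt_cos (k*x)).comp x h1).congr_deriv (by ring)

private lemma eq_on_Icc_of_eq_on_Ioo {φ ψ : ℝ → ℝ} (hφ : Continuous φ) (hψ : Continuous ψ)
    (h : ∀ t ∈ Ioo (0:ℝ) 1, φ t = ψ t) : ∀ t ∈ Icc (0:ℝ) 1, φ t = ψ t := by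
  intro t ht
  have hcl : Icc (0:ℝ) 1 ⊆ closure (Ioo (0:ℝ) 1) := by
    rw [closure_Ioo (by norm_num : (0:ℝ) ≠ 1)]
  have : closure (Ioo (0:ℝ) 1) ⊆ {x | φ x = ψ x} :=
    (isClosed_eq hφ hψ).closure_subset_iff.2 (fun x hx => h x hx)
  exact this (hcl ht)

private lemma wronskian_aux {k : ℝ} (hk : 0 < k) {w w' : ℝ → ℝ}
    (hw : ∀ t, HasDerivAt w (w' t) t)
    (hw' : ∀ t ∈ Icc (0:ℝ) 1, HasDerivAt w' (-(k^2) * w t) t)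
    (hw0 : w 0 = 0) :
    ∀ t ∈ Icc (0:ℝ) 1, w t = (w' 0 / k) * Real.sin (k * t) := by
  have hdw : Differentiable ℝ w := fun t => (hw t).differentiableAt
  have hwc : Continuous w := hdw.continuous
  have hw'c : ContinuousOn w' (Icc 0 1) :=
    fun t ht => (hw' t ht).continuousAt.continuousWithinAt
  set G₁ : ℝ → ℝ := fun t => w' t * Real.sin (k*t) - k * (w t * Real.cos (k*t)) with hG1
  set G₂ : ℝ → ℝ := fun t => w' t * Real.cos (k*t) + k * (w t * Real.sin (k*t)) with hG2
  have hsinc : Continuous (fun t : ℝ => Real.sin (k*t)) :=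
    Real.continuous_sin.comp (continuous_const.mul continuous_id)
  have hcosc : Continuous (fun t : ℝ => Real.cos (k*t)) :=
    Real.continuous_cos.comp (continuous_const.mul continuous_id)
  have hG1c : ContinuousOn G₁ (Icc 0 1) :=
    (hw'c.mul hsinc.continuousOn).sub
      (continuousOn_const.mul ((hwc.continuousOn).mul hcosc.continuousOn))
  have hG2c : ContinuousOn G₂ (Icc 0 1) :=
    (hw'c.mul hcosc.continuousOn).add
      (continuousOn_const.mul ((hwc.continuousOn).mul hsinc.continuousOn))
  have hG1d : ∀ x ∈ Ico (0:ℝ) 1, HasDerivWithinAt G₁ 0 (Ici x) x := by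
    intro x hx
    have h := ((hw' x (Ico_subset_Icc_self hx)).mul (sin_kt_deriv k x)).sub
      (((hw x).mul (cos_kt_deriv k x)).const_mul k)
    have h0 : HasDerivAt G₁ 0 x := by refine h.congr_deriv (Eq.symm ?_); ring
    exact h0.hasDerivWithinAt
  have hG2d : ∀ x ∈ Ico (0:ℝ) 1, HasDerivWithinAt G₂ 0 (Ici x) x := by
    intro x hx
    have h := ((hw' x (Ico_subset_Icc_self hx)).mul (cos_kt_deriv k x)).add
      (((hw x).mul (sin_kt_deriv k x)).const_mul k)
    have h0 : HasDerivAt G₂ 0 x := by refine h.congr_deriv (Eq.symm ?_); ring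
    exact h0.hasDerivWithinAt
  have hc1 := constant_of_has_deriv_right_zero hG1c hG1d
  have hc2 := constant_of_has_deriv_right_zero hG2c hG2d
  intro t ht
  have h1 : w' t * Real.sin (k*t) - k * (w t * Real.cos (k*t)) = 0 := by
    have := hc1 t ht
    simpa [hG1, hw0] using this
  have h2 : w' t * Real.cos (k*t) + k * (w t * Real.sin (k*t)) = w' 0 := by
    have := hc2 t ht
    simpa [hG2, hw0] using this
  have hpyth := Real.sin_sq_add_cos_sq (k*t)
  have hkt : k * w t = Real.sin (k*t) * w' 0 := by
    linear_combination Real.sin (k*t) * h2 - Real.cos (k*t) * h1 - (k * w t) * hpyth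
  field_simp
  linear_combination hkt

private lemma integral_sin_sin {k : ℝ} (hne : Real.pi^2 - k^2 ≠ 0) :
    ∫ s in (0:ℝ)..1, Real.sin (Real.pi*s) * Real.sin (k*s)
      = Real.pi * Real.sin k / (Real.pi^2 - k^2) := by
  have hQ : ∀ s ∈ uIcc (0:ℝ) 1, HasDerivAt
      (fun u => (k * Real.sin (Real.pi*u) * Real.cos (k*u)
        - Real.pi * Real.cos (Real.pi*u) * Real.sin (k*u))/(Real.pi^2-k^2))
      (Real.sin (Real.pi*s) * Real.sin (k*s)) s := by
    intro s _
    have h := ((((sin_kt_deriv Real.pi s).const_mul k).mul (cos_kt_deriv k s)).sub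
      (((cos_kt_deriv Real.pi s).const_mul Real.pi).mul (sin_kt_deriv k s))).div_const
      (Real.pi^2-k^2)
    refine h.congr_deriv (Eq.symm ?_)
    field_simp
    ring
  rw [intervalIntegral.integral_eq_sub_of_hasDerivAt hQ
    (Continuous.intervalIntegrable (by fun_prop) _ _)]
  simp [Real.sin_pi, Real.cos_pi]

private lemma integral_sin_sq' :
    ∫ s in (0:ℝ)..1, Real.sin (Real.pi*s)^2 = 1/2 := by
  have hQ : ∀ s ∈ uIcc (0:ℝ) 1, HasDerivAt
      (fun u => u/2 - Real.sin (2*Real.pi*u)/(4*Real.pi))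
      (Real.sin (Real.pi*s)^2) s := by
    intro s _
    have h := ((hasDerivAt_id s).div_const 2).sub ((sin_kt_deriv (2*Real.pi) s).div_const (4*Real.pi))
    refine h.congr_deriv (Eq.symm ?_)
    have h2 : Real.cos (2*Real.pi*s) = 1 - 2 * Real.sin (Real.pi*s)^2 := by
      have := Real.cos_two_mul (Real.pi*s)
      have hp := Real.sin_sq_add_cos_sq (Real.pi*s)
      rw [mul_assoc]
      linarith [this, hp]
    rw [h2]
    have := Real.pi_ne_zero
    field_simp
    ring
  rw [intervalIntegral.integral_eq_sub_of_hasDerivAt hQ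
    (Continuous.intervalIntegrable (by fun_prop) _ _)]
  simp [mul_one, Real.sin_two_pi]

private lemma integral_s_sin_cos :
    ∫ s in (0:ℝ)..1, s * (Real.sin (Real.pi*s) * Real.cos (Real.pi*s))
      = -1/(4*Real.pi) := by
  have hpi := Real.pi_ne_zero
  have hQ : ∀ s ∈ uIcc (0:ℝ) 1, HasDerivAt
      (fun u => -(u * Real.cos (2*Real.pi*u))/(4*Real.pi) + Real.sin (2*Real.pi*u)/(8*Real.pi^2))
      (s * (Real.sin (Real.pi*s) * Real.cos (Real.pi*s))) s := by
    intro s _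
    have h := (((((hasDerivAt_id s).mul (cos_kt_deriv (2*Real.pi) s)).neg).div_const (4*Real.pi)).add
      ((sin_kt_deriv (2*Real.pi) s).div_const (8*Real.pi^2)))
    refine h.congr_deriv (Eq.symm ?_)
    simp only [id]
    have h2 : Real.sin (2*Real.pi*s) = 2 * Real.sin (Real.pi*s) * Real.cos (Real.pi*s) := by
      rw [mul_assoc]; exact Real.sin_two_mul (Real.pi*s)
    rw [h2]
    field_simp
    ring
  rw [intervalIntegral.integral_eq_sub_of_hasDerivAt hQ
    (Continuous.intervalIntegrable (by fun_prop) _ _)]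
  simp [mul_one, Real.sin_two_pi, Real.cos_two_pi]

/-- If `λ > 0` is an eigenvalue of the integral operator with kernel `R₀` with continuous
eigenfunction `e`, then `e(t) = C (sin(t/√λ) + √λ π cos(1/√λ) sin(π t))`, equivalently
`e(t) = C (sin(t/√λ) - (2 sin(1/√λ) / (λπ(π² - 1/λ))) sin(π t))`, for some constant `C`. -/
theorem stmt7 (lam : ℝ) (hlam : 0 < lam) (e : ℝ → ℝ)
    (he_cont : ContinuousOn e (Set.Icc 0 1))
    (he_ne : ∃ t ∈ Set.Icc (0:ℝ) 1, e t ≠ 0)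
    (heig : ∀ t ∈ Set.Icc (0:ℝ) 1,
      (∫ s in (0:ℝ)..1, RZero t s * e s) = lam * e t) :
    ∃ C : ℝ,
      (∀ t ∈ Set.Icc (0:ℝ) 1,
        e t = C * (Real.sin (t / Real.sqrt lam)
          + Real.sqrt lam * Real.pi * Real.cos (1 / Real.sqrt lam)
              * Real.sin (Real.pi * t))) ∧
      (∀ t ∈ Set.Icc (0:ℝ) 1,
        e t = C * (Real.sin (t / Real.sqrt lam)
          - 2 * Real.sin (1 / Real.sqrt lam)
              / (lam * Real.pi * (Real.pi ^ 2 - 1 / lam)) * Real.sin (Real.pi * t))) := by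
  have hπ : (0:ℝ) < Real.pi := Real.pi_pos
  have hπ0 : Real.pi ≠ 0 := Real.pi_ne_zero
  have hsl : 0 < Real.sqrt lam := Real.sqrt_pos.2 hlam
  have hsq : Real.sqrt lam ^ 2 = lam := Real.sq_sqrt hlam.le
  set k : ℝ := 1 / Real.sqrt lam with hk_def
  have hk : 0 < k := by positivity
  have hslk : Real.sqrt lam = 1/k := by rw [hk_def]; field_simp
  have hlamk : lam * k ^ 2 = 1 := by
    rw [hk_def, ← hsq]; field_simp; rw [Real.sqrt_sq hsl.le]
  clear_value k
  have hgc : Continuous gZero := by unfold gZero; fun_prop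
  set f : ℝ → ℝ := fun t => e (max 0 (min 1 t)) with hf_def
  clear_value f
  have hmem : ∀ x : ℝ, max 0 (min 1 x) ∈ Icc (0:ℝ) 1 :=
    fun x => ⟨le_max_left _ _, max_le zero_le_one (min_le_left _ _)⟩
  have hf_cont : Continuous f := by
    rw [hf_def]
    exact he_cont.comp_continuous (continuous_const.max (continuous_const.min continuous_id)) hmem
  have hfe : ∀ t ∈ Icc (0:ℝ) 1, f t = e t := by
    intro t ht
    rw [hf_def]
    dsimp only
    rw [min_eq_right ht.2, max_eq_right ht.1]
  set a : ℝ := ∫ s in (0:ℝ)..1, gZero s * e s with ha_def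
  clear_value a
  have key : ∀ t ∈ Icc (0:ℝ) 1,
      lam * e t = (∫ s in (0:ℝ)..t, s * f s) + t * (∫ s in t..(1:ℝ), f s) - a * gZero t := by
    intro t ht
    rw [← heig t ht]
    have h1 : (∫ s in (0:ℝ)..1, RZero t s * e s)
        = ∫ s in (0:ℝ)..1, (min t s * f s - gZero t * (gZero s * f s)) := by
      apply intervalIntegral.integral_congr
      intro s hs
      rw [uIcc_of_le zero_le_one] at hs
      simp only [RZero, hfe s hs]
      ring
    have hi1 : IntervalIntegrable (fun s => min t s * f s) MeasureTheory.volume 0 1 :=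
      ((continuous_const.min continuous_id).mul hf_cont).intervalIntegrable _ _
    have hi2 : IntervalIntegrable (fun s => gZero t * (gZero s * f s)) MeasureTheory.volume 0 1 :=
      (continuous_const.mul (hgc.mul hf_cont)).intervalIntegrable _ _
    rw [h1, intervalIntegral.integral_sub hi1 hi2, intervalIntegral.integral_const_mul]
    have haf : (∫ s in (0:ℝ)..1, gZero s * f s) = a := by
      rw [ha_def]
      apply intervalIntegral.integral_congr
      intro s hs
      rw [uIcc_of_le zero_le_one] at hs
      dsimp only
      rw [hfe s hs]
    have hi3 : IntervalIntegrable (fun s => min t s * f s) MeasureTheory.volume 0 t :=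
      ((continuous_const.min continuous_id).mul hf_cont).intervalIntegrable _ _
    have hi4 : IntervalIntegrable (fun s => min t s * f s) MeasureTheory.volume t 1 :=
      ((continuous_const.min continuous_id).mul hf_cont).intervalIntegrable _ _
    have hsplit : (∫ s in (0:ℝ)..1, min t s * f s)
        = (∫ s in (0:ℝ)..t, min t s * f s) + ∫ s in t..(1:ℝ), min t s * f s :=
      (intervalIntegral.integral_add_adjacent_intervals hi3 hi4).symm
    have hA : (∫ s in (0:ℝ)..t, min t s * f s) = ∫ s in (0:ℝ)..t, s * f s := by
      apply intervalIntegral.integral_congr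
      intro s hs
      rw [uIcc_of_le ht.1] at hs
      dsimp only
      rw [min_eq_right hs.2]
    have hB : (∫ s in t..(1:ℝ), min t s * f s) = t * ∫ s in t..(1:ℝ), f s := by
      rw [← intervalIntegral.integral_const_mul]
      apply intervalIntegral.integral_congr
      intro s hs
      rw [uIcc_of_le ht.2] at hs
      dsimp only
      rw [min_eq_left hs.1]
    rw [hsplit, hA, hB, haf]
    ring
  set E : ℝ → ℝ := fun t =>
    ((∫ s in (0:ℝ)..t, s * f s) + t * (∫ s in t..(1:ℝ), f s) - a * gZero t)/lam with hE_def
  clear_value E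
  have hEe : ∀ t ∈ Icc (0:ℝ) 1, E t = e t := by
    intro t ht
    rw [hE_def]
    dsimp only
    rw [← key t ht]
    field_simp
  have hg0 : ∀ t : ℝ, HasDerivAt gZero (Real.sqrt 2 * Real.cos (Real.pi * t)) t := by
    intro t
    have h := (sin_kt_deriv Real.pi t).const_mul (Real.sqrt 2 / Real.pi)
    have hfun : gZero = fun u => Real.sqrt 2 / Real.pi * Real.sin (Real.pi * u) := rfl
    rw [hfun]
    refine h.congr_deriv (Eq.symm ?_)
    field_simp
  have hJint : ∀ t : ℝ, HasDerivAt (fun u => ∫ s in u..(1:ℝ), f s) (-f t) t := fun t =>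
    intervalIntegral.integral_hasDerivAt_left (hf_cont.intervalIntegrable _ _)
      (hf_cont.stronglyMeasurableAtFilter _ _) hf_cont.continuousAt
  have hIint : ∀ t : ℝ, HasDerivAt (fun u => ∫ s in (0:ℝ)..u, s * f s) (t * f t) t := fun t =>
    intervalIntegral.integral_hasDerivAt_right ((continuous_id.mul hf_cont).intervalIntegrable _ _)
      ((continuous_id.mul hf_cont).stronglyMeasurableAtFilter _ _)
      (continuous_id.mul hf_cont).continuousAt
  set E' : ℝ → ℝ := fun t =>
    ((∫ s in t..(1:ℝ), f s) - a * (Real.sqrt 2 * Real.cos (Real.pi*t)))/lam with hE'_def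
  clear_value E'
  have hE' : ∀ t, HasDerivAt E (E' t) t := by
    intro t
    rw [hE_def, hE'_def]
    have h := (((hIint t).add ((hasDerivAt_id t).mul (hJint t))).sub
      ((hg0 t).const_mul a)).div_const lam
    refine h.congr_deriv (Eq.symm ?_)
    simp only [id]
    ring
  have hE'' : ∀ t, HasDerivAt E'
      ((-f t + a * (Real.sqrt 2 * Real.pi * Real.sin (Real.pi*t)))/lam) t := by
    intro t
    rw [hE'_def]
    have hcd : HasDerivAt (fun u => Real.sqrt 2 * Real.cos (Real.pi*u))
        (Real.sqrt 2 * -(Real.pi * Real.sin (Real.pi*t))) t :=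
      (cos_kt_deriv Real.pi t).const_mul (Real.sqrt 2)
    have h := ((hJint t).sub (hcd.const_mul a)).div_const lam
    refine h.congr_deriv (Eq.symm ?_)
    ring
  have hE'c : Continuous E' := by
    have hd : Differentiable ℝ E' := fun t => (hE'' t).differentiableAt
    exact hd.continuous
  have hE0 : E 0 = 0 := by
    rw [hE_def]
    simp [gZero]
  have hfE : ∀ t ∈ Icc (0:ℝ) 1, f t = E t := fun t ht => (hfe t ht).trans (hEe t ht).symm
  have hE'1 : E' 1 = a * Real.sqrt 2 / lam := by
    rw [hE'_def]
    dsimp only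
    rw [intervalIntegral.integral_same, mul_one, Real.cos_pi]
    ring
  have hsqrt2 : Real.sqrt 2 * Real.sqrt 2 = 2 := Real.mul_self_sqrt (by norm_num)
  by_cases hres : k = Real.pi
  · -- resonance : contradiction
    exfalso
    have hlamπ : lam * Real.pi^2 = 1 := by rw [← hres]; exact hlamk
    set d : ℝ := -(a*Real.sqrt 2*Real.pi^2)/2 with hd_def
    have hd : 2*d = -(a*Real.sqrt 2*Real.pi^2) := by rw [hd_def]; ring
    clear_value d
    set w : ℝ → ℝ := fun t => E t - d * (t * Real.cos (Real.pi*t)) with hw_def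
    set w' : ℝ → ℝ := fun t =>
      E' t - d * (1 * Real.cos (Real.pi*t) + t * -(Real.pi * Real.sin (Real.pi*t))) with hw'_def
    clear_value w w'
    have hw : ∀ t, HasDerivAt w (w' t) t := by
      intro t
      rw [hw_def, hw'_def]
      exact (hE' t).sub (((hasDerivAt_id t).mul (cos_kt_deriv Real.pi t)).const_mul d)
    have hw'' : ∀ t ∈ Icc (0:ℝ) 1, HasDerivAt w' (-(Real.pi^2) * w t) t := by
      intro t ht
      rw [hw'_def]
      have hp : HasDerivAt (fun u => d * (1 * Real.cos (Real.pi*u) + u * -(Real.pi * Real.sin (Real.pi*u))))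
          (d * (-(2*Real.pi*Real.sin (Real.pi*t)) - t*Real.pi^2*Real.cos (Real.pi*t))) t := by
        have h1 := (cos_kt_deriv Real.pi t).const_mul 1
        have h2 := (hasDerivAt_id t).mul (((sin_kt_deriv Real.pi t).const_mul Real.pi).neg)
        have h := (h1.add h2).const_mul d
        refine h.congr_deriv (Eq.symm ?_)
        simp only [id, Pi.neg_apply]
        ring
      have h := (hE'' t).sub hp
      refine h.congr_deriv (Eq.symm ?_)
      rw [hfE t ht]
      simp only [hw_def]
      rw [eq_sub_iff_add_eq, eq_div_iff hlam.ne']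
      linear_combination (a*Real.sqrt 2*Real.pi*Real.sin (Real.pi*t) - E t) * hlamπ
        + (-(lam*Real.pi*Real.sin (Real.pi*t))) * hd
    have hw0 : w 0 = 0 := by
      simp only [hw_def]
      rw [hE0]
      simp
    have hwt := wronskian_aux hπ hw hw'' hw0
    set B : ℝ := w' 0 with hB_def
    clear_value B
    have hEform : ∀ x ∈ Icc (0:ℝ) 1,
        E x = (B/Real.pi) * Real.sin (Real.pi*x) + d * (x * Real.cos (Real.pi*x)) := by
      intro x hx
      have h := hwt x hx
      simp only [hw_def] at h
      linarith [h]
    have heform : ∀ x ∈ Icc (0:ℝ) 1,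
        e x = (B/Real.pi) * Real.sin (Real.pi*x) + d * (x * Real.cos (Real.pi*x)) :=
      fun x hx => (hEe x hx).symm.trans (hEform x hx)
    have hψd : ∀ t : ℝ, HasDerivAt
        (fun u => (B/Real.pi) * Real.sin (Real.pi*u) + d * (u * Real.cos (Real.pi*u)))
        ((B/Real.pi) * (Real.pi * Real.cos (Real.pi*t))
          + d * (1 * Real.cos (Real.pi*t) + t * -(Real.pi * Real.sin (Real.pi*t)))) t := fun t =>
      ((sin_kt_deriv Real.pi t).const_mul (B/Real.pi)).add
        (((hasDerivAt_id t).mul (cos_kt_deriv Real.pi t)).const_mul d)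
    have hIoo : ∀ t ∈ Ioo (0:ℝ) 1,
        E' t = (B/Real.pi) * (Real.pi * Real.cos (Real.pi*t))
          + d * (1 * Real.cos (Real.pi*t) + t * -(Real.pi * Real.sin (Real.pi*t))) := by
      intro t ht
      have hnb : Icc (0:ℝ) 1 ∈ nhds t := Icc_mem_nhds ht.1 ht.2
      have heq : E =ᶠ[nhds t]
          (fun u => (B/Real.pi) * Real.sin (Real.pi*u) + d * (u * Real.cos (Real.pi*u))) := by
        filter_upwards [hnb] with x hx
        exact hEform x hx
      exact (hE' t).unique ((hψd t).congr_of_eventuallyEq heq)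
    have hIcc1 := eq_on_Icc_of_eq_on_Ioo hE'c (by fun_prop) hIoo
    have eqIres : a * Real.sqrt 2 = (-B - d) * lam := by
      have h := hIcc1 1 (right_mem_Icc.2 zero_le_one)
      rw [hE'1, div_eq_iff hlam.ne'] at h
      rw [h]
      simp only [mul_one, one_mul, Real.cos_pi, Real.sin_pi]
      have hππ : Real.pi * Real.pi⁻¹ = 1 := mul_inv_cancel₀ hπ0
      linear_combination (-(B*lam)) * hππ
    have eqIIres : a = Real.sqrt 2/Real.pi * ((B/Real.pi) * (1/2) + d * (-1/(4*Real.pi))) := by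
      have hcong : a = ∫ s in (0:ℝ)..1,
          ((Real.sqrt 2/Real.pi*(B/Real.pi)) * Real.sin (Real.pi*s)^2
            + (Real.sqrt 2/Real.pi*d) * (s * (Real.sin (Real.pi*s) * Real.cos (Real.pi*s)))) := by
        conv_lhs => rw [ha_def]
        apply intervalIntegral.integral_congr
        intro s hs
        rw [uIcc_of_le zero_le_one] at hs
        dsimp only
        rw [heform s hs]
        simp only [gZero]
        ring
      rw [hcong, intervalIntegral.integral_add
        (Continuous.intervalIntegrable (by fun_prop) _ _)
        (Continuous.intervalIntegrable (by fun_prop) _ _),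
        intervalIntegral.integral_const_mul, intervalIntegral.integral_const_mul,
        integral_sin_sq', integral_s_sin_cos]
      ring
    have eqIIres2 : 4*Real.pi^2*a = Real.sqrt 2*(2*B - d) := by
      rw [eqIIres]
      field_simp
      ring
    have h5 : 5*Real.pi^2*a = 0 := by
      linear_combination eqIIres2 + (2*Real.sqrt 2*Real.pi^2) * eqIres
        + (-(2*Real.sqrt 2*(B+d))) * hlamπ + (-(3*Real.sqrt 2/2)) * hd
        + (-(a*Real.pi^2/2)) * hsqrt2
    have ha0 : a = 0 := by
      have hne : (5:ℝ)*Real.pi^2 ≠ 0 := by positivity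
      exact (mul_eq_zero.1 h5).resolve_left hne
    have hd0 : d = 0 := by
      rw [ha0] at hd
      linarith [hd]
    have hB0 : B = 0 := by
      rw [ha0, hd0] at eqIres
      simp at eqIres
      rcases eqIres with h | h
      · linarith
      · exact absurd h hlam.ne'
    obtain ⟨t₀, ht₀, hnz⟩ := he_ne
    exact hnz (by rw [heform t₀ ht₀, hB0, hd0]; simp)
  · -- main case
    have hne2 : Real.pi^2 - k^2 ≠ 0 := by
      intro h
      have h1 : (Real.pi - k) * (Real.pi + k) = 0 := by linear_combination h
      rcases mul_eq_zero.1 h1 with h2 | h2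
      · exact hres (by linarith)
      · linarith
    have hden : 1 - lam*Real.pi^2 ≠ 0 := by
      intro h
      apply hne2
      have h2 : lam * Real.pi^2 = lam * k^2 := by linarith [hlamk]
      have h3 := mul_left_cancel₀ hlam.ne' h2
      linarith
    set c : ℝ := a*Real.sqrt 2*Real.pi/(1 - lam*Real.pi^2) with hc_def
    have hc : c * (1 - lam*Real.pi^2) = a*Real.sqrt 2*Real.pi := div_mul_cancel₀ _ hden
    clear_value c
    set w : ℝ → ℝ := fun t => E t - c * Real.sin (Real.pi*t) with hw_def
    set w' : ℝ → ℝ := fun t => E' t - c * (Real.pi * Real.cos (Real.pi*t)) with hw'_def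
    clear_value w w'
    have hw : ∀ t, HasDerivAt w (w' t) t := by
      intro t
      rw [hw_def, hw'_def]
      exact (hE' t).sub ((sin_kt_deriv Real.pi t).const_mul c)
    have hw'' : ∀ t ∈ Icc (0:ℝ) 1, HasDerivAt w' (-(k^2) * w t) t := by
      intro t ht
      rw [hw'_def]
      have hcd : HasDerivAt (fun u => c * (Real.pi * Real.cos (Real.pi*u)))
          (c * (Real.pi * -(Real.pi * Real.sin (Real.pi*t)))) t :=
        ((cos_kt_deriv Real.pi t).const_mul Real.pi).const_mul c
      have h := (hE'' t).sub hcd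
      refine h.congr_deriv (Eq.symm ?_)
      rw [hfE t ht]
      simp only [hw_def]
      rw [eq_sub_iff_add_eq, eq_div_iff hlam.ne']
      linear_combination (Real.sin (Real.pi*t)) * hc
        + (c * Real.sin (Real.pi*t) - E t) * hlamk
    have hw0 : w 0 = 0 := by
      simp only [hw_def]
      rw [hE0]
      simp
    have hwt := wronskian_aux hk hw hw'' hw0
    set B : ℝ := w' 0 with hB_def
    clear_value B
    have hEform : ∀ x ∈ Icc (0:ℝ) 1,
        E x = (B/k) * Real.sin (k*x) + c * Real.sin (Real.pi*x) := by
      intro x hx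
      have h := hwt x hx
      simp only [hw_def] at h
      linarith [h]
    have heform : ∀ x ∈ Icc (0:ℝ) 1,
        e x = (B/k) * Real.sin (k*x) + c * Real.sin (Real.pi*x) :=
      fun x hx => (hEe x hx).symm.trans (hEform x hx)
    have hψd : ∀ t : ℝ, HasDerivAt (fun u => (B/k) * Real.sin (k*u) + c * Real.sin (Real.pi*u))
        ((B/k) * (k * Real.cos (k*t)) + c * (Real.pi * Real.cos (Real.pi*t))) t := fun t =>
      ((sin_kt_deriv k t).const_mul (B/k)).add ((sin_kt_deriv Real.pi t).const_mul c)
    have hIoo : ∀ t ∈ Ioo (0:ℝ) 1,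
        E' t = (B/k) * (k * Real.cos (k*t)) + c * (Real.pi * Real.cos (Real.pi*t)) := by
      intro t ht
      have hnb : Icc (0:ℝ) 1 ∈ nhds t := Icc_mem_nhds ht.1 ht.2
      have heq : E =ᶠ[nhds t] (fun u => (B/k) * Real.sin (k*u) + c * Real.sin (Real.pi*u)) := by
        filter_upwards [hnb] with x hx
        exact hEform x hx
      exact (hE' t).unique ((hψd t).congr_of_eventuallyEq heq)
    have hIcc1 := eq_on_Icc_of_eq_on_Ioo hE'c (by fun_prop) hIoo
    have eqI' : a * Real.sqrt 2 = (B * Real.cos k - c * Real.pi) * lam := by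
      have h := hIcc1 1 (right_mem_Icc.2 zero_le_one)
      rw [hE'1, div_eq_iff hlam.ne'] at h
      rw [h]
      simp only [mul_one, Real.cos_pi]
      field_simp
      ring
    have eqII : a = Real.sqrt 2/Real.pi * ((B/k) * (Real.pi * Real.sin k/(Real.pi^2-k^2))
        + c * (1/2)) := by
      have hcong : a = ∫ s in (0:ℝ)..1,
          ((Real.sqrt 2/Real.pi*(B/k)) * (Real.sin (Real.pi*s)*Real.sin (k*s))
            + (Real.sqrt 2/Real.pi*c) * Real.sin (Real.pi*s)^2) := by
        conv_lhs => rw [ha_def]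
        apply intervalIntegral.integral_congr
        intro s hs
        rw [uIcc_of_le zero_le_one] at hs
        dsimp only
        rw [heform s hs]
        simp only [gZero]
        ring
      rw [hcong, intervalIntegral.integral_add
        (Continuous.intervalIntegrable (by fun_prop) _ _)
        (Continuous.intervalIntegrable (by fun_prop) _ _),
        intervalIntegral.integral_const_mul, intervalIntegral.integral_const_mul,
        integral_sin_sin hne2, integral_sin_sq']
      ring
    have eqII2 : 2*Real.pi*k*(Real.pi^2-k^2)*a
        = Real.sqrt 2 * (2*B*Real.pi*Real.sin k + c*k*(Real.pi^2-k^2)) := by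
      rw [eqII]
      field_simp
    have hck : c * k^2 = Real.pi * B * Real.cos k := by
      linear_combination (k^2) * hc + (k^2*Real.pi) * eqI'
        + (Real.pi*B*Real.cos k) * hlamk
    have hck2 : c * Real.pi^2 * (Real.pi^2 - k^2) = -(2*B*k*Real.sin k) * Real.pi := by
      linear_combination (-(k^2*(Real.pi^2-k^2))) * hc
        + (-(k*Real.sqrt 2/2)) * eqII2
        + (-(k/2)*(2*B*Real.pi*Real.sin k + c*k*(Real.pi^2-k^2))) * hsqrt2
        + (-(c*Real.pi^2*(Real.pi^2-k^2))) * hlamk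
    have hck2b : c * Real.pi * (Real.pi^2-k^2) = -(2*B*k*Real.sin k) := by
      apply mul_right_cancel₀ hπ0
      linear_combination hck2
    have h1lam : 1/lam = k^2 := by
      rw [eq_comm, eq_div_iff hlam.ne']
      linarith [hlamk]
    refine ⟨B/k, ?_, ?_⟩
    · intro t ht
      rw [heform t ht]
      have ht1 : t / Real.sqrt lam = k * t := by rw [hslk, one_div, div_eq_mul_inv, inv_inv, mul_comm]
      rw [ht1, hslk]
      field_simp
      linear_combination (Real.sin (t*Real.pi)) * hck
    · intro t ht
      rw [heform t ht]
      have ht1 : t / Real.sqrt lam = k * t := by rw [hslk, one_div, div_eq_mul_inv, inv_inv, mul_comm]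
      rw [ht1, h1lam]
      field_simp
      linear_combination (k*lam*Real.sin (t*Real.pi)) * hck2b
        + (-(2*B*Real.sin k*Real.sin (t*Real.pi))) * hlamk
end

section
/- Let R₁(s,t) := min(s,t) − s·t for s,t ∈ [0,1] (the covariance of the Wiener bridge Y_t = B_t − t·B₁). Then a real number λ > 0 is an eigenvalue of the integral operator A_{R₁} if and only if sin(1/√λ) = 0, i.e., if and only if λ = 1/(k²π²) for some positive integer k. -/
open Real Set intervalIntegral

/-- `R₁(s,t) = min(s,t) - s t`, the covariance of the Wiener bridge. -/
noncomputable def ROne (s t : ℝ) : ℝ := min s t - s * t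

private lemma bwd (lam : ℝ) (hlam : 0 < lam) (hsin : Real.sin (1 / Real.sqrt lam) = 0) :
    ∃ e : ℝ → ℝ, ContinuousOn e (Set.Icc 0 1) ∧
      (∃ t ∈ Set.Icc (0:ℝ) 1, e t ≠ 0) ∧
      ∀ t ∈ Set.Icc (0:ℝ) 1,
        (∫ s in (0:ℝ)..1, ROne t s * e s) = lam * e t := by
  set r := Real.sqrt lam with hrdef
  have hr : 0 < r := Real.sqrt_pos.2 hlam
  have hr0 : r ≠ 0 := hr.ne'
  have hr2 : r ^ 2 = lam := Real.sq_sqrt hlam.le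
  refine ⟨fun s => Real.sin (s / r), ?_, ?_, ?_⟩
  · exact (Real.continuous_sin.comp (continuous_id.div_const r)).continuousOn
  · -- nonvanishing point
    obtain ⟨n, hn⟩ := Real.sin_eq_zero_iff.1 hsin
    have hrpos : (0:ℝ) < 1 / r := by positivity
    have hnpos : 0 < n := by
      by_contra hle
      push_neg at hle
      have : ((n:ℝ)) ≤ 0 := by exact_mod_cast hle
      nlinarith [Real.pi_pos, hn]
    have hnR : (0:ℝ) < (n:ℝ) := by exact_mod_cast hnpos
    refine ⟨1 / (2 * (n:ℝ)), ⟨by positivity, ?_⟩, ?_⟩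
    · rw [div_le_one (by positivity)]
      have : (1:ℝ) ≤ (n:ℝ) := by exact_mod_cast hnpos
      linarith
    · have harg : (1 / (2 * (n:ℝ))) / r = π / 2 := by
        rw [div_div, div_eq_div_iff (by positivity) (by norm_num)]
        have h1 : (n:ℝ) * π * r = r * (1/r) := by rw [← hn]; ring
        rw [one_div, mul_inv_cancel₀ hr0] at h1
        nlinarith [h1]
      show Real.sin ((1 / (2 * (n:ℝ))) / r) ≠ 0
      rw [harg, Real.sin_pi_div_two]
      norm_num
  · intro t ht
    obtain ⟨ht0, ht1⟩ := ht
    have hc1 : Continuous fun s => ROne t s * Real.sin (s / r) := by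
      unfold ROne
      fun_prop
    have hi1 : IntervalIntegrable (fun s => ROne t s * Real.sin (s / r)) MeasureTheory.volume 0 t :=
      hc1.intervalIntegrable _ _
    have hi2 : IntervalIntegrable (fun s => ROne t s * Real.sin (s / r)) MeasureTheory.volume t 1 :=
      hc1.intervalIntegrable _ _
    have hsplit : (∫ s in (0:ℝ)..1, ROne t s * Real.sin (s / r))
        = (∫ s in (0:ℝ)..t, ROne t s * Real.sin (s / r))
          + ∫ s in t..(1:ℝ), ROne t s * Real.sin (s / r) :=
      (integral_add_adjacent_intervals hi1 hi2).symm
    have he1 : (∫ s in (0:ℝ)..t, ROne t s * Real.sin (s / r))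
        = ∫ s in (0:ℝ)..t, (1 - t) * s * Real.sin (s / r) := by
      apply integral_congr
      intro s hs
      rw [uIcc_of_le ht0] at hs
      show (min t s - t * s) * Real.sin (s / r) = _
      rw [min_eq_right hs.2]
      ring
    have he2 : (∫ s in t..(1:ℝ), ROne t s * Real.sin (s / r))
        = ∫ s in t..(1:ℝ), t * (1 - s) * Real.sin (s / r) := by
      apply integral_congr
      intro s hs
      rw [uIcc_of_le ht1] at hs
      show (min t s - t * s) * Real.sin (s / r) = _
      rw [min_eq_left hs.1]
      ring
    -- antiderivatives
    set H1 : ℝ → ℝ := fun s => (1 - t) * (r ^ 2 * Real.sin (s / r) - r * (s * Real.cos (s / r)))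
      with hH1def
    set H2 : ℝ → ℝ := fun s => t * (-(r * Real.cos (s / r)) - r ^ 2 * Real.sin (s / r)
      + r * (s * Real.cos (s / r))) with hH2def
    have hds : ∀ s : ℝ, HasDerivAt (fun x => Real.sin (x / r)) (Real.cos (s / r) * (1 / r)) s :=
      fun s => by have := (Real.hasDerivAt_sin (s / r)).comp s ((hasDerivAt_id s).div_const r); exact this
    have hdc : ∀ s : ℝ, HasDerivAt (fun x => Real.cos (x / r)) (-Real.sin (s / r) * (1 / r)) s :=
      fun s => by have := (Real.hasDerivAt_cos (s / r)).comp s ((hasDerivAt_id s).div_const r); exact this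
    have hdH1 : ∀ s : ℝ, HasDerivAt H1 ((1 - t) * s * Real.sin (s / r)) s := by
      intro s
      have h := (((hds s).const_mul (r ^ 2)).sub
        (((hasDerivAt_id s).mul (hdc s)).const_mul r)).const_mul (1 - t)
      refine h.congr_deriv ?_
      simp only [id_eq]
      field_simp
      ring
    have hdH2 : ∀ s : ℝ, HasDerivAt H2 (t * (1 - s) * Real.sin (s / r)) s := by
      intro s
      have h := ((((hdc s).const_mul r).neg.sub ((hds s).const_mul (r ^ 2))).add
        (((hasDerivAt_id s).mul (hdc s)).const_mul r)).const_mul t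
      refine h.congr_deriv ?_
      simp only [id_eq]
      field_simp
      ring
    have hint1 : (∫ s in (0:ℝ)..t, (1 - t) * s * Real.sin (s / r)) = H1 t - H1 0 :=
      integral_eq_sub_of_hasDerivAt (fun s _ => hdH1 s) (by apply Continuous.intervalIntegrable; fun_prop)
    have hint2 : (∫ s in t..(1:ℝ), t * (1 - s) * Real.sin (s / r)) = H2 1 - H2 t :=
      integral_eq_sub_of_hasDerivAt (fun s _ => hdH2 s) (by apply Continuous.intervalIntegrable; fun_prop)
    rw [hsplit, he1, he2, hint1, hint2, hH1def, hH2def]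
    simp only [zero_div, Real.sin_zero, Real.cos_zero, hsin, ← hr2]
    ring

private lemma fwd (lam : ℝ) (hlam : 0 < lam) (e : ℝ → ℝ) (he : Continuous e)
    (hne : ∃ t ∈ Set.Icc (0:ℝ) 1, e t ≠ 0)
    (heig : ∀ t ∈ Set.Icc (0:ℝ) 1, (∫ s in (0:ℝ)..1, ROne t s * e s) = lam * e t) :
    Real.sin (1 / Real.sqrt lam) = 0 := by
  have hlam0 : lam ≠ 0 := hlam.ne'
  set F : ℝ → ℝ := fun t => ∫ s in (0:ℝ)..t, e s with hFdef
  set G : ℝ → ℝ := fun t => ∫ s in (0:ℝ)..t, s * e s with hGdef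
  have hse : Continuous fun s : ℝ => s * e s := continuous_id.mul he
  -- Step 1: the integral equation in terms of F and G
  have hc1 : ∀ t ∈ Set.Icc (0:ℝ) 1,
      lam * e t = G t + t * F 1 - t * F t - t * G 1 := by
    intro t ht
    obtain ⟨ht0, ht1⟩ := ht
    have hker : Continuous fun s => ROne t s * e s := by unfold ROne; fun_prop
    have hsplit : (∫ s in (0:ℝ)..1, ROne t s * e s)
        = (∫ s in (0:ℝ)..t, ROne t s * e s) + ∫ s in t..(1:ℝ), ROne t s * e s :=
      (integral_add_adjacent_intervals (hker.intervalIntegrable _ _)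
        (hker.intervalIntegrable _ _)).symm
    have he1 : (∫ s in (0:ℝ)..t, ROne t s * e s)
        = ∫ s in (0:ℝ)..t, (s * e s - t * (s * e s)) := by
      apply integral_congr
      intro s hs
      rw [uIcc_of_le ht0] at hs
      show (min t s - t * s) * e s = _
      rw [min_eq_right hs.2]; ring
    have he2 : (∫ s in t..(1:ℝ), ROne t s * e s)
        = ∫ s in t..(1:ℝ), (t * e s - t * (s * e s)) := by
      apply integral_congr
      intro s hs
      rw [uIcc_of_le ht1] at hs
      show (min t s - t * s) * e s = _
      rw [min_eq_left hs.1]; ring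
    have hv1 : (∫ s in (0:ℝ)..t, (s * e s - t * (s * e s))) = G t - t * G t := by
      rw [integral_sub (g := fun s => t * (s * e s)) (hse.intervalIntegrable _ _)
        ((continuous_const.mul hse).intervalIntegrable _ _), intervalIntegral.integral_const_mul]
    have hFt1 : (∫ s in t..(1:ℝ), e s) = F 1 - F t := by
      rw [hFdef]
      exact (integral_interval_sub_left (he.intervalIntegrable _ _)
        (he.intervalIntegrable _ _)).symm
    have hGt1 : (∫ s in t..(1:ℝ), s * e s) = G 1 - G t := by
      rw [hGdef]
      exact (integral_interval_sub_left (hse.intervalIntegrable _ _)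
        (hse.intervalIntegrable _ _)).symm
    have hv2 : (∫ s in t..(1:ℝ), (t * e s - t * (s * e s)))
        = t * (F 1 - F t) - t * (G 1 - G t) := by
      rw [integral_sub (f := fun s => t * e s) (g := fun s => t * (s * e s)) ((continuous_const.mul he).intervalIntegrable _ _)
        ((continuous_const.mul hse).intervalIntegrable _ _), intervalIntegral.integral_const_mul,
        intervalIntegral.integral_const_mul, hFt1, hGt1]
    rw [← heig t ⟨ht0, ht1⟩, hsplit, he1, he2, hv1, hv2]
    ring
  -- derivatives of F and G
  have hF : ∀ t : ℝ, HasDerivAt F (e t) t := fun t =>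
    integral_hasDerivAt_right (he.intervalIntegrable _ _)
      he.stronglyMeasurable.stronglyMeasurableAtFilter he.continuousAt
  have hG : ∀ t : ℝ, HasDerivAt G (t * e t) t := fun t =>
    integral_hasDerivAt_right (hse.intervalIntegrable _ _)
      hse.stronglyMeasurable.stronglyMeasurableAtFilter hse.continuousAt
  set φ : ℝ → ℝ := fun t => (G t + t * F 1 - t * F t - t * G 1) / lam with hφdef
  set φ₁ : ℝ → ℝ := fun t => (F 1 - F t - G 1) / lam with hφ₁def
  have hφ : ∀ t : ℝ, HasDerivAt φ (φ₁ t) t := by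
    intro t
    have h := ((((hG t).add ((hasDerivAt_id t).mul_const (F 1))).sub
      ((hasDerivAt_id t).mul (hF t))).sub ((hasDerivAt_id t).mul_const (G 1))).div_const lam
    refine h.congr_deriv ?_
    simp only [id_eq]
    ring
  have hφ₁ : ∀ t : ℝ, HasDerivAt φ₁ (-(e t) / lam) t := by
    intro t
    have h := (((hasDerivAt_const t (F 1)).sub (hF t)).sub
      (hasDerivAt_const t (G 1))).div_const lam
    refine h.congr_deriv ?_
    ring
  have heφ : ∀ t ∈ Set.Icc (0:ℝ) 1, e t = φ t := by
    intro t ht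
    rw [hφdef]
    field_simp
    linarith [hc1 t ht]
  set r := Real.sqrt lam with hrdef
  have hr : 0 < r := Real.sqrt_pos.2 hlam
  have hr0 : r ≠ 0 := hr.ne'
  have hr2 : r ^ 2 = lam := Real.sq_sqrt hlam.le
  set A : ℝ := r * φ₁ 0 with hAdef
  set h : ℝ → ℝ := fun t => φ t - A * Real.sin (t / r) with hhdef
  set h1 : ℝ → ℝ := fun t => φ₁ t - A * (Real.cos (t / r) * (1 / r)) with hh1def
  have hds : ∀ s : ℝ, HasDerivAt (fun x => Real.sin (x / r)) (Real.cos (s / r) * (1 / r)) s :=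
    fun s => by have := (Real.hasDerivAt_sin (s / r)).comp s ((hasDerivAt_id s).div_const r); exact this
  have hdc : ∀ s : ℝ, HasDerivAt (fun x => Real.cos (x / r)) (-Real.sin (s / r) * (1 / r)) s :=
    fun s => by have := (Real.hasDerivAt_cos (s / r)).comp s ((hasDerivAt_id s).div_const r); exact this
  have hdh : ∀ t : ℝ, HasDerivAt h (h1 t) t := fun t =>
    (hφ t).sub ((hds t).const_mul A)
  have hdh1 : ∀ t : ℝ, HasDerivAt h1 (-(e t) / lam + A * (Real.sin (t / r) * (1 / r) * (1 / r))) t := by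
    intro t
    have h' := (hφ₁ t).sub (((hdc t).mul_const (1 / r)).const_mul A)
    refine h'.congr_deriv ?_
    ring
  set E : ℝ → ℝ := fun t => lam * (h1 t) ^ 2 + (h t) ^ 2 with hEdef
  have hdE : ∀ t ∈ Set.Icc (0:ℝ) 1, HasDerivAt E 0 t := by
    intro t ht
    have hkey : -(e t) / lam + A * (Real.sin (t / r) * (1 / r) * (1 / r)) = -(h t) / lam := by
      show -(e t) / lam + A * (Real.sin (t / r) * (1 / r) * (1 / r))
        = -(φ t - A * Real.sin (t / r)) / lam
      rw [heφ t ht, ← hr2]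
      field_simp
      ring
    have hd := ((((hdh1 t).pow 2).const_mul lam).add ((hdh t).pow 2))
    rw [hkey] at hd
    refine hd.congr_deriv ?_
    field_simp
    ring
  have hEconst : ∀ t ∈ Set.Icc (0:ℝ) 1, E t = E 0 := by
    apply constant_of_has_deriv_right_zero
    · intro t ht
      exact ((hdE t ht).continuousAt).continuousWithinAt
    · intro t ht
      exact (hdE t (Ico_subset_Icc_self ht)).hasDerivWithinAt
  have he0 : e 0 = 0 := by
    have := hc1 0 (by constructor <;> norm_num)
    have hG0 : G 0 = 0 := integral_same
    rw [hG0] at this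
    have : lam * e 0 = 0 := by linarith
    exact (mul_eq_zero.1 this).resolve_left hlam0
  have hh0 : h 0 = 0 := by
    rw [hhdef]
    simp only [zero_div, Real.sin_zero, mul_zero, sub_zero]
    rw [← heφ 0 (by constructor <;> norm_num), he0]
  have hh10 : h1 0 = 0 := by
    rw [hh1def]
    simp only [zero_div, Real.cos_zero, one_mul, hAdef]
    field_simp
    ring
  have hE0 : E 0 = 0 := by
    show lam * h1 0 ^ 2 + h 0 ^ 2 = 0
    rw [hh0, hh10]; ring
  have hzero : ∀ t ∈ Set.Icc (0:ℝ) 1, h t = 0 := by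
    intro t ht
    have hEt : lam * h1 t ^ 2 + h t ^ 2 = 0 := (hEconst t ht).trans hE0
    have hsq : h t ^ 2 = 0 := by nlinarith [sq_nonneg (h1 t), sq_nonneg (h t)]
    exact pow_eq_zero_iff (two_ne_zero) |>.1 hsq
  have heA : ∀ t ∈ Set.Icc (0:ℝ) 1, e t = A * Real.sin (t / r) := by
    intro t ht
    have hz : φ t - A * Real.sin (t / r) = 0 := hzero t ht
    linarith [heφ t ht, hz]
  have hA0 : A ≠ 0 := by
    intro hA
    obtain ⟨t0, ht0, hnz⟩ := hne
    apply hnz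
    rw [heA t0 ht0, hA, zero_mul]
  have he1z : e 1 = 0 := by
    have := hc1 1 (by constructor <;> norm_num)
    have : lam * e 1 = 0 := by linarith
    exact (mul_eq_zero.1 this).resolve_left hlam0
  have := heA 1 (by constructor <;> norm_num)
  rw [he1z] at this
  have : A * Real.sin (1 / r) = 0 := this.symm
  exact (mul_eq_zero.1 this).resolve_left hA0

private lemma iff2 (lam : ℝ) (hlam : 0 < lam) :
    Real.sin (1 / Real.sqrt lam) = 0
      ↔ ∃ k : ℕ, 0 < k ∧ lam = 1 / ((k : ℝ) ^ 2 * Real.pi ^ 2) := by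
  have hr : 0 < Real.sqrt lam := Real.sqrt_pos.2 hlam
  constructor
  · intro hs
    obtain ⟨n, hn⟩ := Real.sin_eq_zero_iff.1 hs
    have hrpos : (0:ℝ) < 1 / Real.sqrt lam := by positivity
    have hnpos : 0 < n := by
      by_contra hle
      push_neg at hle
      have : ((n:ℝ)) ≤ 0 := by exact_mod_cast hle
      nlinarith [Real.pi_pos, hn]
    have hnR : (0:ℝ) < (n:ℝ) := by exact_mod_cast hnpos
    refine ⟨n.toNat, by omega, ?_⟩
    have hcast : ((n.toNat : ℕ) : ℝ) = (n:ℝ) := by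
      have := Int.toNat_of_nonneg hnpos.le
      exact_mod_cast congrArg (fun m : ℤ => (m : ℝ)) this
    have h1 : Real.sqrt lam * ((n:ℝ) * π) = 1 := by
      rw [hn]
      field_simp
    have h2 : lam * ((n:ℝ) ^ 2 * π ^ 2) = 1 := by
      have hsq := Real.sq_sqrt hlam.le
      have hsq1 : (Real.sqrt lam * ((n:ℝ) * π)) ^ 2 = 1 := by rw [h1]; norm_num
      linear_combination hsq1 - (n:ℝ) ^ 2 * π ^ 2 * hsq
    rw [eq_div_iff (by rw [hcast]; positivity), hcast]
    exact h2
  · rintro ⟨k, hk, hl⟩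
    have hkR : (0:ℝ) < (k:ℝ) := by exact_mod_cast hk
    have hsqrt : Real.sqrt lam = 1 / ((k:ℝ) * π) := by
      rw [hl, show (1:ℝ) / ((k : ℝ) ^ 2 * Real.pi ^ 2) = (1 / ((k:ℝ) * π)) ^ 2 by
        field_simp]
      exact Real.sqrt_sq (by positivity)
    rw [hsqrt, one_div_one_div]
    exact Real.sin_nat_mul_pi k

private lemma existsIff (lam : ℝ) (hlam : 0 < lam) :
    (∃ e : ℝ → ℝ, ContinuousOn e (Set.Icc 0 1) ∧
        (∃ t ∈ Set.Icc (0:ℝ) 1, e t ≠ 0) ∧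
        ∀ t ∈ Set.Icc (0:ℝ) 1,
          (∫ s in (0:ℝ)..1, ROne t s * e s) = lam * e t)
      ↔ Real.sin (1 / Real.sqrt lam) = 0 := by
  constructor
  · rintro ⟨e, hc, hne, heig⟩
    set g : ℝ → ℝ := fun t => max 0 (min t 1) with hgdef
    have hgmem : ∀ x : ℝ, g x ∈ Set.Icc (0:ℝ) 1 :=
      fun x => ⟨le_max_left _ _, max_le (by norm_num) (min_le_right _ _)⟩
    have hgeq : ∀ x ∈ Set.Icc (0:ℝ) 1, g x = x := by
      intro x hx
      rw [hgdef]
      simp only [min_eq_left hx.2, max_eq_right hx.1]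
    set e' : ℝ → ℝ := fun t => e (g t) with he'def
    have he'c : Continuous e' := by
      apply hc.comp_continuous
      · exact continuous_const.max (continuous_id.min continuous_const)
      · exact hgmem
    have he'eq : ∀ x ∈ Set.Icc (0:ℝ) 1, e' x = e x := by
      intro x hx
      show e (g x) = e x
      rw [hgeq x hx]
    apply fwd lam hlam e' he'c
    · obtain ⟨t, ht, hnz⟩ := hne
      exact ⟨t, ht, by rw [he'eq t ht]; exact hnz⟩
    · intro t ht
      have hcongr : (∫ s in (0:ℝ)..1, ROne t s * e' s)
          = ∫ s in (0:ℝ)..1, ROne t s * e s := by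
        apply intervalIntegral.integral_congr
        intro s hs
        rw [Set.uIcc_of_le (by norm_num : (0:ℝ) ≤ 1)] at hs
        show ROne t s * e' s = ROne t s * e s
        rw [he'eq s hs]
      rw [hcongr, heig t ht, he'eq t ht]
  · intro hs
    exact bwd lam hlam hs

/-- A real `λ > 0` is an eigenvalue of the integral operator with kernel `R₁` if and only
if `sin(1/√λ) = 0`, i.e., if and only if `λ = 1/(k²π²)` for some positive integer `k`. -/
theorem stmt9 (lam : ℝ) (hlam : 0 < lam) :
    ((∃ e : ℝ → ℝ, ContinuousOn e (Set.Icc 0 1) ∧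
        (∃ t ∈ Set.Icc (0:ℝ) 1, e t ≠ 0) ∧
        ∀ t ∈ Set.Icc (0:ℝ) 1,
          (∫ s in (0:ℝ)..1, ROne t s * e s) = lam * e t)
      ↔ Real.sin (1 / Real.sqrt lam) = 0) ∧
    ((∃ e : ℝ → ℝ, ContinuousOn e (Set.Icc 0 1) ∧
        (∃ t ∈ Set.Icc (0:ℝ) 1, e t ≠ 0) ∧
        ∀ t ∈ Set.Icc (0:ℝ) 1,
          (∫ s in (0:ℝ)..1, ROne t s * e s) = lam * e t)
      ↔ ∃ k : ℕ, 0 < k ∧ lam = 1 / ((k : ℝ) ^ 2 * Real.pi ^ 2)) :=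
  ⟨existsIff lam hlam, (existsIff lam hlam).trans (iff2 lam hlam)⟩
end

section
/- Let g₀(t) := (√2/π)·sin(πt) for t ∈ [0,1], and let R₀(s,t) := min(s,t) − g₀(s)g₀(t). Then λ = 1/π² is not an eigenvalue of the integral operator A_{R₀}: there is no continuous function e : [0,1] → ℝ, not identically zero, with ∫₀¹ R₀(t,s) e(s) ds = (1/π²)·e(t) for all t ∈ [0,1]. -/
open Real Set intervalIntegral

lemma hasDerivAt_sinpi (t : ℝ) : HasDerivAt (fun s : ℝ => Real.sin (π * s)) (Real.cos (π * t) * π) t := by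
  have h : HasDerivAt (fun s : ℝ => π * s) π t := by
    simpa using (hasDerivAt_id t).const_mul π
  exact h.sin

lemma hasDerivAt_cospi (t : ℝ) : HasDerivAt (fun s : ℝ => Real.cos (π * s)) (-Real.sin (π * t) * π) t := by
  have h : HasDerivAt (fun s : ℝ => π * s) π t := by
    simpa using (hasDerivAt_id t).const_mul π
  exact h.cos

lemma hasDerivAt_psi (α β t : ℝ) :
    HasDerivAt (fun s : ℝ => α * Real.sin (π * s) + β * (s * Real.cos (π * s)))
      (α * (Real.cos (π * t) * π) + β * (Real.cos (π * t) + t * (-Real.sin (π * t) * π))) t := by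
  have h2 : HasDerivAt (fun s : ℝ => s * Real.cos (π * s))
      (1 * Real.cos (π * t) + t * (-Real.sin (π * t) * π)) t :=
    (hasDerivAt_id t).mul (hasDerivAt_cospi t)
  have := ((hasDerivAt_sinpi t).const_mul α).add (h2.const_mul β)
  refine this.congr_deriv ?_
  ring

lemma hasDerivAt_Psi (E1 c α β t : ℝ) (hβ : β = -(Real.sqrt 2 * π ^ 2 * c) / 2) :
    HasDerivAt (fun s : ℝ => E1 - c * (Real.sqrt 2 * Real.cos (π * s)) -
        (α * (Real.cos (π * s) * π) + β * (Real.cos (π * s) + s * (-Real.sin (π * s) * π))) / π ^ 2)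
      (α * Real.sin (π * t) + β * (t * Real.cos (π * t))) t := by
  have hπ : (π : ℝ) ≠ 0 := Real.pi_ne_zero
  have hD : HasDerivAt (fun s : ℝ => α * (Real.cos (π * s) * π) + β * (Real.cos (π * s) + s * (-Real.sin (π * s) * π)))
      (α * ((-Real.sin (π * t) * π) * π) +
        β * ((-Real.sin (π * t) * π) + (1 * (-Real.sin (π * t) * π) + t * (-(Real.cos (π * t) * π) * π)))) t := by
    have h1 : HasDerivAt (fun s : ℝ => Real.cos (π * s) * π) ((-Real.sin (π * t) * π) * π) t :=
      (hasDerivAt_cospi t).mul_const π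
    have h2 : HasDerivAt (fun s : ℝ => -Real.sin (π * s) * π) (-(Real.cos (π * t) * π) * π) t :=
      ((hasDerivAt_sinpi t).neg).mul_const π
    have h3 : HasDerivAt (fun s : ℝ => s * (-Real.sin (π * s) * π))
        (1 * (-Real.sin (π * t) * π) + t * (-(Real.cos (π * t) * π) * π)) t :=
      (hasDerivAt_id t).mul h2
    exact (h1.const_mul α).add (((hasDerivAt_cospi t).add h3).const_mul β)
  have hcos : HasDerivAt (fun s : ℝ => c * (Real.sqrt 2 * Real.cos (π * s)))
      (c * (Real.sqrt 2 * (-Real.sin (π * t) * π))) t :=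
    ((hasDerivAt_cospi t).const_mul (Real.sqrt 2)).const_mul c
  have := ((hasDerivAt_const t E1).sub hcos).sub (hD.div_const (π ^ 2))
  refine this.congr_deriv ?_
  rw [hβ]
  field_simp
  ring

lemma hasDerivAt_G (α β t : ℝ) :
    HasDerivAt (fun s : ℝ => Real.sqrt 2 / π * (α * (s / 2 - Real.sin (2 * (π * s)) / (4 * π)) +
      β * (-(s * Real.cos (2 * (π * s))) / (4 * π) + Real.sin (2 * (π * s)) / (8 * π ^ 2))))
      (Real.sqrt 2 / π * Real.sin (π * t) * (α * Real.sin (π * t) + β * (t * Real.cos (π * t)))) t := by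
  have hπ : (π : ℝ) ≠ 0 := Real.pi_ne_zero
  have hlin : HasDerivAt (fun s : ℝ => 2 * (π * s)) (2 * π) t := by
    simpa [mul_assoc] using (hasDerivAt_id t).const_mul (2 * π)
  have hsin : HasDerivAt (fun s : ℝ => Real.sin (2 * (π * s))) (Real.cos (2 * (π * t)) * (2 * π)) t :=
    hlin.sin
  have hcos : HasDerivAt (fun s : ℝ => Real.cos (2 * (π * s))) (-Real.sin (2 * (π * t)) * (2 * π)) t :=
    hlin.cos
  have h1 : HasDerivAt (fun s : ℝ => s / 2 - Real.sin (2 * (π * s)) / (4 * π))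
      (1 / 2 - Real.cos (2 * (π * t)) * (2 * π) / (4 * π)) t :=
    ((hasDerivAt_id t).div_const 2).sub (hsin.div_const (4 * π))
  have h2 : HasDerivAt (fun s : ℝ => -(s * Real.cos (2 * (π * s))) / (4 * π) + Real.sin (2 * (π * s)) / (8 * π ^ 2))
      (-(1 * Real.cos (2 * (π * t)) + t * (-Real.sin (2 * (π * t)) * (2 * π))) / (4 * π)
        + Real.cos (2 * (π * t)) * (2 * π) / (8 * π ^ 2)) t :=
    ((((hasDerivAt_id t).mul hcos).neg).div_const (4 * π)).add (hsin.div_const (8 * π ^ 2))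
  have h := (((h1.const_mul α).add (h2.const_mul β)).const_mul (Real.sqrt 2 / π))
  refine h.congr_deriv ?_
  have hc2 : Real.cos (2 * (π * t)) = 1 - 2 * Real.sin (π * t) ^ 2 := by
    rw [Real.cos_two_mul]
    nlinarith [Real.sin_sq_add_cos_sq (π * t)]
  rw [Real.sin_two_mul, hc2]
  field_simp
  ring

/-- `λ = 1/π²` is not an eigenvalue of the integral operator with kernel `R₀`. -/
theorem stmt13 :
    ¬ ∃ e : ℝ → ℝ, ContinuousOn e (Set.Icc 0 1) ∧
      (∃ t ∈ Set.Icc (0:ℝ) 1, e t ≠ 0) ∧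
      ∀ t ∈ Set.Icc (0:ℝ) 1,
        (∫ s in (0:ℝ)..1, RZero t s * e s) = 1 / Real.pi ^ 2 * e t := by
  rintro ⟨e, he, ⟨t₀, ht₀, ht₀ne⟩, heq⟩
  have hπ : (π : ℝ) ≠ 0 := Real.pi_ne_zero
  have hπ2 : (π : ℝ) ^ 2 ≠ 0 := pow_ne_zero _ hπ
  -- continuous extension of e to ℝ
  set f : ℝ → ℝ := fun t => e (max 0 (min 1 t)) with hfdef
  have hfe : ∀ t ∈ Icc (0:ℝ) 1, f t = e t := by
    intro t ht
    simp only [hfdef, min_eq_right ht.2, max_eq_right ht.1]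
  have hfc : Continuous f := by
    apply he.comp_continuous (continuous_const.max (continuous_const.min continuous_id))
    intro x
    exact ⟨le_max_left _ _, max_le zero_le_one (min_le_left _ _)⟩
  have hgc : Continuous gZero := by
    unfold gZero
    exact continuous_const.mul (Real.continuous_sin.comp (continuous_const.mul continuous_id))
  -- transfer the eigen-equation to f
  have heqf : ∀ t ∈ Icc (0:ℝ) 1, (∫ s in (0:ℝ)..1, RZero t s * f s) = 1 / π ^ 2 * f t := by
    intro t ht
    rw [hfe t ht, ← heq t ht]
    apply intervalIntegral.integral_congr
    intro s hs
    rw [uIcc_of_le zero_le_one] at hs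
    show RZero t s * f s = RZero t s * e s
    rw [hfe s hs]
  set E : ℝ → ℝ := fun t => ∫ s in (0:ℝ)..t, f s with hEdef
  have hE : ∀ t, HasDerivAt E (f t) t := fun t => (hfc.integral_hasStrictDerivAt 0 t).hasDerivAt
  have hEc : Continuous E := continuous_iff_continuousAt.2 fun t => (hE t).continuousAt
  set c : ℝ := ∫ s in (0:ℝ)..1, gZero s * f s with hcdef
  set E1 : ℝ := E 1 with hE1def
  -- key integral identity
  have hkey : ∀ t ∈ Icc (0:ℝ) 1,
      f t = π ^ 2 * (t * E1 - (∫ s in (0:ℝ)..t, E s) - c * gZero t) := by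
    intro t ht
    have hint : ∀ a b : ℝ, IntervalIntegrable (fun s => min t s * f s) MeasureTheory.volume a b :=
      fun a b => ((continuous_const.min continuous_id).mul hfc).intervalIntegrable a b
    have hsplit : (∫ s in (0:ℝ)..1, min t s * f s) =
        (∫ s in (0:ℝ)..t, s * f s) + t * ∫ s in t..1, f s := by
      rw [← intervalIntegral.integral_add_adjacent_intervals (hint 0 t) (hint t 1)]
      congr 1
      · apply intervalIntegral.integral_congr
        intro s hs
        rw [uIcc_of_le ht.1] at hs
        simp only [min_eq_right hs.2]
      · rw [← intervalIntegral.integral_const_mul]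
        apply intervalIntegral.integral_congr
        intro s hs
        rw [uIcc_of_le ht.2] at hs
        simp only [min_eq_left hs.1]
    have htail : (∫ s in t..1, f s) = E1 - E t :=
      (intervalIntegral.integral_interval_sub_left (hfc.intervalIntegrable 0 1)
        (hfc.intervalIntegrable 0 t)).symm
    have hparts : (∫ s in (0:ℝ)..t, s * f s) = t * E t - (0:ℝ) * E 0 - ∫ s in (0:ℝ)..t, E s := by
      have := intervalIntegral.integral_mul_deriv_eq_deriv_mul
        (u := fun s : ℝ => s) (u' := fun _ : ℝ => (1:ℝ)) (v := E) (v' := f)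
        (a := 0) (b := t)
        (fun x _ => hasDerivAt_id x) (fun x _ => hE x)
        intervalIntegrable_const (hfc.intervalIntegrable 0 t)
      simpa using this
    have hRsplit : (∫ s in (0:ℝ)..1, RZero t s * f s) =
        (∫ s in (0:ℝ)..1, min t s * f s) - gZero t * c := by
      have hre : ∀ s, RZero t s * f s = min t s * f s - gZero t * (gZero s * f s) := by
        intro s; unfold RZero; ring
      simp only [hre]
      rw [intervalIntegral.integral_sub (hint 0 1)
        (show IntervalIntegrable (fun s => gZero t * (gZero s * f s)) MeasureTheory.volume 0 1 from
          (continuous_const.mul (hgc.mul hfc)).intervalIntegrable 0 1),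
        intervalIntegral.integral_const_mul, hcdef]
    have h := heqf t ht
    rw [hRsplit, hsplit, htail, hparts] at h
    have hE0 : E 0 = 0 := intervalIntegral.integral_same
    rw [hE0] at h
    field_simp at h ⊢
    linarith
  -- the smooth representative φ of f on [0,1]
  set φ : ℝ → ℝ := fun t => π ^ 2 * (t * E1 - (∫ s in (0:ℝ)..t, E s) - c * gZero t) with hφdef
  have hφd : ∀ t, HasDerivAt φ
      (π ^ 2 * (E1 - E t - c * (Real.sqrt 2 * Real.cos (π * t)))) t := by
    intro t
    have h1 : HasDerivAt (fun u : ℝ => ∫ s in (0:ℝ)..u, E s) (E t) t :=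
      (hEc.integral_hasStrictDerivAt 0 t).hasDerivAt
    have hg : HasDerivAt gZero (Real.sqrt 2 / π * (Real.cos (π * t) * π)) t := by
      unfold gZero
      exact (hasDerivAt_sinpi t).const_mul (Real.sqrt 2 / π)
    have := ((((hasDerivAt_id t).mul_const E1).sub h1).sub (hg.const_mul c)).const_mul (π ^ 2)
    refine this.congr_deriv ?_
    field_simp
  -- parameters of the explicit solution
  set β : ℝ := -(Real.sqrt 2 * π ^ 2 * c) / 2 with hβdef
  set α : ℝ := π * E1 - Real.sqrt 2 * π * c / 2 with hαdef
  set ψ : ℝ → ℝ := fun t => α * Real.sin (π * t) + β * (t * Real.cos (π * t)) with hψdef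
  set Ψ : ℝ → ℝ := fun t => E1 - c * (Real.sqrt 2 * Real.cos (π * t)) -
      (α * (Real.cos (π * t) * π) + β * (Real.cos (π * t) + t * (-Real.sin (π * t) * π))) / π ^ 2
    with hΨdef
  -- the ODE
  set v : ℝ → ℝ × ℝ → ℝ × ℝ := fun t p =>
      (π ^ 2 * (E1 - p.2 - c * (Real.sqrt 2 * Real.cos (π * t))), p.1) with hvdef
  have hK : ∀ t, LipschitzWith (Real.toNNReal (π ^ 2)) (v t) := by
    intro t
    rw [lipschitzWith_iff_dist_le_mul]
    intro p q
    rw [Prod.dist_eq, Prod.dist_eq]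
    have hcoe : (Real.toNNReal (π ^ 2) : ℝ) = π ^ 2 := Real.coe_toNNReal _ (sq_nonneg π)
    rw [hcoe]
    have hπ1 : (1:ℝ) ≤ π ^ 2 := by nlinarith [Real.pi_gt_three]
    simp only [hvdef, Real.dist_eq]
    apply max_le
    · have h1 : π ^ 2 * (E1 - p.2 - c * (Real.sqrt 2 * Real.cos (π * t))) -
          π ^ 2 * (E1 - q.2 - c * (Real.sqrt 2 * Real.cos (π * t))) = π ^ 2 * (q.2 - p.2) := by
        ring
      rw [h1, abs_mul, abs_of_nonneg (sq_nonneg π)]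
      have : |q.2 - p.2| = |p.2 - q.2| := abs_sub_comm _ _
      rw [this]
      exact mul_le_mul_of_nonneg_left (le_max_right _ _) (sq_nonneg π)
    · calc |p.1 - q.1| ≤ max |p.1 - q.1| |p.2 - q.2| := le_max_left _ _
        _ = 1 * max |p.1 - q.1| |p.2 - q.2| := (one_mul _).symm
        _ ≤ π ^ 2 * max |p.1 - q.1| |p.2 - q.2| := by
            apply mul_le_mul_of_nonneg_right hπ1
            exact le_max_of_le_left (abs_nonneg _)
  -- the two solutions
  set F₁ : ℝ → ℝ × ℝ := fun t => (φ t, E t) with hF₁def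
  set F₂ : ℝ → ℝ × ℝ := fun t => (ψ t, Ψ t) with hF₂def
  have hF₁' : ∀ t ∈ Ico (0:ℝ) 1, HasDerivWithinAt F₁ (v t (F₁ t)) (Ici t) t := by
    intro t ht
    have hft : f t = φ t := hkey t ⟨ht.1, ht.2.le⟩
    have hd := ((hφd t).prodMk (hE t)).hasDerivWithinAt (s := Ici t)
    have : v t (F₁ t) = (π ^ 2 * (E1 - E t - c * (Real.sqrt 2 * Real.cos (π * t))), f t) := by
      simp only [hvdef, hF₁def, hft]
    rw [this]
    exact hd
  have hΨd : ∀ t, HasDerivAt Ψ (ψ t) t := fun t => hasDerivAt_Psi E1 c α β t hβdef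
  have hF₂' : ∀ t ∈ Ico (0:ℝ) 1, HasDerivWithinAt F₂ (v t (F₂ t)) (Ici t) t := by
    intro t _
    have hd := ((hasDerivAt_psi α β t).prodMk (hΨd t)).hasDerivWithinAt (s := Ici t)
    have : v t (F₂ t) = (α * (Real.cos (π * t) * π) +
        β * (Real.cos (π * t) + t * (-Real.sin (π * t) * π)), ψ t) := by
      simp only [hvdef, hF₂def, hΨdef]
      congr 1
      field_simp
      ring
    rw [this]
    exact hd
  have hF₁c : ContinuousOn F₁ (Icc (0:ℝ) 1) := by
    apply Continuous.continuousOn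
    exact (continuous_iff_continuousAt.2 fun t => (hφd t).continuousAt).prodMk hEc
  have hF₂c : ContinuousOn F₂ (Icc (0:ℝ) 1) := by
    apply Continuous.continuousOn
    exact (continuous_iff_continuousAt.2 fun t => (hasDerivAt_psi α β t).continuousAt).prodMk
      (continuous_iff_continuousAt.2 fun t => (hΨd t).continuousAt)
  have hinit : F₁ 0 = F₂ 0 := by
    have hφ0 : φ 0 = 0 := by
      simp [hφdef, gZero]
    have hE0 : E 0 = 0 := intervalIntegral.integral_same
    have hψ0 : ψ 0 = 0 := by simp [hψdef]
    have hΨ0 : Ψ 0 = 0 := by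
      simp only [hΨdef, mul_zero, Real.cos_zero, Real.sin_zero, zero_mul, mul_one]
      rw [hαdef, hβdef]
      field_simp
      ring
    simp only [hF₁def, hF₂def, hφ0, hE0, hψ0, hΨ0]
  have heqF : EqOn F₁ F₂ (Icc (0:ℝ) 1) :=
    ODE_solution_unique hK hF₁c hF₁' hF₂c hF₂' hinit
  -- consequence: f = ψ and E = Ψ on [0,1]
  have hfψ : ∀ t ∈ Icc (0:ℝ) 1, f t = ψ t := by
    intro t ht
    have := heqF ht
    have h1 : φ t = ψ t := congrArg Prod.fst this
    rw [hkey t ht]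
    simpa [hφdef] using h1
  have hEΨ : ∀ t ∈ Icc (0:ℝ) 1, E t = Ψ t := by
    intro t ht
    exact congrArg Prod.snd (heqF ht)
  -- first constraint : E1 = 0
  have hE1zero : E1 = 0 := by
    have h := hEΨ 1 ⟨zero_le_one, le_refl 1⟩
    rw [← hE1def] at h
    simp only [hΨdef, mul_one, Real.cos_pi, Real.sin_pi] at h
    rw [hαdef, hβdef] at h
    field_simp at h
    nlinarith [h, pow_pos Real.pi_pos 2]
  -- second constraint : c = 0
  have hcψ : c = Real.sqrt 2 / π * (α / 2 - β / (4 * π)) := by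
    have hcong : c = ∫ s in (0:ℝ)..1, Real.sqrt 2 / π * Real.sin (π * s) *
        (α * Real.sin (π * s) + β * (s * Real.cos (π * s))) := by
      rw [hcdef]
      apply intervalIntegral.integral_congr
      intro s hs
      rw [uIcc_of_le zero_le_one] at hs
      show gZero s * f s = _
      rw [hfψ s hs]
      simp only [hψdef, gZero]
    rw [hcong]
    rw [intervalIntegral.integral_eq_sub_of_hasDerivAt (f := fun s : ℝ =>
        Real.sqrt 2 / π * (α * (s / 2 - Real.sin (2 * (π * s)) / (4 * π)) +
          β * (-(s * Real.cos (2 * (π * s))) / (4 * π) + Real.sin (2 * (π * s)) / (8 * π ^ 2))))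
      (fun t _ => hasDerivAt_G α β t)]
    · have hs2 : Real.sin (2 * (π * 1)) = 0 := by
        rw [mul_one, Real.sin_two_pi]
      have hc2 : Real.cos (2 * (π * 1)) = 1 := by
        rw [mul_one, Real.cos_two_pi]
      rw [hs2, hc2, show (2:ℝ) * (π * 0) = 0 by ring, Real.sin_zero]
      field_simp
      ring
    · apply Continuous.intervalIntegrable
      apply Continuous.mul
      · exact continuous_const.mul (Real.continuous_sin.comp (continuous_const.mul continuous_id))
      · apply Continuous.add
        · exact continuous_const.mul (Real.continuous_sin.comp (continuous_const.mul continuous_id))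
        · exact continuous_const.mul (continuous_id.mul (Real.continuous_cos.comp (continuous_const.mul continuous_id)))
  have hczero : c = 0 := by
    have h2 : Real.sqrt 2 * Real.sqrt 2 = 2 := Real.mul_self_sqrt (by norm_num)
    rw [hαdef, hβdef, hE1zero] at hcψ
    field_simp at hcψ
    have h3 : c * (40 * π ^ 2) = 0 := by linear_combination (2 * π ^ 2) * hcψ + (-(4:ℝ) * π ^ 2 * c) * h2
    rcases mul_eq_zero.mp h3 with h | h
    · exact h
    · exact absurd h (by positivity)
  -- conclude
  have hαzero : α = 0 := by rw [hαdef, hE1zero, hczero]; ring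
  have hβzero : β = 0 := by rw [hβdef, hczero]; ring
  have : e t₀ = 0 := by
    rw [← hfe t₀ ht₀, hfψ t₀ ht₀, hψdef]
    simp [hαzero, hβzero]
  exact ht₀ne this
end

section
/- The integral operator A_R has infinitely many positive eigenvalues: the set of real numbers λ > 0 for which there exists a continuous function e : [0,1] → ℝ, not identically zero, with ∫₀¹ R(t,s) e(s) ds = λ e(t) for all t ∈ [0,1], is infinite. -/
open Real Set intervalIntegral MeasureTheory

noncomputable def myC (G : ℝ → ℝ) (ω t : ℝ) : ℝ := ∫ s in (0:ℝ)..t, Real.cos (ω * s) * G s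
noncomputable def myS (G : ℝ → ℝ) (ω t : ℝ) : ℝ := ∫ s in (0:ℝ)..t, Real.sin (ω * s) * G s

noncomputable def efn (G : ℝ → ℝ) (ω A B t : ℝ) : ℝ :=
  A * Real.sin (ω * t) +
    B * (-(G t) + ω * Real.sin (ω * t) * myC G ω t - ω * Real.cos (ω * t) * myS G ω t)

noncomputable def e1fn (G g' : ℝ → ℝ) (ω A B t : ℝ) : ℝ :=
  A * ω * Real.cos (ω * t) +
    B * (-(g' t) + ω ^ 2 * (Real.cos (ω * t) * myC G ω t + Real.sin (ω * t) * myS G ω t))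

noncomputable def e2fn (G g'' : ℝ → ℝ) (ω A B t : ℝ) : ℝ :=
  -(A * ω ^ 2 * Real.sin (ω * t)) +
    B * (-(g'' t) + ω ^ 3 * (Real.cos (ω * t) * myS G ω t - Real.sin (ω * t) * myC G ω t)
      + ω ^ 2 * G t)

section derivs

variable {G g' g'' : ℝ → ℝ} {ω A B t : ℝ}

lemma hasDerivAt_myC (hG : Continuous G) (ω t : ℝ) :
    HasDerivAt (myC G ω) (Real.cos (ω * t) * G t) t :=
  ((Real.continuous_cos.comp (continuous_const.mul continuous_id)).mul hG).integral_hasStrictDerivAt 0 t |>.hasDerivAt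

lemma hasDerivAt_myS (hG : Continuous G) (ω t : ℝ) :
    HasDerivAt (myS G ω) (Real.sin (ω * t) * G t) t :=
  ((Real.continuous_sin.comp (continuous_const.mul continuous_id)).mul hG).integral_hasStrictDerivAt 0 t |>.hasDerivAt

lemma continuous_myC (hG : Continuous G) (ω : ℝ) : Continuous (myC G ω) :=
  continuous_iff_continuousAt.2 fun t => (hasDerivAt_myC hG ω t).continuousAt

lemma continuous_myS (hG : Continuous G) (ω : ℝ) : Continuous (myS G ω) :=
  continuous_iff_continuousAt.2 fun t => (hasDerivAt_myS hG ω t).continuousAt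

lemma hasDerivAt_sin_omega (ω t : ℝ) :
    HasDerivAt (fun t : ℝ => Real.sin (ω * t)) (Real.cos (ω * t) * ω) t := by
  have h : HasDerivAt (fun t : ℝ => ω * t) ω t := by
    simpa using (hasDerivAt_id t).const_mul ω
  exact (Real.hasDerivAt_sin (ω * t)).comp t h

lemma hasDerivAt_cos_omega (ω t : ℝ) :
    HasDerivAt (fun t : ℝ => Real.cos (ω * t)) (-Real.sin (ω * t) * ω) t := by
  have h : HasDerivAt (fun t : ℝ => ω * t) ω t := by
    simpa using (hasDerivAt_id t).const_mul ω
  exact (Real.hasDerivAt_cos (ω * t)).comp t h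

lemma efn_hasDeriv (hG : Continuous G)
    (hg1 : HasDerivWithinAt G (g' t) (Icc 0 1) t) :
    HasDerivWithinAt (efn G ω A B) (e1fn G g' ω A B t) (Icc 0 1) t := by
  have hC := (hasDerivAt_myC hG ω t).hasDerivWithinAt (s := Icc 0 1)
  have hS := (hasDerivAt_myS hG ω t).hasDerivWithinAt (s := Icc 0 1)
  have hsin := (hasDerivAt_sin_omega ω t).hasDerivWithinAt (s := Icc 0 1)
  have hcos := (hasDerivAt_cos_omega ω t).hasDerivWithinAt (s := Icc 0 1)
  have h := ((hsin.const_mul A).add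
    ((hg1.neg.add (((hsin.const_mul ω).mul hC))).sub ((hcos.const_mul ω).mul hS) |>.const_mul B))
  refine h.congr_deriv (Eq.symm ?_)
  unfold e1fn
  ring

lemma e1fn_hasDeriv (hG : Continuous G)
    (hg2 : HasDerivWithinAt g' (g'' t) (Icc 0 1) t) :
    HasDerivWithinAt (e1fn G g' ω A B) (e2fn G g'' ω A B t) (Icc 0 1) t := by
  have hC := (hasDerivAt_myC hG ω t).hasDerivWithinAt (s := Icc 0 1)
  have hS := (hasDerivAt_myS hG ω t).hasDerivWithinAt (s := Icc 0 1)
  have hsin := (hasDerivAt_sin_omega ω t).hasDerivWithinAt (s := Icc 0 1)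
  have hcos := (hasDerivAt_cos_omega ω t).hasDerivWithinAt (s := Icc 0 1)
  have h := ((hcos.const_mul (A * ω)).add
    ((hg2.neg.add (((hcos.mul hC).add (hsin.mul hS)).const_mul (ω ^ 2))).const_mul B))
  refine h.congr_deriv (Eq.symm ?_)
  unfold e2fn
  have hid := Real.sin_sq_add_cos_sq (ω * t)
  linear_combination (-(B * ω ^ 2 * G t)) * hid

end derivs

section key

variable {G g' g'' : ℝ → ℝ} {ω A B : ℝ}

lemma continuous_efn (hG : Continuous G) : Continuous (efn G ω A B) := by
  unfold efn
  exact (continuous_const.mul (Real.continuous_sin.comp (continuous_const.mul continuous_id))).add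
    (continuous_const.mul (((hG.neg).add
      ((continuous_const.mul (Real.continuous_sin.comp (continuous_const.mul continuous_id))).mul
        (continuous_myC hG ω))).sub
      ((continuous_const.mul (Real.continuous_cos.comp (continuous_const.mul continuous_id))).mul
        (continuous_myS hG ω))))

lemma eigen_eq (hG : Continuous G)
    (hg1 : ∀ t ∈ Icc (0:ℝ) 1, HasDerivWithinAt G (g' t) (Icc 0 1) t)
    (hg2 : ∀ t ∈ Icc (0:ℝ) 1, HasDerivWithinAt g' (g'' t) (Icc 0 1) t)
    (hG0 : G 0 = 0) (hω : 0 < ω)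
    (cond2 : A * Real.cos ω + B * (ω * (Real.cos ω * myC G ω 1 + Real.sin ω * myS G ω 1)) = 0)
    (cond1 : (∫ s in (0:ℝ)..1, G s * efn G ω A B s) = B / ω ^ 2) :
    ∀ t ∈ Icc (0:ℝ) 1,
      (∫ s in (0:ℝ)..1, (min t s - G t * G s) * efn G ω A B s)
        = (1/ω^2) * efn G ω A B t := by
  have hωne : ω ≠ 0 := hω.ne'
  set e := efn G ω A B with he
  have hec : Continuous e := continuous_efn hG
  set Ψ : ℝ → ℝ := fun t => (∫ s in (0:ℝ)..1, e s) - (∫ s in (0:ℝ)..t, e s)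
      - (B/ω^2) * g' t - (1/ω^2) * e1fn G g' ω A B t with hΨ
  have hΨderiv : ∀ t ∈ Icc (0:ℝ) 1, HasDerivWithinAt Ψ 0 (Icc 0 1) t := by
    intro t ht
    have h1 : HasDerivWithinAt (fun u : ℝ => ∫ s in (0:ℝ)..u, e s) (e t) (Icc 0 1) t :=
      (hec.integral_hasStrictDerivAt 0 t).hasDerivAt.hasDerivWithinAt
    have h := (((hasDerivWithinAt_const t (Icc (0:ℝ) 1) (∫ s in (0:ℝ)..1, e s)).sub h1).sub
        ((hg2 t ht).const_mul (B/ω^2))).sub ((e1fn_hasDeriv (ω := ω) (A := A) (B := B) hG (hg2 t ht)).const_mul (1/ω^2))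
    refine h.congr_deriv (Eq.symm ?_)
    rw [he]
    unfold e2fn efn
    field_simp
    ring
  have hΨcont : ContinuousOn Ψ (Icc (0:ℝ) 1) := fun t ht => (hΨderiv t ht).continuousWithinAt
  have hΨ1 : Ψ 1 = 0 := by
    rw [hΨ]
    simp only [intervalIntegral.integral_same, sub_self]
    unfold e1fn
    simp only [mul_one]
    field_simp
    linear_combination (-ω) * cond2
  have hΨzero : ∀ t ∈ Icc (0:ℝ) 1, Ψ t = 0 := by
    have hconst : ∀ t ∈ Icc (0:ℝ) 1, Ψ t = Ψ 0 := by
      apply constant_of_has_deriv_right_zero hΨcont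
      intro x hx
      exact (hΨderiv x (mem_Icc_of_Ico hx)).mono_of_mem_nhdsWithin (Icc_mem_nhdsGE_of_mem hx)
    intro t ht
    rw [hconst t ht, ← hconst 1 (by norm_num : (1:ℝ) ∈ Icc (0:ℝ) 1), hΨ1]
  set Φ : ℝ → ℝ := fun t => (∫ s in (0:ℝ)..t, s * e s)
      + t * ((∫ s in (0:ℝ)..1, e s) - ∫ s in (0:ℝ)..t, e s)
      - G t * (B/ω^2) - (1/ω^2) * e t with hΦ
  have hΦ0 : Φ 0 = 0 := by
    rw [hΦ]
    simp only [intervalIntegral.integral_same, zero_mul, sub_zero, add_zero, zero_add]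
    rw [he]
    unfold efn myC myS
    simp [hG0]
  have hΦderiv : ∀ t ∈ Icc (0:ℝ) 1, HasDerivWithinAt Φ 0 (Icc 0 1) t := by
    intro t ht
    have h1 : HasDerivWithinAt (fun u : ℝ => ∫ s in (0:ℝ)..u, s * e s) (t * e t) (Icc 0 1) t :=
      ((continuous_id.mul hec).integral_hasStrictDerivAt 0 t).hasDerivAt.hasDerivWithinAt
    have h2 : HasDerivWithinAt (fun u : ℝ => ∫ s in (0:ℝ)..u, e s) (e t) (Icc 0 1) t :=
      (hec.integral_hasStrictDerivAt 0 t).hasDerivAt.hasDerivWithinAt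
    have h := (((h1.add ((hasDerivWithinAt_id t (Icc (0:ℝ) 1)).mul
        ((hasDerivWithinAt_const t (Icc (0:ℝ) 1) (∫ s in (0:ℝ)..1, e s)).sub h2))).sub
        ((hg1 t ht).mul_const (B/ω^2))).sub ((efn_hasDeriv (ω := ω) (A := A) (B := B) hG (hg1 t ht)).const_mul (1/ω^2)))
    simp only [id_eq] at h
    refine h.congr_deriv (Eq.symm ?_)
    simp only [Pi.sub_apply]
    have hz := hΨzero t ht
    rw [hΨ] at hz
    linear_combination -hz
  have hΦzero : ∀ t ∈ Icc (0:ℝ) 1, Φ t = 0 := by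
    have hconst : ∀ t ∈ Icc (0:ℝ) 1, Φ t = Φ 0 := by
      apply constant_of_has_deriv_right_zero (fun t ht => (hΦderiv t ht).continuousWithinAt)
      intro x hx
      exact (hΦderiv x (mem_Icc_of_Ico hx)).mono_of_mem_nhdsWithin (Icc_mem_nhdsGE_of_mem hx)
    intro t ht
    rw [hconst t ht, hΦ0]
  intro t ht
  obtain ⟨ht0, ht1⟩ := ht
  have hint1 : IntervalIntegrable (fun s => min t s * e s) MeasureTheory.volume 0 1 :=
    ((continuous_const.min continuous_id).mul hec).intervalIntegrable _ _
  have hint2 : IntervalIntegrable (fun s => G t * (G s * e s)) MeasureTheory.volume 0 1 :=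
    (continuous_const.mul (hG.mul hec)).intervalIntegrable _ _
  have split : (∫ s in (0:ℝ)..1, (min t s - G t * G s) * e s)
      = (∫ s in (0:ℝ)..1, min t s * e s) - G t * ∫ s in (0:ℝ)..1, G s * e s := by
    rw [← intervalIntegral.integral_const_mul, ← intervalIntegral.integral_sub hint1 hint2]
    apply intervalIntegral.integral_congr
    intro s _
    ring
  have splitmin : (∫ s in (0:ℝ)..1, min t s * e s)
      = (∫ s in (0:ℝ)..t, min t s * e s) + ∫ s in t..1, min t s * e s :=
    (intervalIntegral.integral_add_adjacent_intervals
      (((continuous_const.min continuous_id).mul hec).intervalIntegrable _ _)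
      (((continuous_const.min continuous_id).mul hec).intervalIntegrable _ _)).symm
  have part1 : (∫ s in (0:ℝ)..t, min t s * e s) = ∫ s in (0:ℝ)..t, s * e s := by
    apply intervalIntegral.integral_congr
    intro s hs
    rw [uIcc_of_le ht0] at hs
    show min t s * e s = s * e s
    rw [min_eq_right hs.2]
  have part2 : (∫ s in t..1, min t s * e s) = t * ∫ s in t..1, e s := by
    rw [← intervalIntegral.integral_const_mul]
    apply intervalIntegral.integral_congr
    intro s hs
    rw [uIcc_of_le ht1] at hs
    show min t s * e s = t * e s
    rw [min_eq_left hs.1]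
  have part3 : (∫ s in t..1, e s) = (∫ s in (0:ℝ)..1, e s) - ∫ s in (0:ℝ)..t, e s :=
    (intervalIntegral.integral_interval_sub_left (hec.intervalIntegrable _ _)
      (hec.intervalIntegrable _ _)).symm
  rw [split, splitmin, part1, part2, part3, cond1]
  have hz := hΦzero t ⟨ht0, ht1⟩
  rw [hΦ] at hz
  linear_combination hz

end key
section construct

variable {G g' g'' : ℝ → ℝ}

lemma two_by_two (a b c d : ℝ) (h : a * d - b * c = 0) :
    ∃ x y : ℝ, ¬(x = 0 ∧ y = 0) ∧ a * x + b * y = 0 ∧ c * x + d * y = 0 := by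
  by_cases hcd : c = 0 ∧ d = 0
  · by_cases hab : a = 0 ∧ b = 0
    · exact ⟨1, 0, by norm_num, by simp [hab.1], by simp [hcd.1]⟩
    · refine ⟨-b, a, ?_, by ring, by simp [hcd.1, hcd.2]⟩
      intro ⟨h1, h2⟩
      exact hab ⟨h2, by simpa using h1⟩
  · refine ⟨d, -c, ?_, by linear_combination h, by ring⟩
    intro ⟨h1, h2⟩
    exact hcd ⟨by simpa using h2, h1⟩

noncomputable def Qfn (G : ℝ → ℝ) (ω : ℝ) : ℝ := ∫ t in (0:ℝ)..1, G t * efn G ω 0 1 t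

noncomputable def Dfn (G : ℝ → ℝ) (ω : ℝ) : ℝ :=
  Real.cos ω * (Qfn G ω - 1/ω^2)
    - (ω * (Real.cos ω * myC G ω 1 + Real.sin ω * myS G ω 1)) * myS G ω 1

lemma integral_G_efn (hG : Continuous G) (ω A B : ℝ) :
    (∫ s in (0:ℝ)..1, G s * efn G ω A B s)
      = A * (myS G ω 1) + B * Qfn G ω := by
  have h1 : IntervalIntegrable (fun s => A * (Real.sin (ω*s) * G s))
      MeasureTheory.volume 0 1 := by
    apply Continuous.intervalIntegrable; fun_prop
  have h2 : IntervalIntegrable (fun s => B * (G s * efn G ω 0 1 s))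
      MeasureTheory.volume 0 1 :=
    ((continuous_const.mul (hG.mul (continuous_efn (ω := ω) (A := (0:ℝ)) (B := (1:ℝ)) hG)))).intervalIntegrable _ _
  have key : (∫ s in (0:ℝ)..1, G s * efn G ω A B s)
      = ∫ s in (0:ℝ)..1, (A * (Real.sin (ω*s) * G s) + B * (G s * efn G ω 0 1 s)) := by
    apply intervalIntegral.integral_congr
    intro s _
    unfold efn
    ring
  rw [key, intervalIntegral.integral_add h1 h2, intervalIntegral.integral_const_mul,
    intervalIntegral.integral_const_mul]
  rfl

lemma continuous_myC2 (hG : Continuous G) :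
    Continuous fun p : ℝ × ℝ => myC G p.1 p.2 := by
  unfold myC
  exact intervalIntegral.continuous_parametric_primitive_of_continuous
    (f := fun ω s => Real.cos (ω * s) * G s)
    (((Real.continuous_cos.comp (continuous_fst.mul continuous_snd)).mul (hG.comp continuous_snd)))

lemma continuous_myS2 (hG : Continuous G) :
    Continuous fun p : ℝ × ℝ => myS G p.1 p.2 := by
  unfold myS
  exact intervalIntegral.continuous_parametric_primitive_of_continuous
    (f := fun ω s => Real.sin (ω * s) * G s)
    (((Real.continuous_sin.comp (continuous_fst.mul continuous_snd)).mul (hG.comp continuous_snd)))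

lemma continuous_myC1 (hG : Continuous G) : Continuous fun ω : ℝ => myC G ω 1 := by
  have h := (continuous_myC2 hG).comp
    (continuous_id.prodMk continuous_const : Continuous fun ω : ℝ => (ω, (1:ℝ)))
  exact h

lemma continuous_myS1 (hG : Continuous G) : Continuous fun ω : ℝ => myS G ω 1 := by
  have h := (continuous_myS2 hG).comp
    (continuous_id.prodMk continuous_const : Continuous fun ω : ℝ => (ω, (1:ℝ)))
  exact h

lemma continuous_Qfn (hG : Continuous G) : Continuous (Qfn G) := by
  have hsin : Continuous fun p : ℝ × ℝ => Real.sin (p.1 * p.2) :=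
    Real.continuous_sin.comp (continuous_fst.mul continuous_snd)
  have hcos : Continuous fun p : ℝ × ℝ => Real.cos (p.1 * p.2) :=
    Real.continuous_cos.comp (continuous_fst.mul continuous_snd)
  have huncurry : Continuous (Function.uncurry fun (ω t : ℝ) => G t * efn G ω 0 1 t) := by
    have hfe : (Function.uncurry fun (ω t : ℝ) => G t * efn G ω 0 1 t)
        = fun p : ℝ × ℝ => G p.2 * (0 * Real.sin (p.1 * p.2)
          + 1 * (-(G p.2) + p.1 * Real.sin (p.1 * p.2) * myC G p.1 p.2
            - p.1 * Real.cos (p.1 * p.2) * myS G p.1 p.2)) := rfl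
    rw [hfe]
    exact (hG.comp continuous_snd).mul
      ((continuous_const.mul hsin).add (continuous_const.mul
        (((hG.comp continuous_snd).neg.add
          ((continuous_fst.mul hsin).mul (continuous_myC2 hG))).sub
          ((continuous_fst.mul hcos).mul (continuous_myS2 hG)))))
  exact intervalIntegral.continuous_parametric_intervalIntegral_of_continuous' huncurry 0 1

lemma exists_root (hG : Continuous G) (k : ℕ) :
    ∃ ω : ℝ, (π/2 + k*(2*π) ≤ ω ∧ ω ≤ 3*π/2 + k*(2*π)) ∧ Dfn G ω = 0 := by
  have hπ := Real.pi_pos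
  have hk2π : (0:ℝ) ≤ (k:ℝ)*(2*π) := by positivity
  set a : ℝ := π/2 + k*(2*π) with ha
  set b : ℝ := 3*π/2 + k*(2*π) with hb
  have h0a : 0 < a := by rw [ha]; linarith
  have hab : a ≤ b := by rw [ha, hb]; linarith
  have hcD : ContinuousOn (Dfn G) (Icc a b) := by
    unfold Dfn
    apply ContinuousOn.sub
    · exact (Real.continuous_cos.continuousOn.mul
        (((continuous_Qfn hG).continuousOn).sub
          (continuousOn_const.div (continuous_pow 2).continuousOn
            (fun x hx => pow_ne_zero 2 (ne_of_gt (lt_of_lt_of_le h0a hx.1))))))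
    · exact (((continuous_id.mul ((Real.continuous_cos.mul (continuous_myC1 hG)).add
        (Real.continuous_sin.mul (continuous_myS1 hG)))).mul (continuous_myS1 hG))).continuousOn
  have hcosa : Real.cos a = 0 := by
    rw [ha, Real.cos_add_nat_mul_two_pi, Real.cos_pi_div_two]
  have hsina : Real.sin a = 1 := by
    rw [ha, Real.sin_add_nat_mul_two_pi, Real.sin_pi_div_two]
  have hba : b = a + π := by rw [ha, hb]; ring
  have hcosb : Real.cos b = 0 := by rw [hba, Real.cos_add_pi, hcosa, neg_zero]
  have hsinb : Real.sin b = -1 := by rw [hba, Real.sin_add_pi, hsina]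
  have hDaval : Dfn G a = -(a * myS G a 1 ^ 2) := by
    unfold Dfn; rw [hcosa, hsina]; ring
  have hDbval : Dfn G b = b * myS G b 1 ^ 2 := by
    unfold Dfn; rw [hcosb, hsinb]; ring
  have hDa : Dfn G a ≤ 0 := by
    rw [hDaval]
    have : 0 ≤ a * myS G a 1 ^ 2 := mul_nonneg h0a.le (sq_nonneg _)
    linarith
  have hDb : 0 ≤ Dfn G b := by
    rw [hDbval]
    exact mul_nonneg (lt_of_lt_of_le h0a hab).le (sq_nonneg _)
  obtain ⟨ω, hω, hDω⟩ := intermediate_value_Icc hab hcD ⟨hDa, hDb⟩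
  exact ⟨ω, ⟨hω.1, hω.2⟩, hDω⟩

lemma exists_eigen (hG : Continuous G)
    (hg1 : ∀ t ∈ Icc (0:ℝ) 1, HasDerivWithinAt G (g' t) (Icc 0 1) t)
    (hg2 : ∀ t ∈ Icc (0:ℝ) 1, HasDerivWithinAt g' (g'' t) (Icc 0 1) t)
    (hG0 : G 0 = 0) (k : ℕ) :
    ∃ lam : ℝ,
      (1/(3*π/2 + k*(2*π))^2 ≤ lam ∧ lam ≤ 1/(π/2 + k*(2*π))^2) ∧ 0 < lam ∧
      ∃ e : ℝ → ℝ, ContinuousOn e (Icc 0 1) ∧ (∃ t ∈ Icc (0:ℝ) 1, e t ≠ 0) ∧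
        ∀ t ∈ Icc (0:ℝ) 1,
          (∫ s in (0:ℝ)..1, (min t s - G t * G s) * e s) = lam * e t := by
  obtain ⟨ω, ⟨hωa, hωb⟩, hD⟩ := exists_root hG k
  have hπ := Real.pi_pos
  have hk2π : (0:ℝ) ≤ (k:ℝ)*(2*π) := by positivity
  have h0a : (0:ℝ) < π/2 + k*(2*π) := by linarith
  have hω0 : 0 < ω := lt_of_lt_of_le h0a hωa
  have hωne : ω ≠ 0 := hω0.ne'
  obtain ⟨A, B, hAB, hrow1, hrow2⟩ := two_by_two (Real.cos ω)
    (ω * (Real.cos ω * myC G ω 1 + Real.sin ω * myS G ω 1))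
    (myS G ω 1) (Qfn G ω - 1/ω^2) (by unfold Dfn at hD; linear_combination hD)
  set e := efn G ω A B with he
  have cond2 : A * Real.cos ω
      + B * (ω * (Real.cos ω * myC G ω 1 + Real.sin ω * myS G ω 1)) = 0 := by
    linear_combination hrow1
  have cond1 : (∫ s in (0:ℝ)..1, G s * e s) = B / ω ^ 2 := by
    rw [he, integral_G_efn hG]
    have h2 := hrow2
    field_simp [hωne] at h2 ⊢
    linarith [h2]
  refine ⟨1/ω^2, ⟨?_, ?_⟩, by positivity, e, (continuous_efn hG).continuousOn, ?_, ?_⟩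
  · apply one_div_le_one_div_of_le (by positivity)
    nlinarith
  · apply one_div_le_one_div_of_le (by positivity)
    nlinarith
  · by_contra hcon
    push_neg at hcon
    have hzero : (∫ s in (0:ℝ)..1, G s * e s) = 0 := by
      have h0 : (∫ s in (0:ℝ)..1, G s * e s) = ∫ s in (0:ℝ)..1, (0:ℝ) := by
        apply intervalIntegral.integral_congr
        intro s hs
        rw [uIcc_of_le zero_le_one] at hs
        show G s * e s = 0
        rw [hcon s hs, mul_zero]
      simpa using h0
    have hB : B = 0 := by
      rw [hzero] at cond1
      field_simp at cond1
      simpa using cond1.symm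
    have hπ2ω : π/(2*ω) ∈ Icc (0:ℝ) 1 := by
      constructor
      · exact le_of_lt (div_pos hπ (by linarith))
      · rw [div_le_one (by linarith)]
        linarith
    have hA : A = 0 := by
      have hzt := hcon _ hπ2ω
      rw [he] at hzt
      unfold efn at hzt
      rw [hB, show ω * (π/(2*ω)) = π/2 by field_simp] at hzt
      simpa [Real.sin_pi_div_two] using hzt
    exact hAB ⟨hA, hB⟩
  · exact eigen_eq hG hg1 hg2 hG0 hω0 cond2 cond1

end construct
/-- The integral operator with kernel `R(s,t) = min(s,t) - g(s)g(t)` has infinitely many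
positive eigenvalues. -/
theorem stmt19 (g g' g'' : ℝ → ℝ)
    (hg1 : ∀ t ∈ Set.Icc (0:ℝ) 1, HasDerivWithinAt g (g' t) (Set.Icc 0 1) t)
    (hg2 : ∀ t ∈ Set.Icc (0:ℝ) 1, HasDerivWithinAt g' (g'' t) (Set.Icc 0 1) t)
    (hg2c : ContinuousOn g'' (Set.Icc 0 1))
    (hg0 : g 0 = 0)
    (hgnorm : ∫ u in (0:ℝ)..1, (g' u) ^ 2 = 1) :
    {lam : ℝ | 0 < lam ∧ ∃ e : ℝ → ℝ, ContinuousOn e (Set.Icc 0 1) ∧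
      (∃ t ∈ Set.Icc (0:ℝ) 1, e t ≠ 0) ∧
      ∀ t ∈ Set.Icc (0:ℝ) 1,
        (∫ s in (0:ℝ)..1, (min t s - g t * g s) * e s) = lam * e t}.Infinite := by
  classical
  have hπ := Real.pi_pos
  set proj : ℝ → ℝ := fun s => max 0 (min 1 s) with hproj
  have hprojc : Continuous proj := continuous_const.max (continuous_const.min continuous_id)
  have hprojmem : ∀ s, proj s ∈ Icc (0:ℝ) 1 :=
    fun s => ⟨le_max_left _ _, max_le zero_le_one (min_le_left _ _)⟩
  set G : ℝ → ℝ := fun s => g (proj s) with hGdef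
  have hgc : ContinuousOn g (Icc (0:ℝ) 1) := fun t ht => (hg1 t ht).continuousWithinAt
  have hGc : Continuous G := hgc.comp_continuous hprojc hprojmem
  have hEq : ∀ t ∈ Icc (0:ℝ) 1, G t = g t := by
    intro t ht
    rw [hGdef]
    show g (proj t) = g t
    rw [hproj]
    show g (max 0 (min 1 t)) = g t
    rw [min_eq_right ht.2, max_eq_right ht.1]
  have hG1 : ∀ t ∈ Icc (0:ℝ) 1, HasDerivWithinAt G (g' t) (Icc 0 1) t :=
    fun t ht => (hg1 t ht).congr (fun y hy => hEq y hy) (hEq t ht)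
  have hG0 : G 0 = 0 := by
    rw [hEq 0 ⟨le_refl 0, zero_le_one⟩, hg0]
  set S : Set ℝ := {lam : ℝ | 0 < lam ∧ ∃ e : ℝ → ℝ, ContinuousOn e (Set.Icc 0 1) ∧
      (∃ t ∈ Set.Icc (0:ℝ) 1, e t ≠ 0) ∧
      ∀ t ∈ Set.Icc (0:ℝ) 1,
        (∫ s in (0:ℝ)..1, (min t s - g t * g s) * e s) = lam * e t} with hS
  show S.Infinite
  have H : ∀ k : ℕ, ∃ lam : ℝ,
      (1/(3*π/2 + k*(2*π))^2 ≤ lam ∧ lam ≤ 1/(π/2 + k*(2*π))^2) ∧ lam ∈ S := by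
    intro k
    obtain ⟨lam, hbnd, hpos, e, hecont, hne, heq⟩ := exists_eigen hGc hG1 hg2 hG0 k
    refine ⟨lam, hbnd, ?_⟩
    rw [hS]
    refine ⟨hpos, e, hecont, hne, ?_⟩
    intro t ht
    rw [← heq t ht]
    apply intervalIntegral.integral_congr
    intro s hs
    rw [uIcc_of_le zero_le_one] at hs
    show (min t s - g t * g s) * e s = (min t s - G t * G s) * e s
    rw [hEq s hs, hEq t ht]
  set f : ℕ → ℝ := fun k => (H k).choose with hf
  have hmem : ∀ k, f k ∈ S := fun k => (H k).choose_spec.2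
  have hlow : ∀ k : ℕ, 1/(3*π/2 + k*(2*π))^2 ≤ f k := fun k => (H k).choose_spec.1.1
  have hupp : ∀ k : ℕ, f k ≤ 1/(π/2 + k*(2*π))^2 := fun k => (H k).choose_spec.1.2
  have hanti : StrictAnti f := by
    apply strictAnti_nat_of_succ_lt
    intro k
    have hk : (0:ℝ) ≤ (k:ℝ) := Nat.cast_nonneg k
    have h1 : (0:ℝ) < 3*π/2 + k*(2*π) := by positivity
    have h2 : 3*π/2 + (k:ℝ)*(2*π) < π/2 + ((k:ℕ)+1:ℕ)*(2*π) := by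
      push_cast
      nlinarith
    have hmid : 1/(π/2 + ((k:ℕ)+1:ℕ)*(2*π))^2 < 1/(3*π/2 + (k:ℝ)*(2*π))^2 := by
      apply one_div_lt_one_div_of_lt (by positivity)
      nlinarith
    calc f (k+1) ≤ 1/(π/2 + ((k:ℕ)+1:ℕ)*(2*π))^2 := hupp (k+1)
      _ < 1/(3*π/2 + (k:ℝ)*(2*π))^2 := hmid
      _ ≤ f k := hlow k
  exact Set.infinite_of_injective_forall_mem hanti.injective hmem
end
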